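/- arXiv:2009.07788 — 6 statements merged into one kernel-verified Lean document; each statement's English description precedes it below -/
import Mathlib

section
/- For 0 < α < (1+γ)/2 and 0 ≤ γ < 1, the integral ∫₀^∞ ((1+u)^α − u^α)² u^(−γ) du is finite and bounded above by 1/(1−γ) + α²/(1+γ−2α). -/
open MeasureTheory Set Real Filter

theorem gfbm_stmt1 (α γ : ℝ) (hγ0 : 0 ≤ γ) (hγ1 : γ < 1)
    (hα0 : 0 < α) (hα1 : α < (1 + γ) / 2) :
    IntegrableOn (fun u : ℝ => ((1 + u) ^ α - u ^ α) ^ 2 * u ^ (-γ)) (Set.Ioi 0) ∧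
    ∫ u in Set.Ioi (0 : ℝ), ((1 + u) ^ α - u ^ α) ^ 2 * u ^ (-γ)
      ≤ 1 / (1 - γ) + α ^ 2 / (1 + γ - 2 * α) := by
  have hα2 : α ≤ 1 := by linarith
  set f : ℝ → ℝ := fun u => ((1 + u) ^ α - u ^ α) ^ 2 * u ^ (-γ) with hf
  have hmeas : Measurable f := by fun_prop
  -- basic facts
  have hdiff_nonneg : ∀ u : ℝ, 0 < u → 0 ≤ (1 + u) ^ α - u ^ α := by
    intro u hu
    have : u ^ α ≤ (1 + u) ^ α :=
      Real.rpow_le_rpow hu.le (by linarith) hα0.le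
    linarith
  have hbern : ∀ u : ℝ, 0 < u → (1 + u) ^ α ≤ 1 + α * u := by
    intro u hu
    simpa [add_comm] using
      rpow_one_add_le_one_add_mul_self (by linarith : (-1:ℝ) ≤ u) hα0.le hα2
  -- pointwise bound on (0,1]
  have key1 : ∀ u ∈ Ioc (0:ℝ) 1, f u ≤ u ^ (-γ) := by
    intro u hu
    obtain ⟨hu0, hu1⟩ := hu
    have h1 : (1 + u) ^ α - u ^ α ≤ 1 := by
      have h2 : α * u ≤ u ^ α := by
        calc α * u ≤ 1 * u := by nlinarith
        _ = u ^ (1:ℝ) := by rw [one_mul, Real.rpow_one]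
        _ ≤ u ^ α := Real.rpow_le_rpow_of_exponent_ge hu0 hu1 hα2
      have := hbern u hu0
      linarith
    have hpow : ((1 + u) ^ α - u ^ α) ^ 2 ≤ 1 := by
      have h0 := hdiff_nonneg u hu0
      nlinarith
    have hrp : (0:ℝ) ≤ u ^ (-γ) := Real.rpow_nonneg hu0.le _
    calc f u ≤ 1 * u ^ (-γ) := mul_le_mul_of_nonneg_right hpow hrp
    _ = u ^ (-γ) := one_mul _
  -- pointwise bound on (1,∞)
  have key2 : ∀ u ∈ Ioi (1:ℝ), f u ≤ α ^ 2 * u ^ (2*α - 2 - γ) := by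
    intro u hu
    have hu1 : (1:ℝ) < u := hu
    have hu0 : (0:ℝ) < u := by linarith
    have hinv : (0:ℝ) < 1 / u := by positivity
    have h1 : (1 + u) ^ α - u ^ α ≤ α * u ^ (α - 1) := by
      have heq : (1 + u) ^ α = u ^ α * (1 + 1/u) ^ α := by
        rw [← Real.mul_rpow hu0.le (by positivity)]
        congr 1
        field_simp
        ring
      have hb : (1 + 1/u) ^ α ≤ 1 + α * (1/u) := hbern _ hinv
      have h3 : u ^ α * (1 + 1/u) ^ α ≤ u ^ α * (1 + α * (1/u)) :=
        mul_le_mul_of_nonneg_left hb (Real.rpow_nonneg hu0.le _)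
      have h4 : u ^ α * (1 + α * (1/u)) = u ^ α + α * u ^ (α - 1) := by
        have : u ^ α * (1/u) = u ^ (α - 1) := by
          rw [show u ^ (α - 1) = u ^ α * u ^ (-1:ℝ) by
            rw [← Real.rpow_add hu0]; ring_nf]
          rw [Real.rpow_neg_one]
          ring
        nlinarith [this]
      rw [heq]
      linarith [h3, h4 ▸ h3]
    have h0 := hdiff_nonneg u hu0
    have hsq : ((1 + u) ^ α - u ^ α) ^ 2 ≤ α ^ 2 * (u ^ (α - 1)) ^ 2 := by
      have hαu : 0 ≤ α * u ^ (α - 1) := by positivity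
      nlinarith
    have hrw : (u ^ (α - 1)) ^ 2 * u ^ (-γ) = u ^ (2*α - 2 - γ) := by
      rw [← Real.rpow_natCast (u ^ (α - 1)) 2, ← Real.rpow_mul hu0.le,
        ← Real.rpow_add hu0]
      norm_num
      ring_nf
    calc f u ≤ α ^ 2 * (u ^ (α - 1)) ^ 2 * u ^ (-γ) :=
          mul_le_mul_of_nonneg_right hsq (Real.rpow_nonneg hu0.le _)
    _ = α ^ 2 * u ^ (2*α - 2 - γ) := by rw [mul_assoc, hrw]
  -- integrability of majorants
  have hγ' : (-1:ℝ) < -γ := by linarith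
  have hs : 2*α - 2 - γ < -1 := by linarith
  have int1 : IntegrableOn (fun u : ℝ => u ^ (-γ)) (Ioc 0 1) := by
    have := intervalIntegral.intervalIntegrable_rpow' (a := 0) (b := 1) hγ'
    rwa [intervalIntegrable_iff_integrableOn_Ioc_of_le zero_le_one] at this
  have int2 : IntegrableOn (fun u : ℝ => α ^ 2 * u ^ (2*α - 2 - γ)) (Ioi 1) :=
    (integrableOn_Ioi_rpow_of_lt hs one_pos).const_mul _
  -- f nonneg on each piece
  have hfnn : ∀ u : ℝ, 0 < u → 0 ≤ f u := by
    intro u hu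
    have := Real.rpow_nonneg hu.le (-γ)
    positivity
  -- integrability of f on pieces
  have intf1 : IntegrableOn f (Ioc 0 1) := by
    apply Integrable.mono' int1 (hmeas.aestronglyMeasurable.restrict)
    filter_upwards [ae_restrict_mem measurableSet_Ioc] with u hu
    rw [Real.norm_of_nonneg (hfnn u hu.1)]
    exact key1 u hu
  have intf2 : IntegrableOn f (Ioi 1) := by
    apply Integrable.mono' int2 (hmeas.aestronglyMeasurable.restrict)
    filter_upwards [ae_restrict_mem measurableSet_Ioi] with u hu
    rw [Real.norm_of_nonneg (hfnn u (lt_trans one_pos hu))]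
    exact key2 u hu
  have hunion : Ioc (0:ℝ) 1 ∪ Ioi 1 = Ioi 0 := Ioc_union_Ioi_eq_Ioi zero_le_one
  have intf : IntegrableOn f (Ioi 0) := by
    rw [← hunion]
    exact intf1.union intf2
  refine ⟨intf, ?_⟩
  -- split the integral
  have hsplit : ∫ u in Ioi (0:ℝ), f u = (∫ u in Ioc (0:ℝ) 1, f u) + ∫ u in Ioi (1:ℝ), f u := by
    rw [← hunion]
    exact setIntegral_union (Ioc_disjoint_Ioi le_rfl) measurableSet_Ioi intf1 intf2
  -- bound piece 1
  have hb1 : ∫ u in Ioc (0:ℝ) 1, f u ≤ 1 / (1 - γ) := by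
    have h := setIntegral_mono_on intf1 int1 measurableSet_Ioc key1
    have hval : ∫ u in Ioc (0:ℝ) 1, u ^ (-γ) = 1 / (1 - γ) := by
      rw [← intervalIntegral.integral_of_le zero_le_one,
        integral_rpow (Or.inl hγ')]
      rw [Real.one_rpow, Real.zero_rpow (by linarith : -γ + 1 ≠ 0)]
      field_simp
      ring
    linarith [hval ▸ h]
  -- bound piece 2
  have hb2 : ∫ u in Ioi (1:ℝ), f u ≤ α ^ 2 / (1 + γ - 2 * α) := by
    have h := setIntegral_mono_on intf2 int2 measurableSet_Ioi key2
    have hval : ∫ u in Ioi (1:ℝ), α ^ 2 * u ^ (2*α - 2 - γ) = α ^ 2 / (1 + γ - 2 * α) := by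
      rw [integral_const_mul, integral_Ioi_rpow_of_lt hs one_pos, Real.one_rpow,
        show 2*α - 2 - γ + 1 = -(1 + γ - 2*α) by ring, neg_div_neg_eq, mul_one_div]
    linarith [hval ▸ h]
  calc ∫ u in Ioi (0:ℝ), f u = _ := hsplit
  _ ≤ 1 / (1 - γ) + α ^ 2 / (1 + γ - 2 * α) := add_le_add hb1 hb2
end

section
/- For −(1−γ)/2 < α < 0 and 0 ≤ γ < 1, setting α̃ = −α and γ̃ = γ − 2α (so 0 < α̃ < 1/2 and 0 < γ̃ < 1), one has ∫₀^∞ ((1+u)^α − u^α)² u^(−γ) du ≤ ∫₀^∞ ((1+u)^{α̃} − u^{α̃})² u^(−γ̃) du ≤ 1/(1−γ̃) + α̃²/(1+γ̃−2α̃) < ∞. -/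
open MeasureTheory Set Real Filter

lemma sub_le_one' {u β : ℝ} (hu : 0 ≤ u) (hβ0 : 0 ≤ β) (hβ1 : β ≤ 1) :
    (1 + u) ^ β ≤ 1 + u ^ β := by
  have h := NNReal.rpow_add_le_add_rpow (1 : NNReal) (NNReal.mk u hu) hβ0 hβ1
  have := NNReal.coe_le_coe.2 h
  simpa [NNReal.coe_rpow, Real.one_rpow] using this

lemma diff_le_bernoulli {u β : ℝ} (hu : 0 < u) (hβ0 : 0 ≤ β) (hβ1 : β ≤ 1) :
    (1 + u) ^ β - u ^ β ≤ β * u ^ (β - 1) := by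
  have key : (1 + u) ^ β ≤ u ^ β + β * u ^ (β - 1) := by
    have e : (1 + u : ℝ) = u * (1 + 1/u) := by field_simp; ring
    have h2 : (1 + 1/u) ^ β ≤ 1 + β * (1/u) :=
      rpow_one_add_le_one_add_mul_self (by have := one_div_pos.mpr hu; linarith : (-1:ℝ) ≤ 1/u) hβ0 hβ1
    calc (1 + u) ^ β = u ^ β * (1 + 1/u) ^ β := by
          rw [e, Real.mul_rpow hu.le (by positivity)]
      _ ≤ u ^ β * (1 + β * (1/u)) :=
          mul_le_mul_of_nonneg_left h2 (by positivity)
      _ = u ^ β + β * (u ^ β * u⁻¹) := by ring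
      _ = u ^ β + β * u ^ (β - 1) := by
          rw [← Real.rpow_neg_one u, ← Real.rpow_add hu]
          ring_nf
  linarith

lemma pos_case {β δ : ℝ} (hβ0 : 0 < β) (hβδ : 2*β ≤ δ) (hδ0 : 0 < δ) (hδ1 : δ < 1) :
    IntegrableOn (fun u : ℝ => ((1+u)^β - u^β)^2 * u^(-δ)) (Ioi 0) ∧
    (∫ u in Ioi (0:ℝ), ((1+u)^β - u^β)^2 * u^(-δ)) ≤ 1/(1-δ) + β^2/(1+δ-2*β) := by
  have hβ1 : β ≤ 1 := by linarith
  set f : ℝ → ℝ := fun u => ((1+u)^β - u^β)^2 * u^(-δ) with hf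
  have hmeas : Measurable f := by fun_prop
  have hd0 : ∀ u : ℝ, 0 < u → 0 ≤ (1+u)^β - u^β := by
    intro u hu
    have := Real.rpow_le_rpow hu.le (by linarith : u ≤ 1 + u) hβ0.le
    linarith
  -- pointwise bounds
  have bound1 : ∀ u ∈ Ioc (0:ℝ) 1, f u ≤ u^(-δ) := by
    intro u hu
    have hu0 : 0 < u := hu.1
    have h0 := hd0 u hu0
    have h1 : (1+u)^β - u^β ≤ 1 := by
      have := sub_le_one' hu0.le hβ0.le hβ1; linarith
    have hsq : ((1+u)^β - u^β)^2 ≤ 1 := by nlinarith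
    calc f u ≤ 1 * u^(-δ) :=
          mul_le_mul_of_nonneg_right hsq (Real.rpow_nonneg hu0.le _)
      _ = u^(-δ) := one_mul _
  have bound2 : ∀ u ∈ Ioi (1:ℝ), f u ≤ β^2 * u^(2*β-2-δ) := by
    intro u hu
    have hu0 : (0:ℝ) < u := lt_trans one_pos hu
    have h0 := hd0 u hu0
    have h1 := diff_le_bernoulli hu0 hβ0.le hβ1
    have hsq : ((1+u)^β - u^β)^2 ≤ (β * u^(β-1))^2 := by
      apply pow_le_pow_left₀ h0 h1
    have hq : (u^(β-1))^2 = u^(2*β-2) := by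
      rw [← Real.rpow_natCast (u^(β-1)) 2, ← Real.rpow_mul hu0.le]
      congr 1; push_cast; ring
    have e1 : (β * u^(β-1))^2 = β^2 * u^(2*β-2) := by rw [mul_pow, hq]
    have e2 : u^(2*β-2) * u^(-δ) = u^(2*β-2-δ) := by
      rw [← Real.rpow_add hu0]; ring_nf
    calc f u ≤ (β * u^(β-1))^2 * u^(-δ) :=
          mul_le_mul_of_nonneg_right hsq (Real.rpow_nonneg hu0.le _)
      _ = β^2 * (u^(2*β-2) * u^(-δ)) := by rw [e1]; ring
      _ = β^2 * u^(2*β-2-δ) := by rw [e2]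
  have hfnn : ∀ u : ℝ, 0 < u → 0 ≤ f u := fun u hu => by positivity
  have ha : 2*β-2-δ < -1 := by linarith
  -- integrability on Ioc 0 1
  have I1 : IntegrableOn (fun u : ℝ => u ^ (-δ)) (Ioc 0 1) :=
    (intervalIntegral.intervalIntegrable_rpow' (a := 0) (b := 1) (by linarith)).1
  have hf1 : IntegrableOn f (Ioc 0 1) := by
    refine I1.mono' hmeas.aestronglyMeasurable.restrict ?_
    filter_upwards [ae_restrict_mem measurableSet_Ioc] with u hu
    rw [Real.norm_eq_abs, abs_of_nonneg (hfnn u hu.1)]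
    exact bound1 u hu
  -- integrability on Ioi 1
  have I2 : IntegrableOn (fun u : ℝ => β^2 * u ^ (2*β-2-δ)) (Ioi 1) :=
    (integrableOn_Ioi_rpow_of_lt ha one_pos).const_mul _
  have hf2 : IntegrableOn f (Ioi 1) := by
    refine I2.mono' hmeas.aestronglyMeasurable.restrict ?_
    filter_upwards [ae_restrict_mem measurableSet_Ioi] with u hu
    rw [Real.norm_eq_abs, abs_of_nonneg (hfnn u (lt_trans one_pos hu))]
    exact bound2 u hu
  have hsplit : Ioc (0:ℝ) 1 ∪ Ioi 1 = Ioi 0 := Ioc_union_Ioi_eq_Ioi zero_le_one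
  have hint : IntegrableOn f (Ioi 0) := by
    rw [← hsplit]; exact hf1.union hf2
  refine ⟨hint, ?_⟩
  rw [← hsplit, setIntegral_union (Ioc_disjoint_Ioi le_rfl) measurableSet_Ioi hf1 hf2]
  have B1 : (∫ u in Ioc (0:ℝ) 1, f u) ≤ 1/(1-δ) := by
    have := setIntegral_mono_on hf1 I1 measurableSet_Ioc bound1
    have hval : (∫ u in Ioc (0:ℝ) 1, u ^ (-δ)) = 1/(1-δ) := by
      rw [← intervalIntegral.integral_of_le zero_le_one,
        integral_rpow (Or.inl (by linarith))]
      rw [Real.one_rpow, Real.zero_rpow (by linarith)]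
      ring_nf
    linarith
  have B2 : (∫ u in Ioi (1:ℝ), f u) ≤ β^2/(1+δ-2*β) := by
    have := setIntegral_mono_on hf2 I2 measurableSet_Ioi bound2
    have hval : (∫ u in Ioi (1:ℝ), β^2 * u ^ (2*β-2-δ)) = β^2/(1+δ-2*β) := by
      rw [MeasureTheory.integral_const_mul, integral_Ioi_rpow_of_lt ha one_pos, Real.one_rpow,
        show (2*β-2-δ+1 : ℝ) = -(1+δ-2*β) by ring, neg_div_neg_eq, mul_one_div]
    linarith
  linarith


lemma neg_le_pos {u β γ : ℝ} (hu : 0 < u) (hβ : 0 ≤ β) :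
    ((1+u)^(-β) - u^(-β))^2 * u^(-γ) ≤ ((1+u)^β - u^β)^2 * u^(-(γ+2*β)) := by
  have h1u : (0:ℝ) < 1 + u := by linarith
  have hP : (1:ℝ) ≤ (1+u)^β := Real.one_le_rpow (by linarith) hβ
  have hP0 : (0:ℝ) < (1+u)^β := Real.rpow_pos_of_pos h1u β
  have hQ : (0:ℝ) < u^β := Real.rpow_pos_of_pos hu β
  have e : (1+u)^(-β) - u^(-β) = ((u^β - (1+u)^β) / ((1+u)^β * u^β)) := by
    rw [Real.rpow_neg h1u.le, Real.rpow_neg hu.le]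
    field_simp
  have hq2 : (u^β)^2 = u^(2*β) := by
    rw [← Real.rpow_natCast (u^β) 2, ← Real.rpow_mul hu.le]
    norm_num [mul_comm]
  have e3 : u^(-(γ+2*β)) = u^(-γ) / (u^β)^2 := by
    rw [hq2, ← Real.rpow_sub hu]
    congr 1; ring
  have e2 : (u^β - (1+u)^β)^2 = ((1+u)^β - u^β)^2 := by ring
  rw [e, div_pow, e2, mul_pow, e3, div_mul_eq_mul_div, ← mul_div_assoc]
  apply div_le_div_of_nonneg_left (by positivity) (by positivity)
  exact le_mul_of_one_le_left (by positivity) (by nlinarith)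

theorem gfbm_stmt2 (α γ α' γ' : ℝ) (hγ0 : 0 ≤ γ) (hγ1 : γ < 1)
    (hα0 : -(1 - γ) / 2 < α) (hα1 : α < 0)
    (hα' : α' = -α) (hγ' : γ' = γ - 2 * α) :
    IntegrableOn (fun u : ℝ => ((1 + u) ^ α - u ^ α) ^ 2 * u ^ (-γ)) (Set.Ioi 0) ∧
    IntegrableOn (fun u : ℝ => ((1 + u) ^ α' - u ^ α') ^ 2 * u ^ (-γ')) (Set.Ioi 0) ∧
    (∫ u in Set.Ioi (0 : ℝ), ((1 + u) ^ α - u ^ α) ^ 2 * u ^ (-γ))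
      ≤ (∫ u in Set.Ioi (0 : ℝ), ((1 + u) ^ α' - u ^ α') ^ 2 * u ^ (-γ')) ∧
    (∫ u in Set.Ioi (0 : ℝ), ((1 + u) ^ α' - u ^ α') ^ 2 * u ^ (-γ'))
      ≤ 1 / (1 - γ') + α' ^ 2 / (1 + γ' - 2 * α') := by
  subst hα' hγ'
  have hβ0 : (0:ℝ) < -α := by linarith
  have hβδ : 2 * (-α) ≤ γ - 2*α := by linarith
  have hδ0 : (0:ℝ) < γ - 2*α := by linarith
  have hδ1 : γ - 2*α < 1 := by linarith
  obtain ⟨hint2, hbound⟩ := pos_case hβ0 hβδ hδ0 hδ1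
  have comp : ∀ u ∈ Ioi (0:ℝ),
      ((1+u)^α - u^α)^2 * u^(-γ) ≤ ((1+u)^(-α) - u^(-α))^2 * u^(-(γ-2*α)) := by
    intro u hu
    have := neg_le_pos (γ := γ) (mem_Ioi.mp hu) hβ0.le
    simpa [neg_neg, show γ + 2*(-α) = γ - 2*α by ring, sub_eq_add_neg] using this
  have hmeasg : Measurable fun u : ℝ => ((1+u)^α - u^α)^2 * u^(-γ) := by fun_prop
  have hint1 : IntegrableOn (fun u : ℝ => ((1+u)^α - u^α)^2 * u^(-γ)) (Ioi 0) := by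
    refine hint2.mono' hmeasg.aestronglyMeasurable.restrict ?_
    filter_upwards [ae_restrict_mem measurableSet_Ioi] with u hu
    have hu0 : 0 < u := mem_Ioi.mp hu
    rw [Real.norm_eq_abs, abs_of_nonneg (by positivity)]
    exact comp u hu
  exact ⟨hint1, hint2, setIntegral_mono_on hint1 hint2 measurableSet_Ioi comp, hbound⟩
end

section
/- For 0 < α < (1+γ)/2 and 0 < γ < 1, for every x > 0 the integral ∫₀¹ (1−w)^(−γ) ((1+xw)^α − (xw)^α)² x^(1−γ) dw is bounded above by 4·Beta(1−γ, γ), uniformly in x. -/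
open MeasureTheory Set Real Filter

lemma gfbm_key_bound {α γ : ℝ} (hγ0 : 0 < γ) (hγ1 : γ < 1)
    (hα0 : 0 < α) (hα1 : α < (1 + γ) / 2) {y : ℝ} (hy : 0 < y) :
    ((1 + y) ^ α - y ^ α) ^ 2 * y ^ (1 - γ) ≤ 4 := by
  have hα1' : α ≤ 1 := by linarith
  have hnn : 0 ≤ (1 + y) ^ α - y ^ α := by
    have := Real.rpow_le_rpow hy.le (by linarith : y ≤ 1 + y) hα0.le
    linarith
  rcases le_total y 1 with h1 | h1
  · have hb : (1 + y) ^ α - y ^ α ≤ 2 := by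
      have h2 : (1 + y) ^ α ≤ (2 : ℝ) ^ α :=
        Real.rpow_le_rpow (by linarith) (by linarith) hα0.le
      have h3 : (2 : ℝ) ^ α ≤ (2 : ℝ) ^ (1 : ℝ) :=
        Real.rpow_le_rpow_of_exponent_le (by norm_num) hα1'
      have h4 : (0 : ℝ) ≤ y ^ α := Real.rpow_nonneg hy.le α
      rw [Real.rpow_one] at h3
      linarith
    have hy1 : y ^ (1 - γ) ≤ 1 := Real.rpow_le_one hy.le h1 (by linarith)
    calc ((1 + y) ^ α - y ^ α) ^ 2 * y ^ (1 - γ)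
        ≤ 2 ^ 2 * 1 := by
          apply mul_le_mul (pow_le_pow_left₀ hnn hb 2) hy1
            (Real.rpow_nonneg hy.le _) (by norm_num)
      _ = 4 := by norm_num
  · -- case 1 ≤ y
    have hbern : (1 + y) ^ α ≤ y ^ α + α * y ^ (α - 1) := by
      have hy0 : y ≠ 0 := hy.ne'
      have h1y : (1 + y) ^ α = y ^ α * (1 + 1 / y) ^ α := by
        rw [← Real.mul_rpow hy.le (by positivity)]
        congr 1
        field_simp
        ring
      have hB : (1 + 1 / y) ^ α ≤ 1 + α * (1 / y) :=
        rpow_one_add_le_one_add_mul_self (by have := one_div_pos.mpr hy; linarith) hα0.le hα1'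
      have hye : y ^ α * (1 / y) = y ^ (α - 1) := by
        rw [Real.rpow_sub hy, Real.rpow_one]
        field_simp
      calc (1 + y) ^ α = y ^ α * (1 + 1 / y) ^ α := h1y
        _ ≤ y ^ α * (1 + α * (1 / y)) := by
            apply mul_le_mul_of_nonneg_left hB (Real.rpow_nonneg hy.le _)
        _ = y ^ α + α * (y ^ α * (1 / y)) := by ring
        _ = y ^ α + α * y ^ (α - 1) := by rw [hye]
    have hstep : (1 + y) ^ α - y ^ α ≤ y ^ ((γ - 1) / 2) := by
      have h5 : α * y ^ (α - 1) ≤ 1 * y ^ (α - 1) :=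
        mul_le_mul_of_nonneg_right hα1' (Real.rpow_nonneg hy.le _)
      have h6 : y ^ (α - 1) ≤ y ^ ((γ - 1) / 2) :=
        Real.rpow_le_rpow_of_exponent_le h1 (by linarith)
      linarith
    have hsq : ((1 + y) ^ α - y ^ α) ^ 2 ≤ y ^ (γ - 1) := by
      have := mul_self_le_mul_self hnn hstep
      have h7 : y ^ ((γ - 1) / 2) * y ^ ((γ - 1) / 2) = y ^ (γ - 1) := by
        rw [← Real.rpow_add hy]; ring_nf
      calc ((1 + y) ^ α - y ^ α) ^ 2
          = ((1 + y) ^ α - y ^ α) * ((1 + y) ^ α - y ^ α) := sq _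
        _ ≤ y ^ ((γ - 1) / 2) * y ^ ((γ - 1) / 2) := this
        _ = y ^ (γ - 1) := h7
    have h8 : y ^ (γ - 1) * y ^ (1 - γ) = 1 := by
      rw [← Real.rpow_add hy]; norm_num
    calc ((1 + y) ^ α - y ^ α) ^ 2 * y ^ (1 - γ)
        ≤ y ^ (γ - 1) * y ^ (1 - γ) :=
          mul_le_mul_of_nonneg_right hsq (Real.rpow_nonneg hy.le _)
      _ = 1 := h8
      _ ≤ 4 := by norm_num

lemma gfbm_beta_integrable {γ : ℝ} (hγ0 : 0 < γ) (hγ1 : γ < 1) :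
    IntegrableOn (fun w : ℝ => w ^ (γ - 1) * (1 - w) ^ (-γ)) (Set.Ioo 0 1) := by
  have hc := Complex.betaIntegral_convergent (u := (γ : ℂ)) (v := ((1 - γ : ℝ) : ℂ))
    (by simpa using hγ0) (by simp; linarith)
  rw [intervalIntegrable_iff_integrableOn_Ioc_of_le zero_le_one] at hc
  have hre : IntegrableOn
      (fun x : ℝ => ((x : ℂ) ^ ((γ : ℂ) - 1) * (1 - (x : ℂ)) ^ (((1 - γ : ℝ) : ℂ) - 1)).re)
      (Set.Ioc 0 1) := hc.re
  have hre' := hre.mono_set Set.Ioo_subset_Ioc_self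
  apply (hre'.congr_fun · measurableSet_Ioo)
  intro w hw
  have hw0 : (0 : ℝ) ≤ w := hw.1.le
  have hw1 : (0 : ℝ) ≤ 1 - w := by linarith [hw.2]
  have e1 : ((w : ℂ)) ^ ((γ : ℂ) - 1) = ((w ^ (γ - 1) : ℝ) : ℂ) := by
    rw [Complex.ofReal_cpow hw0]; norm_cast
  have e2 : ((1 : ℂ) - (w : ℂ)) ^ (((1 - γ : ℝ) : ℂ) - 1) = (((1 - w) ^ (-γ) : ℝ) : ℂ) := by
    rw [show ((1 : ℂ) - (w : ℂ)) = (((1 - w : ℝ)) : ℂ) by push_cast; ring,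
      Complex.ofReal_cpow hw1]
    norm_cast
    ring_nf
  simp only [e1, e2, ← Complex.ofReal_mul, Complex.ofReal_re]

theorem gfbm_stmt4 (α γ : ℝ) (hγ0 : 0 < γ) (hγ1 : γ < 1)
    (hα0 : 0 < α) (hα1 : α < (1 + γ) / 2) :
    ∀ x : ℝ, 0 < x →
      (∫ w in Set.Ioo (0 : ℝ) 1,
          (1 - w) ^ (-γ) * ((1 + x * w) ^ α - (x * w) ^ α) ^ 2 * x ^ (1 - γ))
        ≤ 4 * ∫ τ in Set.Ioo (0 : ℝ) 1, τ ^ (-γ) * (1 - τ) ^ (γ - 1) := by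
  intro x hx
  set f : ℝ → ℝ := fun w => (1 - w) ^ (-γ) * ((1 + x * w) ^ α - (x * w) ^ α) ^ 2 * x ^ (1 - γ)
    with hf
  set g : ℝ → ℝ := fun w => 4 * (w ^ (γ - 1) * (1 - w) ^ (-γ)) with hg
  have hgint : IntegrableOn g (Set.Ioo 0 1) :=
    (gfbm_beta_integrable hγ0 hγ1).const_mul 4
  have hbound : ∀ w ∈ Set.Ioo (0 : ℝ) 1, f w ≤ g w := by
    intro w hw
    have hw0 : 0 < w := hw.1
    have hw1 : 0 < 1 - w := by linarith [hw.2]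
    have hy : 0 < x * w := mul_pos hx hw0
    have hkey := gfbm_key_bound hγ0 hγ1 hα0 hα1 hy
    have hxw : x ^ (1 - γ) = w ^ (γ - 1) * (x * w) ^ (1 - γ) := by
      rw [Real.mul_rpow hx.le hw0.le, mul_left_comm, ← Real.rpow_add hw0]
      norm_num
    have hpos : 0 ≤ (1 - w) ^ (-γ) * w ^ (γ - 1) := by positivity
    calc f w = ((1 - w) ^ (-γ) * w ^ (γ - 1)) *
          (((1 + x * w) ^ α - (x * w) ^ α) ^ 2 * (x * w) ^ (1 - γ)) := by
            rw [hf]; simp only []; rw [hxw]; ring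
      _ ≤ ((1 - w) ^ (-γ) * w ^ (γ - 1)) * 4 := mul_le_mul_of_nonneg_left hkey hpos
      _ = g w := by rw [hg]; ring
  have hnonneg : ∀ w ∈ Set.Ioo (0 : ℝ) 1, 0 ≤ f w := by
    intro w hw
    have hw1 : 0 ≤ 1 - w := by linarith [hw.2]
    rw [hf]
    positivity
  have hmono : (∫ w in Set.Ioo (0 : ℝ) 1, f w) ≤ ∫ w in Set.Ioo (0 : ℝ) 1, g w := by
    apply integral_mono_of_nonneg
    · exact (ae_restrict_iff' measurableSet_Ioo).2 (Filter.Eventually.of_forall hnonneg)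
    · exact hgint
    · exact (ae_restrict_iff' measurableSet_Ioo).2 (Filter.Eventually.of_forall hbound)
  have hsub : (∫ w in Set.Ioo (0 : ℝ) 1, w ^ (γ - 1) * (1 - w) ^ (-γ))
      = ∫ τ in Set.Ioo (0 : ℝ) 1, τ ^ (-γ) * (1 - τ) ^ (γ - 1) := by
    rw [← MeasureTheory.integral_Ioc_eq_integral_Ioo,
      ← MeasureTheory.integral_Ioc_eq_integral_Ioo,
      ← intervalIntegral.integral_of_le (zero_le_one),
      ← intervalIntegral.integral_of_le (zero_le_one)]
    have h := intervalIntegral.integral_comp_sub_left (a := 0) (b := 1)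
      (fun τ : ℝ => τ ^ (-γ) * (1 - τ) ^ (γ - 1)) 1
    simp only [sub_sub_cancel, sub_zero, sub_self] at h
    rw [← h]
    congr 1
    ext w
    ring
  calc (∫ w in Set.Ioo (0 : ℝ) 1, f w) ≤ ∫ w in Set.Ioo (0 : ℝ) 1, g w := hmono
    _ = 4 * ∫ w in Set.Ioo (0 : ℝ) 1, w ^ (γ - 1) * (1 - w) ^ (-γ) := by
        rw [hg]; exact MeasureTheory.integral_const_mul 4 _
    _ = 4 * ∫ τ in Set.Ioo (0 : ℝ) 1, τ ^ (-γ) * (1 - τ) ^ (γ - 1) := by rw [hsub]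
end

section
/- Let Φ(s,t) = ∫ₛᵗ (t−u)^{2α} u^(−γ) du + ∫₀ˢ ((t−u)^α − (s−u)^α)² u^(−γ) du + ∫₀^∞ ((t+u)^α − (s+u)^α)² u^(−γ) du for 0 < s < t. Then for every T > 0 there is a constant C_T > 0 such that Φ(s,t) ≤ C_T (t−s)^{2H} for all 0 < s < t ≤ T, where H = α − γ/2 + 1/2. -/
open MeasureTheory Set Real Filter


lemma gfbm_rpow_add_le {a b p : ℝ} (ha : 0 ≤ a) (hb : 0 ≤ b) (hp0 : 0 ≤ p) (hp1 : p ≤ 1) :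
    (a + b) ^ p ≤ a ^ p + b ^ p := by
  have h := NNReal.rpow_add_le_add_rpow a.toNNReal b.toNNReal hp0 hp1
  rw [← NNReal.coe_le_coe] at h
  push_cast [NNReal.coe_rpow, Real.coe_toNNReal _ ha, Real.coe_toNNReal _ hb] at h
  convert h using 2 <;> simp [Real.coe_toNNReal _ ha, Real.coe_toNNReal _ hb]

/-- difference of rpow bounded by rpow of difference, for p in [0,1] -/
lemma gfbm_rpow_sub_le {x y p : ℝ} (hy : 0 ≤ y) (hxy : y ≤ x) (hp0 : 0 ≤ p) (hp1 : p ≤ 1) :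
    x ^ p - y ^ p ≤ (x - y) ^ p := by
  have h := gfbm_rpow_add_le (a := x - y) (b := y) (by linarith) hy hp0 hp1
  rw [sub_add_cancel] at h
  linarith

lemma gfbm_mvt {a h α : ℝ} (ha : 0 < a) (hh : 0 ≤ h) (hα : α ≤ 1) :
    |(a + h) ^ α - a ^ α| ≤ |α| * a ^ (α - 1) * h := by
  have key : ∀ x ∈ Icc a (a + h), HasDerivWithinAt (fun y : ℝ => y ^ α)
      (α * x ^ (α - 1)) (Icc a (a + h)) x := fun x hx =>
    (Real.hasDerivAt_rpow_const (Or.inl (ne_of_gt (lt_of_lt_of_le ha hx.1)))).hasDerivWithinAt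
  have bound : ∀ x ∈ Icc a (a + h), ‖α * x ^ (α - 1)‖ ≤ |α| * a ^ (α - 1) := by
    intro x hx
    have hx0 : 0 < x := lt_of_lt_of_le ha hx.1
    rw [norm_mul, Real.norm_eq_abs, Real.norm_eq_abs,
      abs_of_nonneg (Real.rpow_nonneg hx0.le _)]
    exact mul_le_mul_of_nonneg_left
      (Real.rpow_le_rpow_of_nonpos ha hx.1 (by linarith)) (abs_nonneg α)
  have := (convex_Icc a (a + h)).norm_image_sub_le_of_norm_hasDerivWithin_le key bound
    (left_mem_Icc.2 (by linarith)) (right_mem_Icc.2 (by linarith))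
  simpa [Real.norm_eq_abs, abs_of_nonneg hh] using this

/-- square of increment, MVT version -/
lemma gfbm_sq_mvt {a b h α : ℝ} (hb : 0 < b) (hba : b ≤ a) (hh : 0 ≤ h) (hα : α ≤ 1) :
    ((a + h) ^ α - a ^ α) ^ 2 ≤ α ^ 2 * h ^ 2 * b ^ (2 * α - 2) := by
  have ha : 0 < a := lt_of_lt_of_le hb hba
  have h1 : |(a + h) ^ α - a ^ α| ≤ |α| * b ^ (α - 1) * h := by
    refine (gfbm_mvt ha hh hα).trans ?_
    have : a ^ (α - 1) ≤ b ^ (α - 1) := Real.rpow_le_rpow_of_nonpos hb hba (by linarith)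
    have := mul_le_mul_of_nonneg_left this (abs_nonneg α)
    nlinarith [abs_nonneg α, Real.rpow_nonneg hb.le (α - 1)]
  have h2 : ((a + h) ^ α - a ^ α) ^ 2 ≤ (|α| * b ^ (α - 1) * h) ^ 2 := by
    rw [← sq_abs]
    exact pow_le_pow_left₀ (abs_nonneg _) h1 2
  refine h2.trans_eq ?_
  have : (b ^ (α - 1)) ^ 2 = b ^ (2 * α - 2) := by
    rw [← Real.rpow_natCast (b ^ (α - 1)) 2, ← Real.rpow_mul hb.le]
    norm_num; ring_nf
  rw [mul_pow, mul_pow, sq_abs, this]; ring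

/-- square of increment, small-increment version -/
lemma gfbm_sq_small {a b h α : ℝ} (hb : 0 < b) (hba : b ≤ a) (hh : 0 < h) (hα : α ≤ 1) :
    ((a + h) ^ α - a ^ α) ^ 2 ≤ h ^ (2 * α) + b ^ (2 * α) := by
  have ha : 0 < a := lt_of_lt_of_le hb hba
  rcases le_or_gt 0 α with hα0 | hα0
  · have hd0 : 0 ≤ (a + h) ^ α - a ^ α := by
      have := Real.rpow_le_rpow ha.le (by linarith : a ≤ a + h) hα0
      linarith
    have hd : (a + h) ^ α - a ^ α ≤ h ^ α := by
      have := gfbm_rpow_sub_le (x := a + h) (y := a) ha.le (by linarith) hα0 hα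
      simpa using this
    have h1 : ((a + h) ^ α - a ^ α) ^ 2 ≤ (h ^ α) ^ 2 := by
      exact pow_le_pow_left₀ hd0 hd 2
    have h2 : (h ^ α) ^ 2 = h ^ (2 * α) := by
      rw [← Real.rpow_natCast (h ^ α) 2, ← Real.rpow_mul hh.le]
      norm_num; ring_nf
    have := Real.rpow_nonneg hb.le (2 * α)
    linarith
  · have hd0 : (a + h) ^ α ≤ a ^ α :=
      Real.rpow_le_rpow_of_nonpos ha (by linarith) hα0.le
    have hup : a ^ α ≤ b ^ α := Real.rpow_le_rpow_of_nonpos hb hba hα0.le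
    have hpos : 0 ≤ (a + h) ^ α := Real.rpow_nonneg (by linarith) α
    have h1 : ((a + h) ^ α - a ^ α) ^ 2 ≤ (b ^ α) ^ 2 := by
      rw [← sq_abs]
      refine pow_le_pow_left₀ (abs_nonneg _) ?_ 2
      rw [abs_of_nonpos (by linarith)]
      have := Real.rpow_nonneg hb.le α
      linarith
    have h2 : (b ^ α) ^ 2 = b ^ (2 * α) := by
      rw [← Real.rpow_natCast (b ^ α) 2, ← Real.rpow_mul hb.le]
      norm_num; ring_nf
    have := Real.rpow_nonneg hh.le (2 * α)
    linarith

lemma gfbm_integrableOn_rpow {q a b : ℝ} (hq : -1 < q) (hab : a ≤ b) :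
    IntegrableOn (fun u : ℝ => u ^ q) (Ioo a b) :=
  (intervalIntegrable_iff_integrableOn_Ioo_of_le hab).1
    (intervalIntegral.intervalIntegrable_rpow' hq)

lemma gfbm_integral_rpow_Ioo {q a b : ℝ} (hq : -1 < q) (hab : a ≤ b) :
    ∫ u in Ioo a b, u ^ q = (b ^ (q + 1) - a ^ (q + 1)) / (q + 1) := by
  rw [← MeasureTheory.integral_Ioc_eq_integral_Ioo, ← intervalIntegral.integral_of_le hab]
  exact integral_rpow (Or.inl hq)

lemma gfbm_integrableOn_rpow_sub {q a b c : ℝ} (hq : -1 < q) (hab : a ≤ b) :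
    IntegrableOn (fun u : ℝ => (c - u) ^ q) (Ioo a b) := by
  have h := (intervalIntegral.intervalIntegrable_rpow' (r := q) hq
    (a := c - a) (b := c - b)).comp_sub_left c
  simp only [sub_sub_cancel] at h
  exact (intervalIntegrable_iff_integrableOn_Ioo_of_le hab).1 h

lemma gfbm_integral_rpow_sub {q a b c : ℝ} (hq : -1 < q) (hab : a ≤ b) :
    ∫ u in Ioo a b, (c - u) ^ q = ((c - a) ^ (q + 1) - (c - b) ^ (q + 1)) / (q + 1) := by
  rw [← MeasureTheory.integral_Ioc_eq_integral_Ioo, ← intervalIntegral.integral_of_le hab,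
    intervalIntegral.integral_comp_sub_left (fun v => v ^ q) c,
    integral_rpow (Or.inl hq)]

lemma gfbm_zero_not_mem_uIcc {x y : ℝ} (hx : 0 < x) (hy : 0 < y) : (0:ℝ) ∉ Set.uIcc x y := by
  intro h
  rcases Set.mem_uIcc.1 h with ⟨h1, _⟩ | ⟨h1, _⟩ <;> linarith

lemma gfbm_integrableOn_rpow_Ioc {q a b : ℝ} (hq : -1 < q) (hab : a ≤ b) :
    IntegrableOn (fun u : ℝ => u ^ q) (Ioc a b) :=
  (intervalIntegrable_iff_integrableOn_Ioc_of_le hab).1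
    (intervalIntegral.intervalIntegrable_rpow' hq)

lemma gfbm_integral_rpow_Ioc {q a b : ℝ} (hq : -1 < q) (hab : a ≤ b) :
    ∫ u in Ioc a b, u ^ q = (b ^ (q + 1) - a ^ (q + 1)) / (q + 1) := by
  rw [← intervalIntegral.integral_of_le hab]
  exact integral_rpow (Or.inl hq)

lemma gfbm_integrableOn_rpow_sub' {q a b c : ℝ} (hab : a ≤ b) (h0 : 0 < c - b) :
    IntegrableOn (fun u : ℝ => (c - u) ^ q) (Ioc a b) := by
  have h := (intervalIntegral.intervalIntegrable_rpow (μ := volume) (r := q)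
    (a := c - a) (b := c - b)
    (Or.inr (gfbm_zero_not_mem_uIcc (by linarith) h0))).comp_sub_left c
  simp only [sub_sub_cancel] at h
  exact (intervalIntegrable_iff_integrableOn_Ioc_of_le hab).1 h

lemma gfbm_integral_rpow_sub' {q a b c : ℝ} (hq : q ≠ -1) (hab : a ≤ b) (h0 : 0 < c - b) :
    ∫ u in Ioc a b, (c - u) ^ q = ((c - a) ^ (q + 1) - (c - b) ^ (q + 1)) / (q + 1) := by
  rw [← intervalIntegral.integral_of_le hab,
    intervalIntegral.integral_comp_sub_left (fun v => v ^ q) c,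
    integral_rpow
      (Or.inr ⟨hq, gfbm_zero_not_mem_uIcc h0 (by linarith)⟩)]

lemma gfbm_term1 {α γ : ℝ} (hγ0 : 0 ≤ γ) (hγ1 : γ < 1) (h2α : -1 < 2 * α)
    (hexp : 0 < 2 * α + 1 - γ) :
    ∃ C : ℝ, 0 < C ∧ ∀ s t : ℝ, 0 < s → s < t →
      (∫ u in Ioo s t, (t - u) ^ (2 * α) * u ^ (-γ)) ≤ C * (t - s) ^ (2 * α + 1 - γ) := by
  have h2α1 : 0 < 2 * α + 1 := by linarith
  have h1γ : 0 < 1 - γ := by linarith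
  have g1 : (0:ℝ) < 2 ^ (1 - γ) := Real.rpow_pos_of_pos two_pos _
  have g2 : (0:ℝ) < 2 ^ (2 * α + 1 - γ) := Real.rpow_pos_of_pos two_pos _
  have g3 : (0:ℝ) < 2 ^ (2 * α + 1) := Real.rpow_pos_of_pos two_pos _
  refine ⟨2 ^ (1 - γ) / (1 - γ) + 2 ^ (2 * α + 1 - γ) / (1 - γ) + 2 ^ (2 * α + 1) / (2 * α + 1),
    by positivity, ?_⟩
  intro s t hs hst
  set h : ℝ := t - s with hh
  have hhpos : 0 < h := by rw [hh]; linarith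
  set D : ℝ := h / 2 with hD
  have hDpos : 0 < D := by rw [hD]; linarith
  set g : ℝ → ℝ := fun u => (D ^ (2 * α) + h ^ (2 * α)) * u ^ (-γ)
      + D ^ (-γ) * (t - u) ^ (2 * α) with hg
  have hint1 : IntegrableOn (fun u : ℝ => (D ^ (2 * α) + h ^ (2 * α)) * u ^ (-γ)) (Ioo s t) :=
    (gfbm_integrableOn_rpow (by linarith) hst.le).const_mul _
  have hint2 : IntegrableOn (fun u : ℝ => D ^ (-γ) * (t - u) ^ (2 * α)) (Ioo s t) :=
    (gfbm_integrableOn_rpow_sub h2α hst.le).const_mul _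
  have hmono : (∫ u in Ioo s t, (t - u) ^ (2 * α) * u ^ (-γ)) ≤ ∫ u in Ioo s t, g u := by
    refine integral_mono_of_nonneg ?_ (hint1.add hint2) ?_
    · filter_upwards [ae_restrict_mem measurableSet_Ioo] with u hu
      exact mul_nonneg (Real.rpow_nonneg (by linarith [hu.2]) _)
        (Real.rpow_nonneg (by linarith [hu.1]) _)
    · filter_upwards [ae_restrict_mem measurableSet_Ioo] with u hu
      have hu1 : s < u := hu.1
      have hu2 : u < t := hu.2
      have htu0 : 0 < t - u := by linarith
      rcases le_or_gt u ((s + t) / 2) with hum | hum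
      · have h1 : (t - u) ^ (2 * α) ≤ D ^ (2 * α) + h ^ (2 * α) := by
          rcases le_or_gt 0 (2 * α) with hsgn | hsgn
          · have k1 := Real.rpow_le_rpow htu0.le (by rw [hh]; linarith : t - u ≤ h) hsgn
            have k2 := Real.rpow_nonneg hDpos.le (2 * α)
            linarith
          · have k1 := Real.rpow_le_rpow_of_nonpos hDpos
              (by rw [hD, hh]; linarith : D ≤ t - u) hsgn.le
            have k2 := Real.rpow_nonneg hhpos.le (2 * α)
            linarith
        have h2 : (t - u) ^ (2 * α) * u ^ (-γ) ≤ (D ^ (2 * α) + h ^ (2 * α)) * u ^ (-γ) :=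
          mul_le_mul_of_nonneg_right h1 (Real.rpow_nonneg (by linarith) _)
        have h3 : 0 ≤ D ^ (-γ) * (t - u) ^ (2 * α) :=
          mul_nonneg (Real.rpow_nonneg hDpos.le _) (Real.rpow_nonneg htu0.le _)
        simp only [hg]; linarith
      · have h1 : u ^ (-γ) ≤ D ^ (-γ) :=
          Real.rpow_le_rpow_of_nonpos hDpos (by rw [hD, hh]; linarith) (by linarith)
        have h2 : (t - u) ^ (2 * α) * u ^ (-γ) ≤ D ^ (-γ) * (t - u) ^ (2 * α) := by
          rw [mul_comm]
          exact mul_le_mul_of_nonneg_right h1 (Real.rpow_nonneg htu0.le _)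
        have h3 : 0 ≤ (D ^ (2 * α) + h ^ (2 * α)) * u ^ (-γ) :=
          mul_nonneg (by positivity) (Real.rpow_nonneg (by linarith) _)
        simp only [hg]; linarith
  have hval : ∫ u in Ioo s t, g u
      = (D ^ (2 * α) + h ^ (2 * α)) * ((t ^ (1 - γ) - s ^ (1 - γ)) / (1 - γ))
        + D ^ (-γ) * (h ^ (2 * α + 1) / (2 * α + 1)) := by
    rw [hg, integral_add hint1 hint2, integral_const_mul, integral_const_mul,
      gfbm_integral_rpow_Ioo (by linarith) hst.le, gfbm_integral_rpow_sub h2α hst.le]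
    have e1 : (t - t) = (0:ℝ) := by ring
    have e2 : ((0:ℝ)) ^ (2 * α + 1) = 0 := Real.zero_rpow (by linarith)
    rw [e1, e2, ← hh]
    have e0 : -γ + 1 = 1 - γ := by ring
    rw [e0]
    ring
  set E : ℝ := D ^ (2 * α + 1 - γ) with hE
  have hh2D : h = 2 * D := by rw [hD]; ring
  have e1 : h ^ (1 - γ) = 2 ^ (1 - γ) * D ^ (1 - γ) := by
    rw [hh2D, Real.mul_rpow (by norm_num) hDpos.le]
  have e2 : h ^ (2 * α) = 2 ^ (2 * α) * D ^ (2 * α) := by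
    rw [hh2D, Real.mul_rpow (by norm_num) hDpos.le]
  have e3 : h ^ (2 * α + 1) = 2 ^ (2 * α + 1) * D ^ (2 * α + 1) := by
    rw [hh2D, Real.mul_rpow (by norm_num) hDpos.le]
  have m1 : D ^ (2 * α) * D ^ (1 - γ) = E := by
    rw [hE, ← Real.rpow_add hDpos]; ring_nf
  have m2 : D ^ (-γ) * D ^ (2 * α + 1) = E := by
    rw [hE, ← Real.rpow_add hDpos]; ring_nf
  have m3 : (2:ℝ) ^ (2 * α) * 2 ^ (1 - γ) = 2 ^ (2 * α + 1 - γ) := by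
    rw [← Real.rpow_add two_pos]; ring_nf
  have hsub : t ^ (1 - γ) - s ^ (1 - γ) ≤ 2 ^ (1 - γ) * D ^ (1 - γ) := by
    rw [← e1]
    have := gfbm_rpow_sub_le (x := t) (y := s) (p := 1 - γ) hs.le hst.le (by linarith) (by linarith)
    rw [← hh] at this; exact this
  have hA : 0 ≤ D ^ (2 * α) + h ^ (2 * α) := by positivity
  have key1 : (D ^ (2 * α) + h ^ (2 * α)) * (t ^ (1 - γ) - s ^ (1 - γ))
      ≤ (2 ^ (1 - γ) + 2 ^ (2 * α + 1 - γ)) * E := by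
    have step := mul_le_mul_of_nonneg_left hsub hA
    have eq1 : (D ^ (2 * α) + h ^ (2 * α)) * (2 ^ (1 - γ) * D ^ (1 - γ))
        = (2 ^ (1 - γ) + 2 ^ (2 * α + 1 - γ)) * E := by
      rw [e2, ← m3, ← m1]; ring
    linarith
  have key2 : D ^ (-γ) * h ^ (2 * α + 1) = 2 ^ (2 * α + 1) * E := by
    rw [e3, ← m2]; ring
  have hDh : E ≤ h ^ (2 * α + 1 - γ) :=
    Real.rpow_le_rpow hDpos.le (by rw [hD]; linarith) hexp.le
  have hEpos : 0 < E := Real.rpow_pos_of_pos hDpos _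
  calc (∫ u in Ioo s t, (t - u) ^ (2 * α) * u ^ (-γ))
      ≤ ∫ u in Ioo s t, g u := hmono
    _ = (D ^ (2 * α) + h ^ (2 * α)) * ((t ^ (1 - γ) - s ^ (1 - γ)) / (1 - γ))
        + D ^ (-γ) * (h ^ (2 * α + 1) / (2 * α + 1)) := hval
    _ ≤ ((2 ^ (1 - γ) + 2 ^ (2 * α + 1 - γ)) * E) / (1 - γ)
        + (2 ^ (2 * α + 1) * E) / (2 * α + 1) := by
        have q1 : (D ^ (2 * α) + h ^ (2 * α)) * ((t ^ (1 - γ) - s ^ (1 - γ)) / (1 - γ))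
            ≤ ((2 ^ (1 - γ) + 2 ^ (2 * α + 1 - γ)) * E) / (1 - γ) := by
          rw [← mul_div_assoc]
          exact div_le_div_of_nonneg_right key1 h1γ.le  -- check name
        have q2 : D ^ (-γ) * (h ^ (2 * α + 1) / (2 * α + 1))
            = (2 ^ (2 * α + 1) * E) / (2 * α + 1) := by
          rw [← mul_div_assoc, key2]
        linarith
    _ = (2 ^ (1 - γ) / (1 - γ) + 2 ^ (2 * α + 1 - γ) / (1 - γ) + 2 ^ (2 * α + 1) / (2 * α + 1))
        * E := by field_simp
    _ ≤ (2 ^ (1 - γ) / (1 - γ) + 2 ^ (2 * α + 1 - γ) / (1 - γ) + 2 ^ (2 * α + 1) / (2 * α + 1))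
        * h ^ (2 * α + 1 - γ) := by
        apply mul_le_mul_of_nonneg_left hDh
        positivity

lemma gfbm_term3 {α γ : ℝ} (hγ0 : 0 ≤ γ) (hγ1 : γ < 1) (hα1 : α ≤ 1)
    (hexp : 0 < 2 * α + 1 - γ) (hup : 2 * α - 1 - γ < 0) :
    ∃ C : ℝ, 0 < C ∧ ∀ s t : ℝ, 0 < s → s < t →
      (∫ u in Ioi (0:ℝ), ((t + u) ^ α - (s + u) ^ α) ^ 2 * u ^ (-γ))
        ≤ C * (t - s) ^ (2 * α + 1 - γ) := by
  have h1γ : 0 < 1 - γ := by linarith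
  have hden : 0 < γ + 1 - 2 * α := by linarith
  refine ⟨1 / (1 - γ) + 1 / (2 * α + 1 - γ) + α ^ 2 / (γ + 1 - 2 * α), by positivity, ?_⟩
  intro s t hs hst
  set h : ℝ := t - s with hh
  have hhpos : 0 < h := by rw [hh]; linarith
  set g1 : ℝ → ℝ := fun u => h ^ (2 * α) * u ^ (-γ) + u ^ (2 * α - γ) with hg1
  set g2 : ℝ → ℝ := fun u => α ^ 2 * h ^ 2 * u ^ (2 * α - 2 - γ) with hg2
  have hig1 : IntegrableOn g1 (Ioo 0 h) :=
    ((gfbm_integrableOn_rpow (by linarith) hhpos.le).const_mul _).add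
      (gfbm_integrableOn_rpow (by linarith) hhpos.le)
  have hig2 : IntegrableOn g2 (Ici h) := by
    rw [integrableOn_Ici_iff_integrableOn_Ioi]
    exact (integrableOn_Ioi_rpow_of_lt (by linarith) hhpos).const_mul _
  have hind1 : Integrable ((Ioo (0:ℝ) h).indicator g1) (volume.restrict (Ioi 0)) :=
    ((integrable_indicator_iff measurableSet_Ioo).2 hig1).restrict
  have hind2 : Integrable ((Ici h).indicator g2) (volume.restrict (Ioi 0)) :=
    ((integrable_indicator_iff measurableSet_Ici).2 hig2).restrict
  have hmono : (∫ u in Ioi (0:ℝ), ((t + u) ^ α - (s + u) ^ α) ^ 2 * u ^ (-γ))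
      ≤ ∫ u in Ioi (0:ℝ), ((Ioo (0:ℝ) h).indicator g1 u + (Ici h).indicator g2 u) := by
    refine integral_mono_of_nonneg ?_ (hind1.add hind2) ?_
    · filter_upwards [ae_restrict_mem measurableSet_Ioi] with u hu
      exact mul_nonneg (sq_nonneg _) (Real.rpow_nonneg (le_of_lt hu) _)
    · filter_upwards [ae_restrict_mem measurableSet_Ioi] with u hu
      have hu0 : 0 < u := hu
      have hg1nn : ∀ x ∈ Ioo (0:ℝ) h, 0 ≤ g1 x := fun x hx => by
        simp only [hg1]
        exact add_nonneg (mul_nonneg (Real.rpow_nonneg hhpos.le _)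
          (Real.rpow_nonneg hx.1.le _)) (Real.rpow_nonneg hx.1.le _)
      have hg2nn : ∀ x ∈ Ici h, 0 ≤ g2 x := fun x hx => by
        simp only [hg2]
        exact mul_nonneg (mul_nonneg (sq_nonneg _) (sq_nonneg _))
          (Real.rpow_nonneg (le_trans hhpos.le hx) _)
      have e : t + u = (s + u) + h := by rw [hh]; ring
      rcases lt_or_ge u h with hcase | hcase
      · have key : ((t + u) ^ α - (s + u) ^ α) ^ 2 * u ^ (-γ) ≤ g1 u := by
          rw [e]
          have hb := gfbm_sq_small (a := s + u) (b := u) hu0 (by linarith) hhpos hα1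
          have hmul := mul_le_mul_of_nonneg_right hb (Real.rpow_nonneg hu0.le (-γ))
          have expand : (h ^ (2 * α) + u ^ (2 * α)) * u ^ (-γ)
              = h ^ (2 * α) * u ^ (-γ) + u ^ (2 * α - γ) := by
            rw [add_mul, ← Real.rpow_add hu0]; ring_nf
          rw [expand] at hmul
          exact hmul
        have i1 : (Ioo (0:ℝ) h).indicator g1 u = g1 u := Set.indicator_of_mem (show u ∈ Ioo (0:ℝ) h from ⟨hu0, hcase⟩) g1
        have i2 : (0:ℝ) ≤ (Ici h).indicator g2 u := indicator_nonneg hg2nn u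
        rw [i1]; linarith
      · have key : ((t + u) ^ α - (s + u) ^ α) ^ 2 * u ^ (-γ) ≤ g2 u := by
          rw [e]
          have hb := gfbm_sq_mvt (a := s + u) (b := u) hu0 (by linarith) hhpos.le hα1
          have hmul := mul_le_mul_of_nonneg_right hb (Real.rpow_nonneg hu0.le (-γ))
          have expand : α ^ 2 * h ^ 2 * u ^ (2 * α - 2) * u ^ (-γ)
              = α ^ 2 * h ^ 2 * u ^ (2 * α - 2 - γ) := by
            rw [mul_assoc, ← Real.rpow_add hu0]; ring_nf
          rw [expand] at hmul
          exact hmul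
        have i2 : (Ici h).indicator g2 u = g2 u := Set.indicator_of_mem (show u ∈ Ici h from hcase) g2
        have i1 : (0:ℝ) ≤ (Ioo (0:ℝ) h).indicator g1 u := indicator_nonneg hg1nn u
        rw [i2]; linarith
  have hval : (∫ u in Ioi (0:ℝ), ((Ioo (0:ℝ) h).indicator g1 u + (Ici h).indicator g2 u))
      = (∫ u in Ioo (0:ℝ) h, g1 u) + ∫ u in Ici h, g2 u := by
    rw [integral_add hind1 hind2, setIntegral_indicator measurableSet_Ioo,
      setIntegral_indicator measurableSet_Ici,
      inter_eq_self_of_subset_right Ioo_subset_Ioi_self,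
      inter_eq_self_of_subset_right (Ici_subset_Ioi.2 hhpos)]
  have hv1 : (∫ u in Ioo (0:ℝ) h, g1 u)
      = h ^ (2 * α + 1 - γ) / (1 - γ) + h ^ (2 * α + 1 - γ) / (2 * α + 1 - γ) := by
    rw [hg1]
    rw [integral_add ((gfbm_integrableOn_rpow (by linarith) hhpos.le).const_mul _)
      (gfbm_integrableOn_rpow (by linarith) hhpos.le), integral_const_mul,
      gfbm_integral_rpow_Ioo (q := -γ) (by linarith) hhpos.le,
      gfbm_integral_rpow_Ioo (q := 2 * α - γ) (by linarith) hhpos.le]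
    rw [Real.zero_rpow (by linarith : -γ + 1 ≠ 0),
      Real.zero_rpow (by linarith : 2 * α - γ + 1 ≠ 0)]
    have r1 : h ^ (2 * α) * h ^ (-γ + 1) = h ^ (2 * α + 1 - γ) := by
      rw [← Real.rpow_add hhpos]; ring_nf
    have r2 : 2 * α - γ + 1 = 2 * α + 1 - γ := by ring
    have r3 : -γ + 1 = 1 - γ := by ring
    rw [sub_zero, sub_zero, ← mul_div_assoc, r1, r2, r3]
  have hv2 : (∫ u in Ici h, g2 u)
      = α ^ 2 * h ^ (2 * α + 1 - γ) / (γ + 1 - 2 * α) := by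
    rw [hg2]
    rw [integral_Ici_eq_integral_Ioi, integral_const_mul,
      integral_Ioi_rpow_of_lt (by linarith) hhpos]
    have r1 : h ^ (2:ℕ) * h ^ (2 * α - 2 - γ + 1) = h ^ (2 * α + 1 - γ) := by
      rw [← Real.rpow_natCast h 2, ← Real.rpow_add hhpos]
      congr 1
      push_cast
      ring
    have r2 : α ^ 2 * h ^ 2 * (-h ^ (2 * α - 2 - γ + 1) / (2 * α - 2 - γ + 1))
        = α ^ 2 * (h ^ (2:ℕ) * h ^ (2 * α - 2 - γ + 1)) / (-(2 * α - 2 - γ + 1)) := by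
      rw [div_neg, ← neg_div]
      ring
    rw [r2, r1, show -(2 * α - 2 - γ + 1) = γ + 1 - 2 * α by ring, mul_div_assoc]
  rw [hval, hv1, hv2] at hmono
  refine hmono.trans (le_of_eq ?_)
  have hne1 : (1:ℝ) - γ ≠ 0 := ne_of_gt h1γ
  have hne2 : 2 * α + 1 - γ ≠ 0 := ne_of_gt hexp
  have hne3 : γ + 1 - 2 * α ≠ 0 := ne_of_gt hden
  set X : ℝ := h ^ (2 * α + 1 - γ) with hX
  field_simp

lemma gfbm_keyint {α γ : ℝ} (hγ0 : 0 ≤ γ) (hγ1 : γ < 1) (h2αγ : 2 * α < 1 + γ) :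
    ∃ K : ℝ, 0 < K ∧ ∀ h s : ℝ, 0 < h → h ≤ s →
      (∫ v in Ioo h s, v ^ (2 * α - 2)) ≤ K * (h ^ (2 * α - 1 - γ) * s ^ γ) := by
  rcases lt_or_ge α (1/2) with hhalf | hhalf
  · have hd : 0 < 1 - 2 * α := by linarith
    refine ⟨1 / (1 - 2 * α), by positivity, ?_⟩
    intro h s hh hhs
    have h1 : (∫ v in Ioo h s, v ^ (2 * α - 2)) ≤ ∫ v in Ioi h, v ^ (2 * α - 2) := by
      refine setIntegral_mono_set (integrableOn_Ioi_rpow_of_lt (by linarith) hh) ?_ ?_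
      · filter_upwards [ae_restrict_mem measurableSet_Ioi] with v hv
        exact Real.rpow_nonneg (le_of_lt (lt_trans hh hv)) _
      · exact HasSubset.Subset.eventuallyLE (fun x hx => hx.1)
    rw [integral_Ioi_rpow_of_lt (by linarith) hh] at h1
    have h2 : -h ^ (2 * α - 2 + 1) / (2 * α - 2 + 1) = h ^ (2 * α - 1) / (1 - 2 * α) := by
      have ne1 : 2 * α - 1 ≠ 0 := ne_of_lt (by linarith)
      have ne2 : 1 - 2 * α ≠ 0 := ne_of_gt hd
      rw [show 2 * α - 2 + 1 = 2 * α - 1 by ring]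
      field_simp
      ring
    rw [h2] at h1
    refine h1.trans ?_
    have e : h ^ (2*α-1) = h ^ (2*α-1-γ) * h ^ γ := by rw [← Real.rpow_add hh]; ring_nf
    have h3 : h ^ γ ≤ s ^ γ := Real.rpow_le_rpow hh.le hhs hγ0
    have h4 : h ^ (2*α-1-γ) * h ^ γ ≤ h ^ (2*α-1-γ) * s ^ γ :=
      mul_le_mul_of_nonneg_left h3 (Real.rpow_nonneg hh.le _)
    rw [e, div_eq_mul_inv, one_div]
    calc h ^ (2*α-1-γ) * h ^ γ * (1-2*α)⁻¹ ≤ h ^ (2*α-1-γ) * s ^ γ * (1-2*α)⁻¹ := by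
          apply mul_le_mul_of_nonneg_right h4 (by positivity)
      _ = (1-2*α)⁻¹ * (h ^ (2*α-1-γ) * s ^ γ) := by ring
  · have hγpos : 0 < γ := by linarith
    refine ⟨1 / γ, by positivity, ?_⟩
    intro h s hh hhs
    have mono : (∫ v in Ioo h s, v ^ (2 * α - 2))
        ≤ ∫ v in Ioo h s, h ^ (2 * α - 1 - γ) * v ^ (γ - 1) := by
      refine integral_mono_of_nonneg ?_
        ((gfbm_integrableOn_rpow (q := γ - 1) (by linarith) hhs).const_mul _) ?_
      · filter_upwards [ae_restrict_mem measurableSet_Ioo] with v hv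
        exact Real.rpow_nonneg (le_of_lt (lt_trans hh hv.1)) _
      · filter_upwards [ae_restrict_mem measurableSet_Ioo] with v hv
        have hv0 : 0 < v := lt_trans hh hv.1
        have e : v ^ (2 * α - 2) = v ^ (2 * α - 1 - γ) * v ^ (γ - 1) := by
          rw [← Real.rpow_add hv0]; ring_nf
        rw [e]
        exact mul_le_mul_of_nonneg_right
          (Real.rpow_le_rpow_of_nonpos hh hv.1.le (by linarith))
          (Real.rpow_nonneg hv0.le _)
    rw [integral_const_mul, gfbm_integral_rpow_Ioo (q := γ - 1) (by linarith) hhs] at mono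
    rw [show γ - 1 + 1 = γ by ring] at mono
    refine mono.trans ?_
    have h1 : 0 ≤ h ^ (2 * α - 1 - γ) := Real.rpow_nonneg hh.le _
    have h2 : 0 ≤ h ^ γ := Real.rpow_nonneg hh.le _
    rw [div_eq_mul_inv, one_div]
    have : (s ^ γ - h ^ γ) * γ⁻¹ ≤ s ^ γ * γ⁻¹ := by
      apply mul_le_mul_of_nonneg_right (by linarith) (by positivity)
    calc h ^ (2 * α - 1 - γ) * ((s ^ γ - h ^ γ) * γ⁻¹)
        ≤ h ^ (2 * α - 1 - γ) * (s ^ γ * γ⁻¹) := mul_le_mul_of_nonneg_left this h1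
      _ = γ⁻¹ * (h ^ (2 * α - 1 - γ) * s ^ γ) := by ring

lemma gfbm_half_rpow {x e : ℝ} (hx : 0 ≤ x) : (x / 2) ^ e = 2 ^ (-e) * x ^ e := by
  rw [div_eq_mul_inv, Real.mul_rpow hx (by norm_num), Real.inv_rpow (by norm_num),
    ← Real.rpow_neg (by norm_num)]
  ring

lemma gfbm_term2 {α γ : ℝ} (hγ0 : 0 ≤ γ) (hγ1 : γ < 1) (h2αγ : 2 * α < 1 + γ)
    (hexp : 0 < 2 * α + 1 - γ) :
    ∃ C : ℝ, 0 < C ∧ ∀ s t : ℝ, 0 < s → s < t →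
      (∫ u in Ioo 0 s, ((t - u) ^ α - (s - u) ^ α) ^ 2 * u ^ (-γ))
        ≤ C * (t - s) ^ (2 * α + 1 - γ) := by
  have hα1 : α ≤ 1 := by linarith
  have h2α : -1 < 2 * α := by linarith
  have h2α1 : 0 < 2 * α + 1 := by linarith
  have h1γ : 0 < 1 - γ := by linarith
  have he0 : 2 * α - 1 - γ < 0 := by linarith
  obtain ⟨K, hK, hKint⟩ := gfbm_keyint hγ0 hγ1 h2αγ
  have gA : (0:ℝ) < 2 ^ (-(2*α)) := Real.rpow_pos_of_pos two_pos _
  have gB : (0:ℝ) < 2 ^ γ := Real.rpow_pos_of_pos two_pos _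
  have gC : (0:ℝ) < 2 ^ (2 - 2*α) := Real.rpow_pos_of_pos two_pos _
  refine ⟨(2 + 2 ^ (-(2*α))) / (1 - γ) + 2 ^ γ / (2*α+1)
      + (α ^ 2 * 2 ^ (2 - 2*α) / (1 - γ) + α ^ 2 * 2 ^ γ * K), by
        have c1 : (0:ℝ) < (2 + 2 ^ (-(2*α))) / (1 - γ) := div_pos (by linarith) h1γ
        have c2 : (0:ℝ) < 2 ^ γ / (2*α+1) := div_pos gB h2α1
        have c3 : (0:ℝ) ≤ α ^ 2 * 2 ^ (2 - 2*α) / (1 - γ) :=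
          div_nonneg (mul_nonneg (sq_nonneg _) gC.le) h1γ.le
        have c4 : (0:ℝ) ≤ α ^ 2 * 2 ^ γ * K :=
          mul_nonneg (mul_nonneg (sq_nonneg _) gB.le) hK.le
        linarith, ?_⟩
  intro s t hs hst
  set h : ℝ := t - s with hh
  have hhpos : 0 < h := by rw [hh]; linarith
  set δ : ℝ := min s h with hδ
  have hδpos : 0 < δ := lt_min hs hhpos
  have hδs : δ ≤ s := min_le_left _ _
  have hδh : δ ≤ h := min_le_right _ _
  set p : ℝ := s - δ with hp
  have hp0 : 0 ≤ p := by rw [hp]; linarith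
  have hps : p < s := by rw [hp]; linarith
  have hsp : s - p = δ := by rw [hp]; ring
  have hs2 : 0 < s / 2 := by linarith
  have hδ2 : 0 < δ / 2 := by linarith
  set ψ : ℝ → ℝ := fun u => α ^ 2 * h ^ 2 *
      ((s/2) ^ (2*α-2) * u ^ (-γ) + (s/2) ^ (-γ) * (s - u) ^ (2*α-2)) with hψ
  set g2 : ℝ → ℝ := fun u => (h ^ (2*α) + (δ/2) ^ (2*α) + δ ^ (2*α)) * u ^ (-γ)
      + (δ/2) ^ (-γ) * (s - u) ^ (2*α) with hg2
  have hiψa : IntegrableOn (fun u : ℝ => (s/2) ^ (2*α-2) * u ^ (-γ)) (Ioc 0 p) :=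
    (gfbm_integrableOn_rpow_Ioc (by linarith) hp0).const_mul _
  have hiψb : IntegrableOn (fun u : ℝ => (s/2) ^ (-γ) * (s - u) ^ (2*α-2)) (Ioc 0 p) :=
    (gfbm_integrableOn_rpow_sub' hp0 (by rw [hsp]; exact hδpos)).const_mul _
  have hiψ : IntegrableOn ψ (Ioc 0 p) := (hiψa.add hiψb).const_mul _
  have hig2a : IntegrableOn (fun u : ℝ => (h ^ (2*α) + (δ/2) ^ (2*α) + δ ^ (2*α)) * u ^ (-γ))
      (Ioo p s) := (gfbm_integrableOn_rpow (by linarith) hps.le).const_mul _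
  have hig2b : IntegrableOn (fun u : ℝ => (δ/2) ^ (-γ) * (s - u) ^ (2*α)) (Ioo p s) :=
    (gfbm_integrableOn_rpow_sub h2α hps.le).const_mul _
  have hig2 : IntegrableOn g2 (Ioo p s) := hig2a.add hig2b
  have hind1 : Integrable ((Ioc (0:ℝ) p).indicator ψ) (volume.restrict (Ioo 0 s)) :=
    ((integrable_indicator_iff measurableSet_Ioc).2 hiψ).restrict
  have hind2 : Integrable ((Ioo p s).indicator g2) (volume.restrict (Ioo 0 s)) :=
    ((integrable_indicator_iff measurableSet_Ioo).2 hig2).restrict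
  have hψnn : ∀ x ∈ Ioc (0:ℝ) p, 0 ≤ ψ x := fun x hx => by
    have h1 : (0:ℝ) ≤ s - x := by have := hx.2; linarith
    simp only [hψ]
    exact mul_nonneg (by positivity)
      (add_nonneg (mul_nonneg (Real.rpow_nonneg hs2.le _) (Real.rpow_nonneg hx.1.le _))
        (mul_nonneg (Real.rpow_nonneg hs2.le _) (Real.rpow_nonneg h1 _)))
  have hg2nn : ∀ x ∈ Ioo p s, 0 ≤ g2 x := fun x hx => by
    have hx0 : (0:ℝ) ≤ x := le_trans hp0 hx.1.le
    have h1 : (0:ℝ) ≤ s - x := by have := hx.2; linarith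
    simp only [hg2]
    refine add_nonneg (mul_nonneg ?_ (Real.rpow_nonneg hx0 _))
      (mul_nonneg (Real.rpow_nonneg (by linarith) _) (Real.rpow_nonneg h1 _))
    have k1 := Real.rpow_nonneg hhpos.le (2*α)
    have k2 := Real.rpow_nonneg (show (0:ℝ) ≤ δ/2 by linarith) (2*α)
    have k3 := Real.rpow_nonneg hδpos.le (2*α)
    linarith
  have hmono : (∫ u in Ioo 0 s, ((t - u) ^ α - (s - u) ^ α) ^ 2 * u ^ (-γ))
      ≤ ∫ u in Ioo 0 s, ((Ioc (0:ℝ) p).indicator ψ u + (Ioo p s).indicator g2 u) := by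
    refine integral_mono_of_nonneg ?_ (hind1.add hind2) ?_
    · filter_upwards [ae_restrict_mem measurableSet_Ioo] with u hu
      exact mul_nonneg (sq_nonneg _) (Real.rpow_nonneg hu.1.le _)
    · filter_upwards [ae_restrict_mem measurableSet_Ioo] with u hu
      obtain ⟨hu0, hus⟩ := hu
      have hsu : 0 < s - u := by linarith
      have e : t - u = (s - u) + h := by rw [hh]; ring
      have hunn : (0:ℝ) ≤ u ^ (-γ) := Real.rpow_nonneg hu0.le _
      rcases le_or_gt u p with hup | hup
      · -- the MVT regime
        have key : ((t - u) ^ α - (s - u) ^ α) ^ 2 * u ^ (-γ) ≤ ψ u := by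
          rw [e]
          have hb := gfbm_sq_mvt (a := s - u) (b := s - u) hsu le_rfl hhpos.le hα1
          have hmul : (((s - u) + h) ^ α - (s - u) ^ α) ^ 2 * u ^ (-γ)
              ≤ α ^ 2 * h ^ 2 * ((s - u) ^ (2*α-2) * u ^ (-γ)) := by
            calc (((s - u) + h) ^ α - (s - u) ^ α) ^ 2 * u ^ (-γ)
                ≤ α ^ 2 * h ^ 2 * (s - u) ^ (2*α-2) * u ^ (-γ) :=
                  mul_le_mul_of_nonneg_right hb hunn
              _ = α ^ 2 * h ^ 2 * ((s - u) ^ (2*α-2) * u ^ (-γ)) := by ring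
          have hAnn : (0:ℝ) ≤ (s/2) ^ (2*α-2) * u ^ (-γ) :=
            mul_nonneg (Real.rpow_nonneg hs2.le _) hunn
          have hBnn : (0:ℝ) ≤ (s/2) ^ (-γ) * (s - u) ^ (2*α-2) :=
            mul_nonneg (Real.rpow_nonneg hs2.le _) (Real.rpow_nonneg hsu.le _)
          have hW : (s - u) ^ (2*α-2) * u ^ (-γ) ≤ (s/2) ^ (2*α-2) * u ^ (-γ)
              + (s/2) ^ (-γ) * (s - u) ^ (2*α-2) := by
            rcases le_or_gt u (s/2) with hcu | hcu
            · have hb2 : (s - u) ^ (2*α-2) ≤ (s/2) ^ (2*α-2) :=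
                Real.rpow_le_rpow_of_nonpos hs2 (by linarith) (by linarith)
              have := mul_le_mul_of_nonneg_right hb2 hunn
              linarith
            · have hb2 : u ^ (-γ) ≤ (s/2) ^ (-γ) :=
                Real.rpow_le_rpow_of_nonpos hs2 hcu.le (by linarith)
              have := mul_le_mul_of_nonneg_left hb2 (Real.rpow_nonneg hsu.le (2*α-2))
              have e2 : (s - u) ^ (2*α-2) * (s/2) ^ (-γ) = (s/2) ^ (-γ) * (s - u) ^ (2*α-2) :=
                mul_comm _ _
              linarith
          have hfin := mul_le_mul_of_nonneg_left hW (by positivity : (0:ℝ) ≤ α ^ 2 * h ^ 2)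
          simp only [hψ]
          exact le_trans hmul hfin
        have i1 : (Ioc (0:ℝ) p).indicator ψ u = ψ u :=
          Set.indicator_of_mem (show u ∈ Ioc (0:ℝ) p from ⟨hu0, hup⟩) ψ
        have i2 : (0:ℝ) ≤ (Ioo p s).indicator g2 u := Set.indicator_nonneg hg2nn u
        rw [i1]; linarith
      · -- the small-increment regime
        have hsuδ : s - u < δ := by rw [hp] at hup; linarith
        have key : ((t - u) ^ α - (s - u) ^ α) ^ 2 * u ^ (-γ) ≤ g2 u := by
          rw [e]
          have hb := gfbm_sq_small (a := s - u) (b := s - u) hsu le_rfl hhpos hα1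
          have hmul : (((s - u) + h) ^ α - (s - u) ^ α) ^ 2 * u ^ (-γ)
              ≤ h ^ (2*α) * u ^ (-γ) + (s - u) ^ (2*α) * u ^ (-γ) := by
            calc (((s - u) + h) ^ α - (s - u) ^ α) ^ 2 * u ^ (-γ)
                ≤ (h ^ (2*α) + (s - u) ^ (2*α)) * u ^ (-γ) :=
                  mul_le_mul_of_nonneg_right hb hunn
              _ = h ^ (2*α) * u ^ (-γ) + (s - u) ^ (2*α) * u ^ (-γ) := by ring
          have hW : (s - u) ^ (2*α) * u ^ (-γ) ≤ ((δ/2) ^ (2*α) + δ ^ (2*α)) * u ^ (-γ)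
              + (δ/2) ^ (-γ) * (s - u) ^ (2*α) := by
            have hiC : (0:ℝ) ≤ (δ/2) ^ (-γ) * (s - u) ^ (2*α) :=
              mul_nonneg (Real.rpow_nonneg hδ2.le _) (Real.rpow_nonneg hsu.le _)
            rcases le_or_gt u (s - δ/2) with hcu | hcu
            · have h1 : (s - u) ^ (2*α) ≤ (δ/2) ^ (2*α) + δ ^ (2*α) := by
                rcases le_or_gt 0 (2*α) with hsgn | hsgn
                · have k1 := Real.rpow_le_rpow hsu.le hsuδ.le hsgn
                  have k2 := Real.rpow_nonneg hδ2.le (2*α)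
                  linarith
                · have k1 := Real.rpow_le_rpow_of_nonpos hδ2
                    (show δ/2 ≤ s - u by linarith) hsgn.le
                  have k2 := Real.rpow_nonneg hδpos.le (2*α)
                  linarith
              have := mul_le_mul_of_nonneg_right h1 hunn
              linarith
            · have h1 : u ^ (-γ) ≤ (δ/2) ^ (-γ) :=
                Real.rpow_le_rpow_of_nonpos hδ2 (show δ/2 ≤ u by linarith) (by linarith)
              have := mul_le_mul_of_nonneg_left h1 (Real.rpow_nonneg hsu.le (2*α))
              have hcnn : (0:ℝ) ≤ ((δ/2) ^ (2*α) + δ ^ (2*α)) * u ^ (-γ) := by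
                have k2 := Real.rpow_nonneg hδ2.le (2*α)
                have k3 := Real.rpow_nonneg hδpos.le (2*α)
                exact mul_nonneg (by linarith) hunn
              have e2 : (s - u) ^ (2*α) * (δ/2) ^ (-γ) = (δ/2) ^ (-γ) * (s - u) ^ (2*α) :=
                mul_comm _ _
              linarith
          simp only [hg2]
          linarith
        have i2 : (Ioo p s).indicator g2 u = g2 u :=
          Set.indicator_of_mem (show u ∈ Ioo p s from ⟨hup, hus⟩) g2
        have i1 : (0:ℝ) ≤ (Ioc (0:ℝ) p).indicator ψ u := Set.indicator_nonneg hψnn u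
        rw [i2]; linarith
  have hval : (∫ u in Ioo 0 s, ((Ioc (0:ℝ) p).indicator ψ u + (Ioo p s).indicator g2 u))
      = (∫ u in Ioc (0:ℝ) p, ψ u) + ∫ u in Ioo p s, g2 u := by
    have sub1 : Ioc (0:ℝ) p ⊆ Ioo (0:ℝ) s := fun x hx => ⟨hx.1, lt_of_le_of_lt hx.2 hps⟩
    have sub2 : Ioo p s ⊆ Ioo (0:ℝ) s := fun x hx => ⟨lt_of_le_of_lt hp0 hx.1, hx.2⟩
    rw [integral_add hind1 hind2, setIntegral_indicator measurableSet_Ioc,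
      setIntegral_indicator measurableSet_Ioo,
      inter_eq_self_of_subset_right sub1, inter_eq_self_of_subset_right sub2]
  -- value of the g2 integral
  have hBval : (∫ u in Ioo p s, g2 u)
      = (h ^ (2*α) + (δ/2) ^ (2*α) + δ ^ (2*α)) * ((s ^ (1-γ) - p ^ (1-γ)) / (1-γ))
        + (δ/2) ^ (-γ) * (δ ^ (2*α+1) / (2*α+1)) := by
    simp only [hg2]
    rw [integral_add hig2a hig2b, integral_const_mul, integral_const_mul,
      gfbm_integral_rpow_Ioo (q := -γ) (by linarith) hps.le,
      gfbm_integral_rpow_sub (q := 2*α) (c := s) h2α hps.le]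
    rw [show s - s = (0:ℝ) by ring, Real.zero_rpow (by linarith : 2*α+1 ≠ 0), hsp,
      show -γ + 1 = 1 - γ by ring, sub_zero]
  have hcoefnn : (0:ℝ) ≤ h ^ (2*α) + (δ/2) ^ (2*α) + δ ^ (2*α) := by
    have k1 := Real.rpow_nonneg hhpos.le (2*α)
    have k2 := Real.rpow_nonneg hδ2.le (2*α)
    have k3 := Real.rpow_nonneg hδpos.le (2*α)
    linarith
  have hr1 : (δ/2) ^ (2*α) = 2 ^ (-(2*α)) * δ ^ (2*α) := gfbm_half_rpow hδpos.le
  have hr2 : (δ/2) ^ (-γ) = 2 ^ γ * δ ^ (-γ) := by rw [gfbm_half_rpow hδpos.le, neg_neg]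
  have m1 : δ ^ (2*α) * δ ^ (1-γ) = δ ^ (2*α+1-γ) := by
    rw [← Real.rpow_add hδpos]; ring_nf
  have m2 : δ ^ (-γ) * δ ^ (2*α+1) = δ ^ (2*α+1-γ) := by
    rw [← Real.rpow_add hδpos]; ring_nf
  have m4 : δ ^ (2*α+1-γ) ≤ h ^ (2*α+1-γ) := Real.rpow_le_rpow hδpos.le hδh hexp.le
  have m3 : h ^ (2*α) * δ ^ (1-γ) ≤ h ^ (2*α+1-γ) := by
    have k1 : δ ^ (1-γ) ≤ h ^ (1-γ) := Real.rpow_le_rpow hδpos.le hδh (by linarith)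
    have k2 := mul_le_mul_of_nonneg_left k1 (Real.rpow_nonneg hhpos.le (2*α))
    have k3 : h ^ (2*α) * h ^ (1-γ) = h ^ (2*α+1-γ) := by
      rw [← Real.rpow_add hhpos]; ring_nf
    linarith
  have q0 : s ^ (1-γ) - p ^ (1-γ) ≤ δ ^ (1-γ) := by
    have := gfbm_rpow_sub_le (x := s) (y := p) (p := 1-γ) hp0 hps.le
      (by linarith) (by linarith)
    rw [hsp] at this; exact this
  have wA : (h ^ (2*α) + (δ/2) ^ (2*α) + δ ^ (2*α)) * (s ^ (1-γ) - p ^ (1-γ))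
      ≤ (2 + 2 ^ (-(2*α))) * h ^ (2*α+1-γ) := by
    have n2 : δ ^ (2*α) * δ ^ (1-γ) ≤ h ^ (2*α+1-γ) := by rw [m1]; exact m4
    have n3 : 2 ^ (-(2*α)) * (δ ^ (2*α) * δ ^ (1-γ)) ≤ 2 ^ (-(2*α)) * h ^ (2*α+1-γ) :=
      mul_le_mul_of_nonneg_left n2 gA.le
    calc (h ^ (2*α) + (δ/2) ^ (2*α) + δ ^ (2*α)) * (s ^ (1-γ) - p ^ (1-γ))
        ≤ (h ^ (2*α) + (δ/2) ^ (2*α) + δ ^ (2*α)) * δ ^ (1-γ) :=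
          mul_le_mul_of_nonneg_left q0 hcoefnn
      _ = h ^ (2*α) * δ ^ (1-γ) + 2 ^ (-(2*α)) * (δ ^ (2*α) * δ ^ (1-γ))
          + δ ^ (2*α) * δ ^ (1-γ) := by rw [hr1]; ring
      _ ≤ (2 + 2 ^ (-(2*α))) * h ^ (2*α+1-γ) := by linarith
  have wB : (δ/2) ^ (-γ) * δ ^ (2*α+1) ≤ 2 ^ γ * h ^ (2*α+1-γ) := by
    calc (δ/2) ^ (-γ) * δ ^ (2*α+1) = 2 ^ γ * (δ ^ (-γ) * δ ^ (2*α+1)) := by rw [hr2]; ring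
      _ = 2 ^ γ * δ ^ (2*α+1-γ) := by rw [m2]
      _ ≤ 2 ^ γ * h ^ (2*α+1-γ) := mul_le_mul_of_nonneg_left m4 gB.le
  have hB : (∫ u in Ioo p s, g2 u)
      ≤ ((2 + 2 ^ (-(2*α))) / (1-γ) + 2 ^ γ / (2*α+1)) * h ^ (2*α+1-γ) := by
    rw [hBval]
    have q1 : (h ^ (2*α) + (δ/2) ^ (2*α) + δ ^ (2*α)) * ((s ^ (1-γ) - p ^ (1-γ)) / (1-γ))
        ≤ ((2 + 2 ^ (-(2*α))) * h ^ (2*α+1-γ)) / (1-γ) := by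
      rw [← mul_div_assoc]
      exact div_le_div_of_nonneg_right wA h1γ.le
    have q2 : (δ/2) ^ (-γ) * (δ ^ (2*α+1) / (2*α+1))
        ≤ (2 ^ γ * h ^ (2*α+1-γ)) / (2*α+1) := by
      rw [← mul_div_assoc]
      exact div_le_div_of_nonneg_right wB h2α1.le
    have expand : ((2 + 2 ^ (-(2*α))) * h ^ (2*α+1-γ)) / (1-γ)
        + (2 ^ γ * h ^ (2*α+1-γ)) / (2*α+1)
        = ((2 + 2 ^ (-(2*α))) / (1-γ) + 2 ^ γ / (2*α+1)) * h ^ (2*α+1-γ) := by ring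
    linarith
  have hA : (∫ u in Ioc (0:ℝ) p, ψ u)
      ≤ (α ^ 2 * 2 ^ (2 - 2*α) / (1-γ) + α ^ 2 * 2 ^ γ * K) * h ^ (2*α+1-γ) := by
    have crhs : (0:ℝ) ≤ (α ^ 2 * 2 ^ (2 - 2*α) / (1-γ) + α ^ 2 * 2 ^ γ * K) := by
      have c3 : (0:ℝ) ≤ α ^ 2 * 2 ^ (2 - 2*α) / (1 - γ) :=
        div_nonneg (mul_nonneg (sq_nonneg _) gC.le) h1γ.le
      have c4 : (0:ℝ) ≤ α ^ 2 * 2 ^ γ * K :=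
        mul_nonneg (mul_nonneg (sq_nonneg _) gB.le) hK.le
      linarith
    rcases le_or_gt s h with hsh | hhs
    · have hδeq : δ = s := min_eq_left hsh
      have hpeq : p = 0 := by rw [hp, hδeq]; ring
      rw [hpeq, Set.Ioc_self, MeasureTheory.setIntegral_empty]
      exact mul_nonneg crhs (Real.rpow_nonneg hhpos.le _)
    · have hδeq : δ = h := min_eq_right hhs.le
      have hconv : (∫ u in Ioc (0:ℝ) p, (s - u) ^ (2*α-2)) = ∫ v in Ioo h s, v ^ (2*α-2) := by
        rw [← intervalIntegral.integral_of_le hp0,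
          intervalIntegral.integral_comp_sub_left (fun v => v ^ (2*α-2)) s, sub_zero, hsp, hδeq,
          intervalIntegral.integral_of_le hhs.le, MeasureTheory.integral_Ioc_eq_integral_Ioo]
      have hψval : (∫ u in Ioc (0:ℝ) p, ψ u)
          = α ^ 2 * h ^ 2 * ((s/2) ^ (2*α-2) * (p ^ (1-γ) / (1-γ))
            + (s/2) ^ (-γ) * (∫ v in Ioo h s, v ^ (2*α-2))) := by
        simp only [hψ]
        rw [integral_const_mul, integral_add hiψa hiψb, integral_const_mul, integral_const_mul,
          gfbm_integral_rpow_Ioc (q := -γ) (by linarith) hp0, hconv,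
          Real.zero_rpow (by linarith : -γ + 1 ≠ 0),
          show -γ + 1 = 1 - γ by ring, sub_zero]
      have bp : p ^ (1-γ) ≤ s ^ (1-γ) := Real.rpow_le_rpow hp0 hps.le (by linarith)
      have piece1 : (s/2) ^ (2*α-2) * p ^ (1-γ) ≤ 2 ^ (2-2*α) * h ^ (2*α-1-γ) := by
        have t1 : (s/2) ^ (2*α-2) = 2 ^ (2-2*α) * s ^ (2*α-2) := by
          rw [gfbm_half_rpow hs.le, show -(2*α-2) = 2-2*α by ring]
        have t2 : s ^ (2*α-2) * s ^ (1-γ) = s ^ (2*α-1-γ) := by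
          rw [← Real.rpow_add hs]; ring_nf
        have t3 : s ^ (2*α-1-γ) ≤ h ^ (2*α-1-γ) :=
          Real.rpow_le_rpow_of_nonpos hhpos hhs.le he0.le
        calc (s/2) ^ (2*α-2) * p ^ (1-γ)
            ≤ (s/2) ^ (2*α-2) * s ^ (1-γ) :=
              mul_le_mul_of_nonneg_left bp (Real.rpow_nonneg hs2.le _)
          _ = 2 ^ (2-2*α) * (s ^ (2*α-2) * s ^ (1-γ)) := by rw [t1]; ring
          _ = 2 ^ (2-2*α) * s ^ (2*α-1-γ) := by rw [t2]
          _ ≤ 2 ^ (2-2*α) * h ^ (2*α-1-γ) := mul_le_mul_of_nonneg_left t3 gC.le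
      have piece2 : (s/2) ^ (-γ) * (∫ v in Ioo h s, v ^ (2*α-2))
          ≤ 2 ^ γ * K * h ^ (2*α-1-γ) := by
        have t1 : (s/2) ^ (-γ) = 2 ^ γ * s ^ (-γ) := by rw [gfbm_half_rpow hs.le, neg_neg]
        have t4 : s ^ (-γ) * s ^ γ = 1 := by
          rw [← Real.rpow_add hs, show -γ + γ = 0 by ring, Real.rpow_zero]
        calc (s/2) ^ (-γ) * (∫ v in Ioo h s, v ^ (2*α-2))
            ≤ (s/2) ^ (-γ) * (K * (h ^ (2*α-1-γ) * s ^ γ)) :=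
              mul_le_mul_of_nonneg_left (hKint h s hhpos hhs.le) (Real.rpow_nonneg hs2.le _)
          _ = 2 ^ γ * K * h ^ (2*α-1-γ) * (s ^ (-γ) * s ^ γ) := by rw [t1]; ring
          _ = 2 ^ γ * K * h ^ (2*α-1-γ) := by rw [t4, mul_one]
      have hsq : h ^ (2:ℕ) * h ^ (2*α-1-γ) = h ^ (2*α+1-γ) := by
        rw [← Real.rpow_natCast h 2, ← Real.rpow_add hhpos]
        congr 1
        push_cast
        ring
      rw [hψval]
      have inner : (s/2) ^ (2*α-2) * (p ^ (1-γ) / (1-γ)) + (s/2) ^ (-γ) * (∫ v in Ioo h s, v ^ (2*α-2))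
          ≤ (2 ^ (2-2*α) * h ^ (2*α-1-γ)) / (1-γ) + 2 ^ γ * K * h ^ (2*α-1-γ) := by
        have q1 : (s/2) ^ (2*α-2) * (p ^ (1-γ) / (1-γ))
            ≤ (2 ^ (2-2*α) * h ^ (2*α-1-γ)) / (1-γ) := by
          rw [← mul_div_assoc]
          exact div_le_div_of_nonneg_right piece1 h1γ.le
        linarith [piece2]
      calc α ^ 2 * h ^ 2 * ((s/2) ^ (2*α-2) * (p ^ (1-γ) / (1-γ))
            + (s/2) ^ (-γ) * (∫ v in Ioo h s, v ^ (2*α-2)))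
          ≤ α ^ 2 * h ^ 2 * ((2 ^ (2-2*α) * h ^ (2*α-1-γ)) / (1-γ)
            + 2 ^ γ * K * h ^ (2*α-1-γ)) :=
            mul_le_mul_of_nonneg_left inner (by positivity)
        _ = (α ^ 2 * 2 ^ (2-2*α) / (1-γ) + α ^ 2 * 2 ^ γ * K)
            * (h ^ (2:ℕ) * h ^ (2*α-1-γ)) := by ring
        _ = (α ^ 2 * 2 ^ (2-2*α) / (1-γ) + α ^ 2 * 2 ^ γ * K) * h ^ (2*α+1-γ) := by
            rw [hsq]
  rw [hval] at hmono
  have expand2 : ((2 + 2 ^ (-(2*α))) / (1-γ) + 2 ^ γ / (2*α+1)) * h ^ (2*α+1-γ)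
      + (α ^ 2 * 2 ^ (2-2*α) / (1-γ) + α ^ 2 * 2 ^ γ * K) * h ^ (2*α+1-γ)
      = ((2 + 2 ^ (-(2*α))) / (1 - γ) + 2 ^ γ / (2*α+1)
        + (α ^ 2 * 2 ^ (2 - 2*α) / (1 - γ) + α ^ 2 * 2 ^ γ * K)) * h ^ (2*α+1-γ) := by
    ring
  linarith [hA, hB]


theorem gfbm_stmt8 (α γ H : ℝ) (hγ0 : 0 ≤ γ) (hγ1 : γ < 1)
    (hα0 : -(1 - γ) / 2 < α) (hα1 : α < (1 + γ) / 2)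
    (hH : H = α - γ / 2 + 1 / 2) :
    ∀ T : ℝ, 0 < T → ∃ C : ℝ, 0 < C ∧
      ∀ s t : ℝ, 0 < s → s < t → t ≤ T →
        (∫ u in Set.Ioo s t, (t - u) ^ (2 * α) * u ^ (-γ))
          + (∫ u in Set.Ioo 0 s, ((t - u) ^ α - (s - u) ^ α) ^ 2 * u ^ (-γ))
          + (∫ u in Set.Ioi (0 : ℝ), ((t + u) ^ α - (s + u) ^ α) ^ 2 * u ^ (-γ))
        ≤ C * (t - s) ^ (2 * H) := by
  intro T hT
  have h2α : -1 < 2 * α := by linarith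
  have hexp : 0 < 2 * α + 1 - γ := by linarith
  have h2αγ : 2 * α < 1 + γ := by linarith
  have hα1' : α ≤ 1 := by linarith
  have hup : 2 * α - 1 - γ < 0 := by linarith
  obtain ⟨C1, hC1, hB1⟩ := gfbm_term1 hγ0 hγ1 h2α hexp
  obtain ⟨C2, hC2, hB2⟩ := gfbm_term2 hγ0 hγ1 h2αγ hexp
  obtain ⟨C3, hC3, hB3⟩ := gfbm_term3 hγ0 hγ1 hα1' hexp hup
  refine ⟨C1 + C2 + C3, by linarith, ?_⟩
  intro s t hs hst _
  have h2H : 2 * H = 2 * α + 1 - γ := by rw [hH]; ring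
  rw [h2H]
  have b1 := hB1 s t hs hst
  have b2 := hB2 s t hs hst
  have b3 := hB3 s t hs hst
  linarith
end

section
/- With Ψ(s,t) as the GFBM covariance and H = α − γ/2 + 1/2, for fixed 0 < s < t one has lim Ψ(ns, mt)/(n^H m^H) = 0 as n → ∞ with m/n → ∞. -/
open MeasureTheory Set Real Filter

lemma rpow_le_rpow_nonpos' {x y z : ℝ} (hx : 0 < x) (hxy : x ≤ y) (hz : z ≤ 0) :
    y ^ z ≤ x ^ z := by
  have hy : 0 < y := lt_of_lt_of_le hx hxy
  rw [← neg_neg z, Real.rpow_neg hy.le, Real.rpow_neg hx.le]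
  exact inv_anti₀ (Real.rpow_pos_of_pos hx _)
    (Real.rpow_le_rpow hx.le hxy (by linarith))

lemma mul3_le {x y z x' y' z' : ℝ} (hx : x ≤ x') (hy : y ≤ y') (hz : z ≤ z')
    (hy0 : 0 ≤ y) (hz0 : 0 ≤ z) (hx'0 : 0 ≤ x') (hy'0 : 0 ≤ y') :
    x * y * z ≤ x' * y' * z' :=
  mul_le_mul (mul_le_mul hx hy hy0 hx'0) hz hz0 (mul_nonneg hx'0 hy'0)

lemma rpow_mul_div (u : ℝ) (hu : 0 < u) (a : ℝ) : u ^ a * u⁻¹ = u ^ (a - 1) := by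
  rw [Real.rpow_sub hu, Real.rpow_one, div_eq_mul_inv]

lemma mvt_pos {α A u : ℝ} (hα0 : 0 ≤ α) (hα1 : α ≤ 1) (hA : 0 ≤ A) (hu : 0 < u) :
    (A + u) ^ α - u ^ α ≤ α * A * u ^ (α - 1) := by
  have h1 : (A + u) ^ α = u ^ α * (1 + A / u) ^ α := by
    rw [← Real.mul_rpow hu.le (by positivity)]
    rw [mul_add, mul_one, mul_div_cancel₀ _ hu.ne']
    ring_nf
  have h2 : (1 + A / u) ^ α ≤ 1 + α * (A / u) :=
    rpow_one_add_le_one_add_mul_self (by nlinarith [div_nonneg hA hu.le]) hα0 hα1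
  have h3 : u ^ α * (A / u) = A * u ^ (α - 1) := by
    rw [div_eq_mul_inv, ← mul_assoc, mul_comm (u ^ α) A, mul_assoc, rpow_mul_div u hu α]
  have h4 : u ^ α * (1 + A / u) ^ α ≤ u ^ α * (1 + α * (A / u)) :=
    mul_le_mul_of_nonneg_left h2 (Real.rpow_nonneg hu.le _)
  have h5 : u ^ α * (1 + α * (A / u)) = u ^ α + α * A * u ^ (α - 1) := by
    have : u ^ α * (1 + α * (A / u)) = u ^ α + α * (u ^ α * (A / u)) := by ring
    rw [this, h3]; ring
  linarith [h1 ▸ (h5 ▸ h4)]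

lemma bernoulli_neg {α x : ℝ} (hα1 : -1 ≤ α) (hα0 : α ≤ 0) (hx : 0 ≤ x) :
    1 + α * x ≤ (1 + x) ^ α := by
  rcases le_or_gt (1 + α * x) 0 with h | h
  · exact h.trans (Real.rpow_nonneg (by linarith) _)
  · have h1x : (0:ℝ) < 1 + x := by linarith
    have hup : (1 + x) ^ (-α) ≤ 1 + (-α) * x :=
      rpow_one_add_le_one_add_mul_self (by nlinarith) (by linarith) (by linarith)
    have hpos : (0:ℝ) < (1 + x) ^ (-α) := Real.rpow_pos_of_pos h1x _
    have hfac : (1 + x) ^ α * (1 + x) ^ (-α) = 1 := by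
      rw [← Real.rpow_add h1x]; simp
    have key : (1 + α * x) * ((1 + x) ^ (-α)) ≤ 1 := by
      calc (1 + α * x) * ((1 + x) ^ (-α)) ≤ (1 + α * x) * (1 + (-α) * x) :=
            mul_le_mul_of_nonneg_left hup h.le
        _ = 1 - α ^ 2 * x ^ 2 := by ring
        _ ≤ 1 := by nlinarith
    have h7 : (1 + α * x) * ((1 + x) ^ (-α)) ≤ (1 + x) ^ α * ((1 + x) ^ (-α)) := by
      rw [hfac]; exact key
    exact le_of_mul_le_mul_right h7 hpos

lemma mvt_neg {α A u : ℝ} (hα1 : -1 ≤ α) (hα0 : α ≤ 0) (hA : 0 ≤ A) (hu : 0 < u) :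
    u ^ α - (A + u) ^ α ≤ -α * A * u ^ (α - 1) := by
  have h1 : (A + u) ^ α = u ^ α * (1 + A / u) ^ α := by
    rw [← Real.mul_rpow hu.le (by positivity)]
    rw [mul_add, mul_one, mul_div_cancel₀ _ hu.ne']
    ring_nf
  have h2 : 1 + α * (A / u) ≤ (1 + A / u) ^ α := bernoulli_neg hα1 hα0 (by positivity)
  have h3 : u ^ α * (A / u) = A * u ^ (α - 1) := by
    rw [div_eq_mul_inv, ← mul_assoc, mul_comm (u ^ α) A, mul_assoc, rpow_mul_div u hu α]
  have h4 : u ^ α * (1 + α * (A / u)) ≤ u ^ α * (1 + A / u) ^ α :=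
    mul_le_mul_of_nonneg_left h2 (Real.rpow_nonneg hu.le _)
  have h5 : u ^ α * (1 + α * (A / u)) = u ^ α + α * A * u ^ (α - 1) := by
    have : u ^ α * (1 + α * (A / u)) = u ^ α + α * (u ^ α * (A / u)) := by ring
    rw [this, h3]; ring
  have := h5 ▸ h4
  rw [← h1] at this
  linarith

lemma interp_le {f x y : ℝ} (hf0 : 0 ≤ f) (hx : f ≤ x) (hy : f ≤ y) :
    f ≤ x ^ ((4:ℝ)⁻¹) * y ^ ((3:ℝ)/4) := by
  have hx0 : 0 ≤ x := le_trans hf0 hx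
  have h : f = f ^ ((4:ℝ)⁻¹) * f ^ ((3:ℝ)/4) := by
    rw [← Real.rpow_add' hf0 (by norm_num)]
    norm_num
  rw [h]
  exact mul_le_mul (Real.rpow_le_rpow hf0 hx (by norm_num))
    (Real.rpow_le_rpow hf0 hy (by norm_num)) (Real.rpow_nonneg hf0 _)
    (Real.rpow_nonneg hx0 _)

lemma rpow_sub_le {α A u : ℝ} (hα0 : 0 ≤ α) (hα1 : α ≤ 1) (hA : 0 ≤ A) (hu : 0 ≤ u) :
    (A + u) ^ α ≤ A ^ α + u ^ α := by
  have h := NNReal.rpow_add_le_add_rpow A.toNNReal u.toNNReal hα0 hα1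
  have h2 := NNReal.coe_le_coe.2 h
  push_cast at h2
  rwa [Real.coe_toNNReal A hA, Real.coe_toNNReal u hu] at h2

lemma integral_le_three {f g₁ g₂ g₃ : ℝ → ℝ} {S T₁ T₂ T₃ : Set ℝ}
    (hS : MeasurableSet S) (hT₁ : MeasurableSet T₁) (hT₂ : MeasurableSet T₂)
    (hT₃ : MeasurableSet T₃) (hcov : S ⊆ T₁ ∪ T₂ ∪ T₃)
    (hf0 : ∀ u ∈ S, 0 ≤ f u)
    (h₁ : ∀ u ∈ S ∩ T₁, f u ≤ g₁ u) (h₂ : ∀ u ∈ S ∩ T₂, f u ≤ g₂ u)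
    (h₃ : ∀ u ∈ S ∩ T₃, f u ≤ g₃ u)
    (hg₁0 : ∀ u ∈ T₁, 0 ≤ g₁ u) (hg₂0 : ∀ u ∈ T₂, 0 ≤ g₂ u) (hg₃0 : ∀ u ∈ T₃, 0 ≤ g₃ u)
    (hint₁ : IntegrableOn g₁ T₁) (hint₂ : IntegrableOn g₂ T₂) (hint₃ : IntegrableOn g₃ T₃) :
    ∫ u in S, f u ≤ (∫ u in T₁, g₁ u) + (∫ u in T₂, g₂ u) + ∫ u in T₃, g₃ u := by
  have i₁ := hint₁.integrable_indicator hT₁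
  have i₂ := hint₂.integrable_indicator hT₂
  have i₃ := hint₃.integrable_indicator hT₃
  have i₁₂ : Integrable (fun u => T₁.indicator g₁ u + T₂.indicator g₂ u) volume := i₁.add i₂
  have hind : ∀ u, S.indicator f u ≤
      T₁.indicator g₁ u + T₂.indicator g₂ u + T₃.indicator g₃ u := by
    intro u
    have n₁ : 0 ≤ T₁.indicator g₁ u := Set.indicator_nonneg hg₁0 u
    have n₂ : 0 ≤ T₂.indicator g₂ u := Set.indicator_nonneg hg₂0 u
    have n₃ : 0 ≤ T₃.indicator g₃ u := Set.indicator_nonneg hg₃0 u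
    by_cases huS : u ∈ S
    · rw [Set.indicator_of_mem huS]
      rcases hcov huS with (h | h) | h
      · have : f u ≤ T₁.indicator g₁ u := by
          rw [Set.indicator_of_mem h]; exact h₁ u ⟨huS, h⟩
        linarith
      · have : f u ≤ T₂.indicator g₂ u := by
          rw [Set.indicator_of_mem h]; exact h₂ u ⟨huS, h⟩
        linarith
      · have : f u ≤ T₃.indicator g₃ u := by
          rw [Set.indicator_of_mem h]; exact h₃ u ⟨huS, h⟩
        linarith
    · rw [Set.indicator_of_notMem huS]; linarith
  calc ∫ u in S, f u = ∫ u, S.indicator f u := (integral_indicator hS).symm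
    _ ≤ ∫ u, (T₁.indicator g₁ u + T₂.indicator g₂ u + T₃.indicator g₃ u) := by
        refine integral_mono_of_nonneg (ae_of_all _ fun u =>
          Set.indicator_nonneg hf0 u) (i₁₂.add i₃) (ae_of_all _ hind)
    _ = (∫ u in T₁, g₁ u) + (∫ u in T₂, g₂ u) + ∫ u in T₃, g₃ u := by
        rw [integral_add i₁₂ i₃, integral_add i₁ i₂, integral_indicator hT₁,
          integral_indicator hT₂, integral_indicator hT₃]

lemma int_Ioc_rpow {p a : ℝ} (hp : -1 < p) (ha : 0 < a) :
    IntegrableOn (fun u : ℝ => u ^ p) (Ioc 0 a) ∧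
      ∫ u in Ioc 0 a, u ^ p = a ^ (p + 1) / (p + 1) := by
  constructor
  · rw [← intervalIntegrable_iff_integrableOn_Ioc_of_le ha.le]
    exact intervalIntegral.intervalIntegrable_rpow' hp
  · rw [← intervalIntegral.integral_of_le ha.le,
      integral_rpow (Or.inl hp), Real.zero_rpow (by linarith)]
    ring

lemma int_Ioc_rpow' {p a b : ℝ} (hp : p ≠ -1) (ha : 0 < a) (hab : a ≤ b) :
    IntegrableOn (fun u : ℝ => u ^ p) (Ioc a b) ∧
      ∫ u in Ioc a b, u ^ p = (b ^ (p + 1) - a ^ (p + 1)) / (p + 1) := by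
  have h0 : (0:ℝ) ∉ Set.uIcc a b := by
    rw [Set.mem_uIcc]; push_neg
    constructor <;> intro h <;> [linarith; linarith]
  constructor
  · rw [← intervalIntegrable_iff_integrableOn_Ioc_of_le hab]
    exact intervalIntegral.intervalIntegrable_rpow (Or.inr h0)
  · rw [← intervalIntegral.integral_of_le hab, integral_rpow (Or.inr ⟨hp, h0⟩)]

lemma int_Ioi_rpow {p b : ℝ} (hp : p < -1) (hb : 0 < b) :
    IntegrableOn (fun u : ℝ => u ^ p) (Ioi b) ∧
      ∫ u in Ioi b, u ^ p = -b ^ (p + 1) / (p + 1) :=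
  ⟨integrableOn_Ioi_rpow_of_lt hp hb, integral_Ioi_rpow_of_lt hp hb⟩

lemma int_refl_rpow {p A : ℝ} (hp : -1 < p) (hA : 0 < A) :
    IntegrableOn (fun u : ℝ => (A - u) ^ p) (Ioc (A / 2) A) ∧
      ∫ u in Ioc (A / 2) A, (A - u) ^ p = (A / 2) ^ (p + 1) / (p + 1) := by
  have h2 : A / 2 ≤ A := by linarith
  have hii : IntervalIntegrable (fun u : ℝ => (A - u) ^ p) volume (A / 2) A := by
    have h := (intervalIntegral.intervalIntegrable_rpow' (a := A / 2) (b := 0) hp).comp_sub_left A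
    have e1 : A - A / 2 = A / 2 := by ring
    have e2 : A - 0 = A := by ring
    rwa [e1, e2] at h
  constructor
  · rw [← intervalIntegrable_iff_integrableOn_Ioc_of_le h2]; exact hii
  · rw [← intervalIntegral.integral_of_le h2,
      intervalIntegral.integral_comp_sub_left (fun u : ℝ => u ^ p) A]
    have e1 : A - A / 2 = A / 2 := by ring
    have e2 : A - A = (0:ℝ) := by ring
    rw [e1, e2, integral_rpow (Or.inl hp), Real.zero_rpow (by linarith)]
    ring

lemma term_step {X C A B κ a W : ℝ} (hA : 0 < A) (hB : 0 < B) (hAB : A ≤ B)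
    (hC : 0 ≤ C) (hκ : κ ≤ a) (hX : X ≤ C * (A ^ a * B ^ (W - a))) :
    X ≤ C * ((A / B) ^ κ * B ^ W) := by
  have h1 : A ^ a * B ^ (W - a) = (A / B) ^ a * B ^ W := by
    rw [Real.div_rpow hA.le hB.le, Real.rpow_sub hB]
    have h2 : B ^ a ≠ 0 := (Real.rpow_pos_of_pos hB a).ne'
    field_simp
  have h3 : (A / B) ^ a ≤ (A / B) ^ κ :=
    Real.rpow_le_rpow_of_exponent_ge (div_pos hA hB) ((div_le_one hB).2 hAB) hκ
  have h4 : (A / B) ^ a * B ^ W ≤ (A / B) ^ κ * B ^ W :=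
    mul_le_mul_of_nonneg_right h3 (Real.rpow_nonneg hB.le W)
  calc X ≤ C * (A ^ a * B ^ (W - a)) := hX
    _ = C * ((A / B) ^ a * B ^ W) := by rw [h1]
    _ ≤ C * ((A / B) ^ κ * B ^ W) := mul_le_mul_of_nonneg_left h4 hC

lemma rpow_collect2 {u : ℝ} (hu : 0 < u) (a b d : ℝ) (h : a + b = d) :
    u ^ a * u ^ b = u ^ d := by rw [← Real.rpow_add hu, h]

lemma rpow_collect3 {u : ℝ} (hu : 0 < u) (a b c d : ℝ) (h : a + b + c = d) :
    u ^ a * u ^ b * u ^ c = u ^ d := by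
  rw [← Real.rpow_add hu, ← Real.rpow_add hu, h]

lemma mul_self_rpow {A : ℝ} (hA : 0 < A) (q d : ℝ) (h : 1 + q = d) : A * A ^ q = A ^ d := by
  rw [← h, Real.rpow_add hA, Real.rpow_one]
set_option maxHeartbeats 2000000 in
lemma gfbm_key (α γ : ℝ) (hγ0 : 0 ≤ γ) (hγ1 : γ < 1)
    (hα0 : -(1 / 2) + γ / 2 < α) (hα1 : α < 1 / 2 + γ / 2) :
    ∃ κ K : ℝ, α - γ / 2 + 1 / 2 < κ ∧ 0 ≤ K ∧ ∀ A B : ℝ, 0 < A → 2 * A ≤ B →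
      (∫ u in Ioo 0 A, (B - u) ^ α * (A - u) ^ α * u ^ (-γ)) +
        (∫ u in Ioi (0:ℝ), ((B + u) ^ α - u ^ α) * ((A + u) ^ α - u ^ α) * u ^ (-γ)) ≤
      K * ((A / B) ^ κ * B ^ (2 * α + 1 - γ)) := by
  have hαlt1 : α < 1 := by linarith
  have hαgtm : -(1:ℝ) < α := by linarith
  have h2a : (0:ℝ) < (2:ℝ) ^ α := Real.rpow_pos_of_pos two_pos _
  have h2b : (0:ℝ) < (2:ℝ) ^ (1 + α - γ) := Real.rpow_pos_of_pos two_pos _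
  rcases lt_or_ge α 0 with hneg | hpos
  -- CASE α < 0
  · set K1 : ℝ := ((2:ℝ) ^ α)⁻¹ * ((2:ℝ) ^ (1 + α - γ))⁻¹ / (-γ + 1) with hK1
    set K2 : ℝ := ((2:ℝ) ^ α)⁻¹ * ((2:ℝ) ^ (1 + α - γ))⁻¹ / (α + 1) with hK2
    set K3 : ℝ := 1 / (2 * α - γ + 1) with hK3
    set K4 : ℝ := (-α) / (γ - 2 * α) with hK4
    have hK10 : 0 ≤ K1 := by
      rw [hK1]; apply div_nonneg (by positivity) (by linarith)
    have hK20 : 0 ≤ K2 := by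
      rw [hK2]
      apply div_nonneg (by positivity) (by linarith)
    have hK30 : 0 ≤ K3 := by
      rw [hK3]; apply div_nonneg (by norm_num) (by linarith)
    have hK40 : 0 ≤ K4 := by
      rw [hK4]; apply div_nonneg (by linarith) (by linarith)
    refine ⟨2 * α + 1 - γ, K1 + K2 + (K3 + K4), by linarith, by linarith, ?_⟩
    intro A B hA h2AB
    have hB : 0 < B := by linarith
    have hAB : A ≤ B := by linarith
    have hA2 : 0 < A / 2 := by linarith
    set W : ℝ := 2 * α + 1 - γ with hW
    -- ======== I₁ ========
    have hI1 : (∫ u in Ioo 0 A, (B - u) ^ α * (A - u) ^ α * u ^ (-γ)) ≤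
        K1 * ((A / B) ^ W * B ^ W) + K2 * ((A / B) ^ W * B ^ W) := by
      have hcov : Ioo (0:ℝ) A ⊆ Ioc 0 (A / 2) ∪ Ioc (A / 2) A ∪ (∅ : Set ℝ) := by
        intro u hu
        rcases le_or_gt u (A / 2) with h | h
        · exact Or.inl (Or.inl ⟨hu.1, h⟩)
        · exact Or.inl (Or.inr ⟨h, hu.2.le⟩)
      have hf0 : ∀ u ∈ Ioo (0:ℝ) A, 0 ≤ (B - u) ^ α * (A - u) ^ α * u ^ (-γ) := by
        intro u hu
        exact mul_nonneg (mul_nonneg (Real.rpow_nonneg (by linarith [hu.2]) _)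
          (Real.rpow_nonneg (by linarith [hu.2]) _)) (Real.rpow_nonneg hu.1.le _)
      have h1 : ∀ u ∈ Ioo (0:ℝ) A ∩ Ioc 0 (A / 2),
          (B - u) ^ α * (A - u) ^ α * u ^ (-γ) ≤
            (B / 2) ^ α * (A / 2) ^ α * u ^ (-γ) := by
        rintro u ⟨hu1, hu2⟩
        refine mul3_le ?_ ?_ le_rfl (Real.rpow_nonneg (by linarith [hu1.2]) _)
          (Real.rpow_nonneg hu1.1.le _) (Real.rpow_nonneg (by linarith) _)
          (Real.rpow_nonneg (by linarith) _)
        · exact rpow_le_rpow_nonpos' (by linarith) (by linarith [hu2.2]) hneg.le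
        · exact rpow_le_rpow_nonpos' (by linarith) (by linarith [hu2.2]) hneg.le
      have h2 : ∀ u ∈ Ioo (0:ℝ) A ∩ Ioc (A / 2) A,
          (B - u) ^ α * (A - u) ^ α * u ^ (-γ) ≤
            (B / 2) ^ α * (A / 2) ^ (-γ) * (A - u) ^ α := by
        rintro u ⟨hu1, hu2⟩
        have heq : (B - u) ^ α * (A - u) ^ α * u ^ (-γ) =
            (B - u) ^ α * u ^ (-γ) * (A - u) ^ α := by ring
        rw [heq]
        refine mul3_le ?_ ?_ le_rfl (Real.rpow_nonneg hu1.1.le _)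
          (Real.rpow_nonneg (by linarith [hu1.2]) _)
          (Real.rpow_nonneg (by linarith) _) (Real.rpow_nonneg hA2.le _)
        · exact rpow_le_rpow_nonpos' (by linarith) (by linarith [hu1.2]) hneg.le
        · exact rpow_le_rpow_nonpos' hA2 hu2.1.le (by linarith)
      have h3 : ∀ u ∈ Ioo (0:ℝ) A ∩ (∅ : Set ℝ),
          (B - u) ^ α * (A - u) ^ α * u ^ (-γ) ≤ (0:ℝ) :=
        fun u hu => absurd hu.2 (Set.notMem_empty u)
      have hg10 : ∀ u ∈ Ioc (0:ℝ) (A / 2), 0 ≤ (B / 2) ^ α * (A / 2) ^ α * u ^ (-γ) := by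
        intro u hu
        exact mul_nonneg (mul_nonneg (Real.rpow_nonneg (by linarith) _)
          (Real.rpow_nonneg (by linarith) _)) (Real.rpow_nonneg hu.1.le _)
      have hg20 : ∀ u ∈ Ioc (A / 2) A, 0 ≤ (B / 2) ^ α * (A / 2) ^ (-γ) * (A - u) ^ α := by
        intro u hu
        exact mul_nonneg (mul_nonneg (Real.rpow_nonneg (by linarith) _)
          (Real.rpow_nonneg hA2.le _)) (Real.rpow_nonneg (by linarith [hu.2]) _)
      have hg30 : ∀ u ∈ (∅ : Set ℝ), 0 ≤ (fun _ : ℝ => (0:ℝ)) u :=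
        fun u hu => absurd hu (Set.notMem_empty u)
      have hint1 : IntegrableOn (fun u : ℝ => (B / 2) ^ α * (A / 2) ^ α * u ^ (-γ))
          (Ioc 0 (A / 2)) := by
        have := ((int_Ioc_rpow (p := -γ) (by linarith) hA2).1.const_mul
          ((B / 2) ^ α * (A / 2) ^ α))
        simp only [mul_assoc] at this ⊢
        exact this
      have hint2 : IntegrableOn (fun u : ℝ => (B / 2) ^ α * (A / 2) ^ (-γ) * (A - u) ^ α)
          (Ioc (A / 2) A) := by
        have := ((int_refl_rpow (p := α) (by linarith) hA).1.const_mul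
          ((B / 2) ^ α * (A / 2) ^ (-γ)))
        simp only [mul_assoc] at this ⊢
        exact this
      have key := integral_le_three measurableSet_Ioo measurableSet_Ioc measurableSet_Ioc
        MeasurableSet.empty hcov hf0 h1 h2 h3 hg10 hg20 hg30 hint1 hint2
        (integrableOn_empty)
      have v1 : (∫ u in Ioc (0:ℝ) (A / 2), (B / 2) ^ α * (A / 2) ^ α * u ^ (-γ)) =
          (B / 2) ^ α * (A / 2) ^ α * ((A / 2) ^ (-γ + 1) / (-γ + 1)) := by
        rw [MeasureTheory.integral_const_mul, (int_Ioc_rpow (p := -γ) (by linarith) hA2).2]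
      have v2 : (∫ u in Ioc (A / 2) A, (B / 2) ^ α * (A / 2) ^ (-γ) * (A - u) ^ α) =
          (B / 2) ^ α * (A / 2) ^ (-γ) * ((A / 2) ^ (α + 1) / (α + 1)) := by
        rw [MeasureTheory.integral_const_mul, (int_refl_rpow (p := α) (by linarith) hA).2]
      have t1 : (B / 2) ^ α * (A / 2) ^ α * ((A / 2) ^ (-γ + 1) / (-γ + 1)) ≤
          K1 * ((A / B) ^ W * B ^ W) := by
        apply term_step (a := 1 + α - γ) hA hB hAB (by linarith) (by rw [hW]; linarith)
        apply le_of_eq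
        have c1 : (A / 2) ^ α * (A / 2) ^ (-γ + 1) = (A / 2) ^ (1 + α - γ) :=
          rpow_collect2 hA2 _ _ _ (by ring)
        have eB : (B / 2) ^ α = B ^ α / (2:ℝ) ^ α := Real.div_rpow hB.le (by norm_num) α
        have eA : (A / 2) ^ (1 + α - γ) = A ^ (1 + α - γ) / (2:ℝ) ^ (1 + α - γ) :=
          Real.div_rpow hA.le (by norm_num) _
        have eW : W - (1 + α - γ) = α := by rw [hW]; ring
        rw [eW]
        calc (B / 2) ^ α * (A / 2) ^ α * ((A / 2) ^ (-γ + 1) / (-γ + 1))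
            = (B / 2) ^ α * ((A / 2) ^ α * (A / 2) ^ (-γ + 1)) / (-γ + 1) := by ring
          _ = (B / 2) ^ α * (A / 2) ^ (1 + α - γ) / (-γ + 1) := by rw [c1]
          _ = K1 * (A ^ (1 + α - γ) * B ^ α) := by
              rw [eB, eA, hK1]; ring
      have t2 : (B / 2) ^ α * (A / 2) ^ (-γ) * ((A / 2) ^ (α + 1) / (α + 1)) ≤
          K2 * ((A / B) ^ W * B ^ W) := by
        apply term_step (a := 1 + α - γ) hA hB hAB (by linarith) (by rw [hW]; linarith)
        apply le_of_eq
        have c1 : (A / 2) ^ (-γ) * (A / 2) ^ (α + 1) = (A / 2) ^ (1 + α - γ) :=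
          rpow_collect2 hA2 _ _ _ (by ring)
        have eB : (B / 2) ^ α = B ^ α / (2:ℝ) ^ α := Real.div_rpow hB.le (by norm_num) α
        have eA : (A / 2) ^ (1 + α - γ) = A ^ (1 + α - γ) / (2:ℝ) ^ (1 + α - γ) :=
          Real.div_rpow hA.le (by norm_num) _
        have eW : W - (1 + α - γ) = α := by rw [hW]; ring
        rw [eW]
        calc (B / 2) ^ α * (A / 2) ^ (-γ) * ((A / 2) ^ (α + 1) / (α + 1))
            = (B / 2) ^ α * ((A / 2) ^ (-γ) * (A / 2) ^ (α + 1)) / (α + 1) := by ring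
          _ = (B / 2) ^ α * (A / 2) ^ (1 + α - γ) / (α + 1) := by rw [c1]
          _ = K2 * (A ^ (1 + α - γ) * B ^ α) := by
              rw [eB, eA, hK2]; ring
      calc (∫ u in Ioo 0 A, (B - u) ^ α * (A - u) ^ α * u ^ (-γ))
          ≤ (∫ u in Ioc (0:ℝ) (A / 2), (B / 2) ^ α * (A / 2) ^ α * u ^ (-γ)) +
            (∫ u in Ioc (A / 2) A, (B / 2) ^ α * (A / 2) ^ (-γ) * (A - u) ^ α) +
            ∫ _u in (∅ : Set ℝ), (0:ℝ) := key
        _ = (B / 2) ^ α * (A / 2) ^ α * ((A / 2) ^ (-γ + 1) / (-γ + 1)) +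
            (B / 2) ^ α * (A / 2) ^ (-γ) * ((A / 2) ^ (α + 1) / (α + 1)) := by
            rw [v1, v2, MeasureTheory.setIntegral_empty, add_zero]
        _ ≤ K1 * ((A / B) ^ W * B ^ W) + K2 * ((A / B) ^ W * B ^ W) := add_le_add t1 t2
    -- ======== I₂ ========
    have hI2 : (∫ u in Ioi (0:ℝ), ((B + u) ^ α - u ^ α) * ((A + u) ^ α - u ^ α) * u ^ (-γ))
        ≤ K3 * ((A / B) ^ W * B ^ W) + K4 * ((A / B) ^ W * B ^ W) := by
      have hcov : Ioi (0:ℝ) ⊆ Ioc 0 A ∪ Ioi A ∪ (∅ : Set ℝ) := by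
        intro u hu
        rcases le_or_gt u A with h | h
        · exact Or.inl (Or.inl ⟨hu, h⟩)
        · exact Or.inl (Or.inr h)
      have hf0 : ∀ u ∈ Ioi (0:ℝ),
          0 ≤ ((B + u) ^ α - u ^ α) * ((A + u) ^ α - u ^ α) * u ^ (-γ) := by
        intro u hu
        have hu0 : (0:ℝ) < u := hu
        have hb : (B + u) ^ α ≤ u ^ α :=
          rpow_le_rpow_nonpos' hu0 (by linarith) hneg.le
        have ha : (A + u) ^ α ≤ u ^ α :=
          rpow_le_rpow_nonpos' hu0 (by linarith) hneg.le
        apply mul_nonneg _ (Real.rpow_nonneg hu0.le _)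
        nlinarith [hb, ha]
      have h1 : ∀ u ∈ Ioi (0:ℝ) ∩ Ioc 0 A,
          ((B + u) ^ α - u ^ α) * ((A + u) ^ α - u ^ α) * u ^ (-γ) ≤ u ^ (2 * α - γ) := by
        rintro u ⟨hu1, hu2⟩
        have hu0 : (0:ℝ) < u := hu1
        have heq : ((B + u) ^ α - u ^ α) * ((A + u) ^ α - u ^ α) * u ^ (-γ) =
            (u ^ α - (B + u) ^ α) * (u ^ α - (A + u) ^ α) * u ^ (-γ) := by ring
        rw [heq]
        have hb : (B + u) ^ α ≤ u ^ α :=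
          rpow_le_rpow_nonpos' hu0 (by linarith) hneg.le
        have ha : (A + u) ^ α ≤ u ^ α :=
          rpow_le_rpow_nonpos' hu0 (by linarith) hneg.le
        calc (u ^ α - (B + u) ^ α) * (u ^ α - (A + u) ^ α) * u ^ (-γ)
            ≤ u ^ α * u ^ α * u ^ (-γ) := by
              refine mul3_le ?_ ?_ le_rfl (by linarith) (Real.rpow_nonneg hu0.le _)
                (Real.rpow_nonneg hu0.le _) (Real.rpow_nonneg hu0.le _)
              · have := Real.rpow_nonneg (by linarith : (0:ℝ) ≤ B + u) α
                linarith
              · have := Real.rpow_nonneg (by linarith : (0:ℝ) ≤ A + u) α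
                linarith
          _ = u ^ (2 * α - γ) := rpow_collect3 hu0 _ _ _ _ (by ring)
      have h2 : ∀ u ∈ Ioi (0:ℝ) ∩ Ioi A,
          ((B + u) ^ α - u ^ α) * ((A + u) ^ α - u ^ α) * u ^ (-γ) ≤
            ((-α) * A) * u ^ (2 * α - 1 - γ) := by
        rintro u ⟨hu1, hu2⟩
        have hu0 : (0:ℝ) < u := hu1
        have heq : ((B + u) ^ α - u ^ α) * ((A + u) ^ α - u ^ α) * u ^ (-γ) =
            (u ^ α - (B + u) ^ α) * (u ^ α - (A + u) ^ α) * u ^ (-γ) := by ring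
        rw [heq]
        have hb : (B + u) ^ α ≤ u ^ α :=
          rpow_le_rpow_nonpos' hu0 (by linarith) hneg.le
        have hmv : u ^ α - (A + u) ^ α ≤ -α * A * u ^ (α - 1) :=
          mvt_neg (by linarith) hneg.le hA.le hu0
        have ha : (A + u) ^ α ≤ u ^ α :=
          rpow_le_rpow_nonpos' hu0 (by linarith) hneg.le
        calc (u ^ α - (B + u) ^ α) * (u ^ α - (A + u) ^ α) * u ^ (-γ)
            ≤ u ^ α * (-α * A * u ^ (α - 1)) * u ^ (-γ) := by
              refine mul3_le ?_ hmv le_rfl (by linarith) (Real.rpow_nonneg hu0.le _)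
                (Real.rpow_nonneg hu0.le _) ?_
              · have := Real.rpow_nonneg (by linarith : (0:ℝ) ≤ B + u) α
                linarith
              · have h5 : 0 ≤ -α * A := by nlinarith
                exact mul_nonneg h5 (Real.rpow_nonneg hu0.le _)
          _ = ((-α) * A) * u ^ (2 * α - 1 - γ) := by
              have c := rpow_collect3 hu0 α (α - 1) (-γ) (2 * α - 1 - γ) (by ring)
              calc u ^ α * (-α * A * u ^ (α - 1)) * u ^ (-γ)
                  = (-α * A) * (u ^ α * u ^ (α - 1) * u ^ (-γ)) := by ring
                _ = ((-α) * A) * u ^ (2 * α - 1 - γ) := by rw [c]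
      have h3 : ∀ u ∈ Ioi (0:ℝ) ∩ (∅ : Set ℝ),
          ((B + u) ^ α - u ^ α) * ((A + u) ^ α - u ^ α) * u ^ (-γ) ≤ (0:ℝ) :=
        fun u hu => absurd hu.2 (Set.notMem_empty u)
      have hg10 : ∀ u ∈ Ioc (0:ℝ) A, 0 ≤ u ^ (2 * α - γ) :=
        fun u hu => Real.rpow_nonneg hu.1.le _
      have hg20 : ∀ u ∈ Ioi A, 0 ≤ ((-α) * A) * u ^ (2 * α - 1 - γ) := by
        intro u hu
        have h5 : 0 ≤ (-α) * A := by nlinarith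
        exact mul_nonneg h5 (Real.rpow_nonneg (by linarith [mem_Ioi.1 hu]) _)
      have hg30 : ∀ u ∈ (∅ : Set ℝ), 0 ≤ (fun _ : ℝ => (0:ℝ)) u :=
        fun u hu => absurd hu (Set.notMem_empty u)
      have hint1 : IntegrableOn (fun u : ℝ => u ^ (2 * α - γ)) (Ioc 0 A) :=
        (int_Ioc_rpow (p := 2 * α - γ) (by linarith) hA).1
      have hint2 : IntegrableOn (fun u : ℝ => ((-α) * A) * u ^ (2 * α - 1 - γ)) (Ioi A) :=
        ((int_Ioi_rpow (p := 2 * α - 1 - γ) (by linarith) hA).1.const_mul _)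
      have key := integral_le_three measurableSet_Ioi measurableSet_Ioc measurableSet_Ioi
        MeasurableSet.empty hcov hf0 h1 h2 h3 hg10 hg20 hg30 hint1 hint2
        (integrableOn_empty)
      have v1 : (∫ u in Ioc (0:ℝ) A, u ^ (2 * α - γ)) =
          A ^ (2 * α - γ + 1) / (2 * α - γ + 1) :=
        (int_Ioc_rpow (p := 2 * α - γ) (by linarith) hA).2
      have v2 : (∫ u in Ioi A, ((-α) * A) * u ^ (2 * α - 1 - γ)) =
          ((-α) * A) * (-A ^ (2 * α - 1 - γ + 1) / (2 * α - 1 - γ + 1)) := by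
        rw [MeasureTheory.integral_const_mul,
          (int_Ioi_rpow (p := 2 * α - 1 - γ) (by linarith) hA).2]
      have t1 : A ^ (2 * α - γ + 1) / (2 * α - γ + 1) ≤ K3 * ((A / B) ^ W * B ^ W) := by
        apply term_step (a := W) hA hB hAB (by linarith) le_rfl
        apply le_of_eq
        have eE : 2 * α - γ + 1 = W := by rw [hW]; ring
        rw [show W - W = (0:ℝ) by ring, Real.rpow_zero, mul_one, hK3, eE]
        ring
      have t2 : ((-α) * A) * (-A ^ (2 * α - 1 - γ + 1) / (2 * α - 1 - γ + 1)) ≤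
          K4 * ((A / B) ^ W * B ^ W) := by
        apply term_step (a := W) hA hB hAB (by linarith) le_rfl
        apply le_of_eq
        have c1 : A * A ^ (2 * α - 1 - γ + 1) = A ^ W := mul_self_rpow hA _ _ (by rw [hW]; ring)
        have hden : γ - 2 * α ≠ 0 := by intro h; nlinarith
        have hden2 : 2 * α - 1 - γ + 1 ≠ 0 := by intro h; apply hden; linarith
        have hd : ((-α) * A) * (-A ^ (2 * α - 1 - γ + 1) / (2 * α - 1 - γ + 1)) =
            ((-α) / (γ - 2 * α)) * (A * A ^ (2 * α - 1 - γ + 1)) := by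
          field_simp
          ring_nf
          rw [show -(α * 2) + γ = -(α * 2 - γ) by ring, inv_neg]
          ring
        rw [show W - W = (0:ℝ) by ring, Real.rpow_zero, mul_one, hK4, hd, c1]
      calc (∫ u in Ioi (0:ℝ), ((B + u) ^ α - u ^ α) * ((A + u) ^ α - u ^ α) * u ^ (-γ))
          ≤ (∫ u in Ioc (0:ℝ) A, u ^ (2 * α - γ)) +
            (∫ u in Ioi A, ((-α) * A) * u ^ (2 * α - 1 - γ)) +
            ∫ _u in (∅ : Set ℝ), (0:ℝ) := key
        _ = A ^ (2 * α - γ + 1) / (2 * α - γ + 1) +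
            ((-α) * A) * (-A ^ (2 * α - 1 - γ + 1) / (2 * α - 1 - γ + 1)) := by
            rw [v1, v2, MeasureTheory.setIntegral_empty, add_zero]
        _ ≤ K3 * ((A / B) ^ W * B ^ W) + K4 * ((A / B) ^ W * B ^ W) := add_le_add t1 t2
    calc (∫ u in Ioo 0 A, (B - u) ^ α * (A - u) ^ α * u ^ (-γ)) +
        (∫ u in Ioi (0:ℝ), ((B + u) ^ α - u ^ α) * ((A + u) ^ α - u ^ α) * u ^ (-γ))
        ≤ (K1 * ((A / B) ^ W * B ^ W) + K2 * ((A / B) ^ W * B ^ W)) + (K3 * ((A / B) ^ W * B ^ W) + K4 * ((A / B) ^ W * B ^ W)) := add_le_add hI1 hI2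
      _ = (K1 + K2 + (K3 + K4)) * ((A / B) ^ W * B ^ W) := by ring
  -- ======================= CASE 0 ≤ α =======================
  · have hα1' : α ≤ 1 := hαlt1.le
    -- shared I₁ bound
    have HI1 : ∀ A B : ℝ, 0 < A → 2 * A ≤ B →
        (∫ u in Ioo 0 A, (B - u) ^ α * (A - u) ^ α * u ^ (-γ)) ≤
          (1 / (-γ + 1)) * (A ^ (1 + α - γ) * B ^ (2 * α + 1 - γ - (1 + α - γ))) := by
      intro A B hA h2AB
      have hB : 0 < B := by linarith
      have hcov : Ioo (0:ℝ) A ⊆ Ioc 0 A ∪ (∅ : Set ℝ) ∪ (∅ : Set ℝ) :=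
        fun u hu => Or.inl (Or.inl ⟨hu.1, hu.2.le⟩)
      have hf0 : ∀ u ∈ Ioo (0:ℝ) A, 0 ≤ (B - u) ^ α * (A - u) ^ α * u ^ (-γ) := by
        intro u hu
        exact mul_nonneg (mul_nonneg (Real.rpow_nonneg (by linarith [hu.2]) _)
          (Real.rpow_nonneg (by linarith [hu.2]) _)) (Real.rpow_nonneg hu.1.le _)
      have h1 : ∀ u ∈ Ioo (0:ℝ) A ∩ Ioc 0 A,
          (B - u) ^ α * (A - u) ^ α * u ^ (-γ) ≤ B ^ α * A ^ α * u ^ (-γ) := by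
        rintro u ⟨hu1, hu2⟩
        refine mul3_le ?_ ?_ le_rfl (Real.rpow_nonneg (by linarith [hu1.2]) _)
          (Real.rpow_nonneg hu1.1.le _) (Real.rpow_nonneg hB.le _)
          (Real.rpow_nonneg hA.le _)
        · exact Real.rpow_le_rpow (by linarith [hu1.2]) (by linarith [hu1.1]) hpos
        · exact Real.rpow_le_rpow (by linarith [hu1.2]) (by linarith [hu1.1]) hpos
      have hemp : ∀ u ∈ Ioo (0:ℝ) A ∩ (∅ : Set ℝ),
          (B - u) ^ α * (A - u) ^ α * u ^ (-γ) ≤ (0:ℝ) :=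
        fun u hu => absurd hu.2 (Set.notMem_empty u)
      have hg10 : ∀ u ∈ Ioc (0:ℝ) A, 0 ≤ B ^ α * A ^ α * u ^ (-γ) := by
        intro u hu
        exact mul_nonneg (mul_nonneg (Real.rpow_nonneg hB.le _)
          (Real.rpow_nonneg hA.le _)) (Real.rpow_nonneg hu.1.le _)
      have hg0 : ∀ u ∈ (∅ : Set ℝ), 0 ≤ (fun _ : ℝ => (0:ℝ)) u :=
        fun u hu => absurd hu (Set.notMem_empty u)
      have hint1 : IntegrableOn (fun u : ℝ => B ^ α * A ^ α * u ^ (-γ)) (Ioc 0 A) :=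
        ((int_Ioc_rpow (p := -γ) (by linarith) hA).1.const_mul _)
      have key := integral_le_three measurableSet_Ioo measurableSet_Ioc
        MeasurableSet.empty MeasurableSet.empty hcov hf0 h1 hemp hemp hg10 hg0 hg0
        hint1 integrableOn_empty integrableOn_empty
      have v1 : (∫ u in Ioc (0:ℝ) A, B ^ α * A ^ α * u ^ (-γ)) =
          B ^ α * A ^ α * (A ^ (-γ + 1) / (-γ + 1)) := by
        rw [MeasureTheory.integral_const_mul, (int_Ioc_rpow (p := -γ) (by linarith) hA).2]
      have cA : A ^ α * A ^ (-γ + 1) = A ^ (1 + α - γ) :=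
        rpow_collect2 hA _ _ _ (by ring)
      have eW : 2 * α + 1 - γ - (1 + α - γ) = α := by ring
      rw [eW]
      calc (∫ u in Ioo 0 A, (B - u) ^ α * (A - u) ^ α * u ^ (-γ))
          ≤ ((∫ u in Ioc (0:ℝ) A, B ^ α * A ^ α * u ^ (-γ)) +
            ∫ _u in (∅ : Set ℝ), (0:ℝ)) + ∫ _u in (∅ : Set ℝ), (0:ℝ) := key
        _ = B ^ α * A ^ α * (A ^ (-γ + 1) / (-γ + 1)) := by
            rw [v1, MeasureTheory.setIntegral_empty, add_zero, add_zero]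
        _ = B ^ α * (A ^ α * A ^ (-γ + 1)) / (-γ + 1) := by ring
        _ = B ^ α * A ^ (1 + α - γ) / (-γ + 1) := by rw [cA]
        _ = (1 / (-γ + 1)) * (A ^ (1 + α - γ) * B ^ α) := by ring
    have hKB1 : (0:ℝ) ≤ 1 / (-γ + 1) := by
      apply div_nonneg (by norm_num) (by linarith)
    -- shared nonnegativity of the second integrand
    have Hnn : ∀ A B : ℝ, 0 ≤ A → 0 ≤ B → ∀ u : ℝ, 0 < u →
        0 ≤ ((B + u) ^ α - u ^ α) * ((A + u) ^ α - u ^ α) * u ^ (-γ) := by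
      intro A B hA hB u hu
      have h1 : u ^ α ≤ (B + u) ^ α := Real.rpow_le_rpow hu.le (by linarith) hpos
      have h2 : u ^ α ≤ (A + u) ^ α := Real.rpow_le_rpow hu.le (by linarith) hpos
      exact mul_nonneg (mul_nonneg (by linarith) (by linarith)) (Real.rpow_nonneg hu.le _)
    -- shared pointwise tail bound (valid for all u > 0)
    have HTp : ∀ A B : ℝ, 0 < A → 0 < B → ∀ u : ℝ, 0 < u →
        ((B + u) ^ α - u ^ α) * ((A + u) ^ α - u ^ α) * u ^ (-γ) ≤
          ((α * B) * (α * A)) * u ^ (2 * α - 2 - γ) := by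
      intro A B hA hB u hu
      have hyB : 0 ≤ (A + u) ^ α - u ^ α :=
        sub_nonneg.2 (Real.rpow_le_rpow hu.le (by linarith) hpos)
      calc ((B + u) ^ α - u ^ α) * ((A + u) ^ α - u ^ α) * u ^ (-γ)
          ≤ (α * B * u ^ (α - 1)) * (α * A * u ^ (α - 1)) * u ^ (-γ) := by
            exact mul3_le (mvt_pos hpos hα1' hB.le hu) (mvt_pos hpos hα1' hA.le hu)
              le_rfl hyB (Real.rpow_nonneg hu.le _)
              (mul_nonneg (mul_nonneg hpos hB.le) (Real.rpow_nonneg hu.le _))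
              (mul_nonneg (mul_nonneg hpos hA.le) (Real.rpow_nonneg hu.le _))
        _ = ((α * B) * (α * A)) * u ^ (2 * α - 2 - γ) := by
            have c := rpow_collect3 hu (α - 1) (α - 1) (-γ) (2 * α - 2 - γ) (by ring)
            calc (α * B * u ^ (α - 1)) * (α * A * u ^ (α - 1)) * u ^ (-γ)
                = ((α * B) * (α * A)) * (u ^ (α - 1) * u ^ (α - 1) * u ^ (-γ)) := by ring
              _ = ((α * B) * (α * A)) * u ^ (2 * α - 2 - γ) := by rw [c]
    -- shared tail integral bound
    have HTv : ∀ A B : ℝ, 0 < A → 0 < B →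
        (∫ u in Ioi B, ((α * B) * (α * A)) * u ^ (2 * α - 2 - γ)) ≤
          (α * α / (1 + γ - 2 * α)) * (A ^ (1:ℝ) * B ^ (2 * α + 1 - γ - 1)) := by
      intro A B hA hB
      have hp : 2 * α - 2 - γ < -1 := by linarith
      have v : (∫ u in Ioi B, ((α * B) * (α * A)) * u ^ (2 * α - 2 - γ)) =
          ((α * B) * (α * A)) * (-B ^ (2 * α - 2 - γ + 1) / (2 * α - 2 - γ + 1)) := by
        rw [MeasureTheory.integral_const_mul, (int_Ioi_rpow hp hB).2]
      rw [v, Real.rpow_one]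
      apply le_of_eq
      have c1 : B * B ^ (2 * α - 2 - γ + 1) = B ^ (2 * α + 1 - γ - 1) :=
        mul_self_rpow hB _ _ (by ring)
      have hne : (2 * α - 2 - γ + 1 : ℝ) ≠ 0 := by intro h; linarith
      have hne2 : (1 + γ - 2 * α : ℝ) ≠ 0 := by intro h; linarith
      calc ((α * B) * (α * A)) * (-B ^ (2 * α - 2 - γ + 1) / (2 * α - 2 - γ + 1))
          = (α * α / (1 + γ - 2 * α)) * (A * (B * B ^ (2 * α - 2 - γ + 1))) := by
            field_simp
            ring_nf
            rw [show 1 - α * 2 + γ = -(-1 + α * 2 - γ) by ring, inv_neg]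
            ring
        _ = (α * α / (1 + γ - 2 * α)) * (A * B ^ (2 * α + 1 - γ - 1)) := by rw [c1]
    have hKT : (0:ℝ) ≤ α * α / (1 + γ - 2 * α) := by
      apply div_nonneg (mul_nonneg hpos hpos) (by linarith)
    -- shared mid pointwise bound, for 0 < u ≤ B
    have HM : ∀ A B : ℝ, 0 < A → 0 < B → ∀ u : ℝ, 0 < u → u ≤ B →
        ((B + u) ^ α - u ^ α) * ((A + u) ^ α - u ^ α) * u ^ (-γ) ≤
          ((2 * B) ^ α * (α * A)) * u ^ (α - 1 - γ) := by
      intro A B hA hB u hu huB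
      have hxB : (B + u) ^ α - u ^ α ≤ (2 * B) ^ α := by
        have h1 : (B + u) ^ α - u ^ α ≤ (B + u) ^ α :=
          sub_le_self _ (Real.rpow_nonneg hu.le _)
        have h2 : (B + u) ^ α ≤ (2 * B) ^ α :=
          Real.rpow_le_rpow (by linarith) (by linarith) hpos
        linarith
      have hyA : 0 ≤ (A + u) ^ α - u ^ α :=
        sub_nonneg.2 (Real.rpow_le_rpow hu.le (by linarith) hpos)
      calc ((B + u) ^ α - u ^ α) * ((A + u) ^ α - u ^ α) * u ^ (-γ)
          ≤ (2 * B) ^ α * (α * A * u ^ (α - 1)) * u ^ (-γ) := by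
            refine mul3_le hxB (mvt_pos hpos hα1' hA.le hu) le_rfl hyA
              (Real.rpow_nonneg hu.le _) (Real.rpow_nonneg (by linarith) _)
              (mul_nonneg (mul_nonneg hpos hA.le) (Real.rpow_nonneg hu.le _))
        _ = ((2 * B) ^ α * (α * A)) * u ^ (α - 1 - γ) := by
            have c := rpow_collect2 hu (α - 1) (-γ) (α - 1 - γ) (by ring)
            calc (2 * B) ^ α * (α * A * u ^ (α - 1)) * u ^ (-γ)
                = ((2 * B) ^ α * (α * A)) * (u ^ (α - 1) * u ^ (-γ)) := by ring
              _ = ((2 * B) ^ α * (α * A)) * u ^ (α - 1 - γ) := by rw [c]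
    have hemp2 : ∀ (A B : ℝ), ∀ u ∈ Ioi (0:ℝ) ∩ (∅ : Set ℝ),
        ((B + u) ^ α - u ^ α) * ((A + u) ^ α - u ^ α) * u ^ (-γ) ≤ (0:ℝ) :=
      fun A B u hu => absurd hu.2 (Set.notMem_empty u)
    have hg0 : ∀ u ∈ (∅ : Set ℝ), 0 ≤ (fun _ : ℝ => (0:ℝ)) u :=
      fun u hu => absurd hu (Set.notMem_empty u)
    have hgT0 : ∀ (A B : ℝ), 0 ≤ A → 0 < B → ∀ u ∈ Ioi B,
        0 ≤ ((α * B) * (α * A)) * u ^ (2 * α - 2 - γ) := by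
      intro A B hA hB u hu
      have hu0 : (0:ℝ) < u := lt_trans hB (mem_Ioi.1 hu)
      exact mul_nonneg (mul_nonneg (mul_nonneg hpos hB.le) (mul_nonneg hpos hA))
        (Real.rpow_nonneg hu0.le _)
    rcases lt_trichotomy α γ with hlt | heqc | hgt
    · -- α < γ
      refine ⟨1 + α - γ,
        1 / (-γ + 1) + (2 ^ α * 2 ^ α / (-γ + 1) +
          (2 ^ α * α / (γ - α) + α * α / (1 + γ - 2 * α))), by linarith, ?_, ?_⟩
      · have k1 : (0:ℝ) ≤ 2 ^ α * 2 ^ α / (-γ + 1) := by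
          apply div_nonneg (mul_nonneg h2a.le h2a.le) (by linarith)
        have k2 : (0:ℝ) ≤ 2 ^ α * α / (γ - α) := by
          apply div_nonneg (mul_nonneg h2a.le hpos) (by linarith)
        linarith [hKB1, hKT]
      intro A B hA h2AB
      have hB : 0 < B := by linarith
      have hAB : A ≤ B := by linarith
      have hI1 : (∫ u in Ioo 0 A, (B - u) ^ α * (A - u) ^ α * u ^ (-γ)) ≤
          (1 / (-γ + 1)) * ((A / B) ^ (1 + α - γ) * B ^ (2 * α + 1 - γ)) :=
        term_step (a := 1 + α - γ) hA hB hAB hKB1 le_rfl (HI1 A B hA h2AB)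
      have hI2 : (∫ u in Ioi (0:ℝ), ((B + u) ^ α - u ^ α) * ((A + u) ^ α - u ^ α) * u ^ (-γ)) ≤
          (2 ^ α * 2 ^ α / (-γ + 1)) * ((A / B) ^ (1 + α - γ) * B ^ (2 * α + 1 - γ)) +
          ((2 ^ α * α / (γ - α)) * ((A / B) ^ (1 + α - γ) * B ^ (2 * α + 1 - γ)) +
           (α * α / (1 + γ - 2 * α)) * ((A / B) ^ (1 + α - γ) * B ^ (2 * α + 1 - γ))) := by
        have hcov : Ioi (0:ℝ) ⊆ Ioc 0 A ∪ Ioc A B ∪ Ioi B := by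
          intro u hu
          rcases le_or_gt u A with h | h
          · exact Or.inl (Or.inl ⟨hu, h⟩)
          · rcases le_or_gt u B with h' | h'
            · exact Or.inl (Or.inr ⟨h, h'⟩)
            · exact Or.inr h'
        have h1 : ∀ u ∈ Ioi (0:ℝ) ∩ Ioc 0 A,
            ((B + u) ^ α - u ^ α) * ((A + u) ^ α - u ^ α) * u ^ (-γ) ≤
              ((2 * B) ^ α * (2 * A) ^ α) * u ^ (-γ) := by
          rintro u ⟨hu1, hu2⟩
          have hu0 : (0:ℝ) < u := hu1
          have hxB : (B + u) ^ α - u ^ α ≤ (2 * B) ^ α := by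
            have i1 : (B + u) ^ α - u ^ α ≤ (B + u) ^ α :=
              sub_le_self _ (Real.rpow_nonneg hu0.le _)
            have i2 : (B + u) ^ α ≤ (2 * B) ^ α :=
              Real.rpow_le_rpow (by linarith) (by linarith [hu2.2]) hpos
            linarith
          have hyA : (A + u) ^ α - u ^ α ≤ (2 * A) ^ α := by
            have i1 : (A + u) ^ α - u ^ α ≤ (A + u) ^ α :=
              sub_le_self _ (Real.rpow_nonneg hu0.le _)
            have i2 : (A + u) ^ α ≤ (2 * A) ^ α :=
              Real.rpow_le_rpow (by linarith) (by linarith [hu2.2]) hpos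
            linarith
          have hy0 : 0 ≤ (A + u) ^ α - u ^ α :=
            sub_nonneg.2 (Real.rpow_le_rpow hu0.le (by linarith) hpos)
          exact mul3_le hxB hyA le_rfl hy0 (Real.rpow_nonneg hu0.le _)
            (Real.rpow_nonneg (by linarith) _) (Real.rpow_nonneg (by linarith) _)
        have h2 : ∀ u ∈ Ioi (0:ℝ) ∩ Ioc A B,
            ((B + u) ^ α - u ^ α) * ((A + u) ^ α - u ^ α) * u ^ (-γ) ≤
              ((2 * B) ^ α * (α * A)) * u ^ (α - 1 - γ) :=
          fun u hu => HM A B hA hB u hu.1 hu.2.2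
        have h3 : ∀ u ∈ Ioi (0:ℝ) ∩ Ioi B,
            ((B + u) ^ α - u ^ α) * ((A + u) ^ α - u ^ α) * u ^ (-γ) ≤
              ((α * B) * (α * A)) * u ^ (2 * α - 2 - γ) :=
          fun u hu => HTp A B hA hB u hu.1
        have hg10 : ∀ u ∈ Ioc (0:ℝ) A, 0 ≤ ((2 * B) ^ α * (2 * A) ^ α) * u ^ (-γ) := by
          intro u hu
          exact mul_nonneg (mul_nonneg (Real.rpow_nonneg (by linarith) _)
            (Real.rpow_nonneg (by linarith) _)) (Real.rpow_nonneg hu.1.le _)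
        have hg20 : ∀ u ∈ Ioc A B, 0 ≤ ((2 * B) ^ α * (α * A)) * u ^ (α - 1 - γ) := by
          intro u hu
          have hu0 : (0:ℝ) < u := lt_trans hA hu.1
          exact mul_nonneg (mul_nonneg (Real.rpow_nonneg (by linarith) _)
            (mul_nonneg hpos hA.le)) (Real.rpow_nonneg hu0.le _)
        have hne1 : (α - 1 - γ : ℝ) ≠ -1 := by intro h; have : α = γ := by linarith
                                               linarith
        have hint1 : IntegrableOn (fun u : ℝ => ((2 * B) ^ α * (2 * A) ^ α) * u ^ (-γ))
            (Ioc 0 A) := ((int_Ioc_rpow (p := -γ) (by linarith) hA).1.const_mul _)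
        have hint2 : IntegrableOn (fun u : ℝ => ((2 * B) ^ α * (α * A)) * u ^ (α - 1 - γ))
            (Ioc A B) := ((int_Ioc_rpow' hne1 hA hAB).1.const_mul _)
        have hint3 : IntegrableOn (fun u : ℝ => ((α * B) * (α * A)) * u ^ (2 * α - 2 - γ))
            (Ioi B) := ((int_Ioi_rpow (p := 2 * α - 2 - γ) (by linarith) hB).1.const_mul _)
        have key := integral_le_three measurableSet_Ioi measurableSet_Ioc measurableSet_Ioc
          measurableSet_Ioi hcov (fun u hu => Hnn A B hA.le hB.le u hu) h1 h2 h3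
          hg10 hg20 (hgT0 A B hA.le hB) hint1 hint2 hint3
        have v1 : (∫ u in Ioc (0:ℝ) A, ((2 * B) ^ α * (2 * A) ^ α) * u ^ (-γ)) =
            ((2 * B) ^ α * (2 * A) ^ α) * (A ^ (-γ + 1) / (-γ + 1)) := by
          rw [MeasureTheory.integral_const_mul, (int_Ioc_rpow (p := -γ) (by linarith) hA).2]
        have v2 : (∫ u in Ioc A B, ((2 * B) ^ α * (α * A)) * u ^ (α - 1 - γ)) =
            ((2 * B) ^ α * (α * A)) *
              ((B ^ (α - 1 - γ + 1) - A ^ (α - 1 - γ + 1)) / (α - 1 - γ + 1)) := by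
          rw [MeasureTheory.integral_const_mul, (int_Ioc_rpow' hne1 hA hAB).2]
        have t1 : ((2 * B) ^ α * (2 * A) ^ α) * (A ^ (-γ + 1) / (-γ + 1)) ≤
            (2 ^ α * 2 ^ α / (-γ + 1)) * ((A / B) ^ (1 + α - γ) * B ^ (2 * α + 1 - γ)) := by
          apply term_step (a := 1 + α - γ) hA hB hAB
            (div_nonneg (mul_nonneg h2a.le h2a.le) (by linarith)) le_rfl
          apply le_of_eq
          rw [show (2 * α + 1 - γ - (1 + α - γ) : ℝ) = α by ring,
            Real.mul_rpow (by norm_num) hB.le, Real.mul_rpow (by norm_num) hA.le]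
          have c := rpow_collect2 hA α (-γ + 1) (1 + α - γ) (by ring)
          calc 2 ^ α * B ^ α * (2 ^ α * A ^ α) * (A ^ (-γ + 1) / (-γ + 1))
              = (2 ^ α * 2 ^ α / (-γ + 1)) * (A ^ α * A ^ (-γ + 1) * B ^ α) := by ring
            _ = (2 ^ α * 2 ^ α / (-γ + 1)) * (A ^ (1 + α - γ) * B ^ α) := by rw [c]
        have t2 : ((2 * B) ^ α * (α * A)) *
              ((B ^ (α - 1 - γ + 1) - A ^ (α - 1 - γ + 1)) / (α - 1 - γ + 1)) ≤
            (2 ^ α * α / (γ - α)) * ((A / B) ^ (1 + α - γ) * B ^ (2 * α + 1 - γ)) := by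
          apply term_step (a := 1 + α - γ) hA hB hAB
            (div_nonneg (mul_nonneg h2a.le hpos) (by linarith)) le_rfl
          have hga : (0:ℝ) < γ - α := by linarith
          have hq : (α - 1 - γ + 1 : ℝ) ≠ 0 := by intro h; have : α = γ := by linarith
                                                  linarith
          have step : (B ^ (α - 1 - γ + 1) - A ^ (α - 1 - γ + 1)) / (α - 1 - γ + 1) ≤
              A ^ (α - 1 - γ + 1) / (γ - α) := by
            have e1 : (B ^ (α - 1 - γ + 1) - A ^ (α - 1 - γ + 1)) / (α - 1 - γ + 1) =
                (A ^ (α - 1 - γ + 1) - B ^ (α - 1 - γ + 1)) / (γ - α) := by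
              rw [div_eq_div_iff hq hga.ne']; ring
            rw [e1]
            apply (div_le_div_iff_of_pos_right hga).2
            have := Real.rpow_nonneg hB.le (α - 1 - γ + 1)
            linarith
          have hC0 : (0:ℝ) ≤ (2 * B) ^ α * (α * A) :=
            mul_nonneg (Real.rpow_nonneg (by linarith) _) (mul_nonneg hpos hA.le)
          calc ((2 * B) ^ α * (α * A)) *
                ((B ^ (α - 1 - γ + 1) - A ^ (α - 1 - γ + 1)) / (α - 1 - γ + 1))
              ≤ ((2 * B) ^ α * (α * A)) * (A ^ (α - 1 - γ + 1) / (γ - α)) :=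
                mul_le_mul_of_nonneg_left step hC0
            _ = (2 ^ α * α / (γ - α)) * (A ^ (1 + α - γ) * B ^ (2 * α + 1 - γ - (1 + α - γ))) := by
                rw [show (2 * α + 1 - γ - (1 + α - γ) : ℝ) = α by ring,
                  Real.mul_rpow (by norm_num) hB.le]
                have c1 : A * A ^ (α - 1 - γ + 1) = A ^ (1 + α - γ) :=
                  mul_self_rpow hA _ _ (by ring)
                calc 2 ^ α * B ^ α * (α * A) * (A ^ (α - 1 - γ + 1) / (γ - α))
                    = (2 ^ α * α / (γ - α)) * (A * A ^ (α - 1 - γ + 1) * B ^ α) := by ring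
                  _ = (2 ^ α * α / (γ - α)) * (A ^ (1 + α - γ) * B ^ α) := by rw [c1]
        have t3 : (∫ u in Ioi B, ((α * B) * (α * A)) * u ^ (2 * α - 2 - γ)) ≤
            (α * α / (1 + γ - 2 * α)) * ((A / B) ^ (1 + α - γ) * B ^ (2 * α + 1 - γ)) :=
          term_step (a := (1:ℝ)) hA hB hAB hKT (by linarith) (HTv A B hA hB)
        calc (∫ u in Ioi (0:ℝ), ((B + u) ^ α - u ^ α) * ((A + u) ^ α - u ^ α) * u ^ (-γ))
            ≤ (∫ u in Ioc (0:ℝ) A, ((2 * B) ^ α * (2 * A) ^ α) * u ^ (-γ)) +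
              (∫ u in Ioc A B, ((2 * B) ^ α * (α * A)) * u ^ (α - 1 - γ)) +
              ∫ u in Ioi B, ((α * B) * (α * A)) * u ^ (2 * α - 2 - γ) := key
          _ ≤ (2 ^ α * 2 ^ α / (-γ + 1)) * ((A / B) ^ (1 + α - γ) * B ^ (2 * α + 1 - γ)) +
              ((2 ^ α * α / (γ - α)) * ((A / B) ^ (1 + α - γ) * B ^ (2 * α + 1 - γ)) +
               (α * α / (1 + γ - 2 * α)) * ((A / B) ^ (1 + α - γ) * B ^ (2 * α + 1 - γ))) := by
              rw [v1, v2]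
              have := add_le_add (add_le_add t1 t2) t3
              linarith
      calc (∫ u in Ioo 0 A, (B - u) ^ α * (A - u) ^ α * u ^ (-γ)) +
          (∫ u in Ioi (0:ℝ), ((B + u) ^ α - u ^ α) * ((A + u) ^ α - u ^ α) * u ^ (-γ))
          ≤ (1 / (-γ + 1)) * ((A / B) ^ (1 + α - γ) * B ^ (2 * α + 1 - γ)) +
            ((2 ^ α * 2 ^ α / (-γ + 1)) * ((A / B) ^ (1 + α - γ) * B ^ (2 * α + 1 - γ)) +
             ((2 ^ α * α / (γ - α)) * ((A / B) ^ (1 + α - γ) * B ^ (2 * α + 1 - γ)) +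
              (α * α / (1 + γ - 2 * α)) * ((A / B) ^ (1 + α - γ) * B ^ (2 * α + 1 - γ)))) :=
            add_le_add hI1 hI2
        _ = (1 / (-γ + 1) + (2 ^ α * 2 ^ α / (-γ + 1) +
            (2 ^ α * α / (γ - α) + α * α / (1 + γ - 2 * α)))) *
            ((A / B) ^ (1 + α - γ) * B ^ (2 * α + 1 - γ)) := by ring
    · -- α = γ
      subst heqc
      have he : (-1:ℝ) < (α - 1) * (3 / 4) + -α := by linarith
      have he1 : (0:ℝ) < (α - 1) * (3 / 4) + -α + 1 := by linarith
      have ha34 : (0:ℝ) ≤ α ^ ((3:ℝ)/4) := Real.rpow_nonneg hpos _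
      have hKmid : (0:ℝ) ≤ 2 ^ α * α ^ ((3:ℝ)/4) / ((α - 1) * (3 / 4) + -α + 1) :=
        div_nonneg (mul_nonneg h2a.le ha34) he1.le
      refine ⟨(α + 3) / 4,
        1 / (-α + 1) + (2 ^ α * α ^ ((3:ℝ)/4) / ((α - 1) * (3 / 4) + -α + 1) +
          α * α / (1 + α - 2 * α)), by linarith, by linarith [hKB1, hKT], ?_⟩
      intro A B hA h2AB
      have hB : 0 < B := by linarith
      have hAB : A ≤ B := by linarith
      have hI1 : (∫ u in Ioo 0 A, (B - u) ^ α * (A - u) ^ α * u ^ (-α)) ≤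
          (1 / (-α + 1)) * ((A / B) ^ ((α + 3) / 4) * B ^ (2 * α + 1 - α)) :=
        term_step (a := 1 + α - α) hA hB hAB hKB1 (by linarith) (HI1 A B hA h2AB)
      have hI2 : (∫ u in Ioi (0:ℝ), ((B + u) ^ α - u ^ α) * ((A + u) ^ α - u ^ α) * u ^ (-α)) ≤
          (2 ^ α * α ^ ((3:ℝ)/4) / ((α - 1) * (3 / 4) + -α + 1)) *
            ((A / B) ^ ((α + 3) / 4) * B ^ (2 * α + 1 - α)) +
          (α * α / (1 + α - 2 * α)) * ((A / B) ^ ((α + 3) / 4) * B ^ (2 * α + 1 - α)) := by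
        have hcov : Ioi (0:ℝ) ⊆ Ioc 0 B ∪ Ioi B ∪ (∅ : Set ℝ) := by
          intro u hu
          rcases le_or_gt u B with h | h
          · exact Or.inl (Or.inl ⟨hu, h⟩)
          · exact Or.inl (Or.inr h)
        have h1 : ∀ u ∈ Ioi (0:ℝ) ∩ Ioc 0 B,
            ((B + u) ^ α - u ^ α) * ((A + u) ^ α - u ^ α) * u ^ (-α) ≤
              ((2 * B) ^ α * ((A ^ α) ^ ((4:ℝ)⁻¹) * (α * A) ^ ((3:ℝ)/4))) *
                u ^ ((α - 1) * (3 / 4) + -α) := by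
          rintro u ⟨hu1, hu2⟩
          have hu0 : (0:ℝ) < u := hu1
          have hxB : (B + u) ^ α - u ^ α ≤ (2 * B) ^ α := by
            have i1 : (B + u) ^ α - u ^ α ≤ (B + u) ^ α :=
              sub_le_self _ (Real.rpow_nonneg hu0.le _)
            have i2 : (B + u) ^ α ≤ (2 * B) ^ α :=
              Real.rpow_le_rpow (by linarith) (by linarith [hu2.2]) hpos
            linarith
          have hy0 : 0 ≤ (A + u) ^ α - u ^ α :=
            sub_nonneg.2 (Real.rpow_le_rpow hu0.le (by linarith) hpos)
          have hya : (A + u) ^ α - u ^ α ≤ A ^ α := by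
            have := rpow_sub_le hpos hα1' hA.le hu0.le
            linarith
          have hym : (A + u) ^ α - u ^ α ≤ α * A * u ^ (α - 1) :=
            mvt_pos hpos hα1' hA.le hu0
          have hyi : (A + u) ^ α - u ^ α ≤
              (A ^ α) ^ ((4:ℝ)⁻¹) * (α * A * u ^ (α - 1)) ^ ((3:ℝ)/4) :=
            interp_le hy0 hya hym
          have hsplit : (α * A * u ^ (α - 1)) ^ ((3:ℝ)/4) =
              (α * A) ^ ((3:ℝ)/4) * u ^ ((α - 1) * (3 / 4)) := by
            rw [Real.mul_rpow (mul_nonneg hpos hA.le) (Real.rpow_nonneg hu0.le _),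
              ← Real.rpow_mul hu0.le]
          calc ((B + u) ^ α - u ^ α) * ((A + u) ^ α - u ^ α) * u ^ (-α)
              ≤ (2 * B) ^ α * ((A ^ α) ^ ((4:ℝ)⁻¹) * (α * A * u ^ (α - 1)) ^ ((3:ℝ)/4)) *
                  u ^ (-α) := by
                refine mul3_le hxB hyi le_rfl hy0 (Real.rpow_nonneg hu0.le _)
                  (Real.rpow_nonneg (by linarith) _)
                  (mul_nonneg (Real.rpow_nonneg (Real.rpow_nonneg hA.le _) _)
                    (Real.rpow_nonneg (mul_nonneg (mul_nonneg hpos hA.le)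
                      (Real.rpow_nonneg hu0.le _)) _))
            _ = ((2 * B) ^ α * ((A ^ α) ^ ((4:ℝ)⁻¹) * (α * A) ^ ((3:ℝ)/4))) *
                  u ^ ((α - 1) * (3 / 4) + -α) := by
                rw [hsplit]
                have c := rpow_collect2 hu0 ((α - 1) * (3 / 4)) (-α)
                  ((α - 1) * (3 / 4) + -α) rfl
                calc (2 * B) ^ α * ((A ^ α) ^ ((4:ℝ)⁻¹) *
                      ((α * A) ^ ((3:ℝ)/4) * u ^ ((α - 1) * (3 / 4)))) * u ^ (-α)
                    = ((2 * B) ^ α * ((A ^ α) ^ ((4:ℝ)⁻¹) * (α * A) ^ ((3:ℝ)/4))) *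
                      (u ^ ((α - 1) * (3 / 4)) * u ^ (-α)) := by ring
                  _ = _ := by rw [c]
        have h2 : ∀ u ∈ Ioi (0:ℝ) ∩ Ioi B,
            ((B + u) ^ α - u ^ α) * ((A + u) ^ α - u ^ α) * u ^ (-α) ≤
              ((α * B) * (α * A)) * u ^ (2 * α - 2 - α) :=
          fun u hu => HTp A B hA hB u hu.1
        have hg10 : ∀ u ∈ Ioc (0:ℝ) B,
            0 ≤ ((2 * B) ^ α * ((A ^ α) ^ ((4:ℝ)⁻¹) * (α * A) ^ ((3:ℝ)/4))) *
              u ^ ((α - 1) * (3 / 4) + -α) := by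
          intro u hu
          exact mul_nonneg (mul_nonneg (Real.rpow_nonneg (by linarith) _)
            (mul_nonneg (Real.rpow_nonneg (Real.rpow_nonneg hA.le _) _)
              (Real.rpow_nonneg (mul_nonneg hpos hA.le) _)))
            (Real.rpow_nonneg hu.1.le _)
        have hint1 : IntegrableOn (fun u : ℝ =>
            ((2 * B) ^ α * ((A ^ α) ^ ((4:ℝ)⁻¹) * (α * A) ^ ((3:ℝ)/4))) *
              u ^ ((α - 1) * (3 / 4) + -α)) (Ioc 0 B) :=
          ((int_Ioc_rpow he hB).1.const_mul _)
        have hint2 : IntegrableOn (fun u : ℝ => ((α * B) * (α * A)) * u ^ (2 * α - 2 - α))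
            (Ioi B) := ((int_Ioi_rpow (p := 2 * α - 2 - α) (by linarith) hB).1.const_mul _)
        have key := integral_le_three measurableSet_Ioi measurableSet_Ioc measurableSet_Ioi
          MeasurableSet.empty hcov (fun u hu => Hnn A B hA.le hB.le u hu) h1 h2 (hemp2 A B)
          hg10 (hgT0 A B hA.le hB) hg0 hint1 hint2 integrableOn_empty
        have v1 : (∫ u in Ioc (0:ℝ) B,
            ((2 * B) ^ α * ((A ^ α) ^ ((4:ℝ)⁻¹) * (α * A) ^ ((3:ℝ)/4))) *
              u ^ ((α - 1) * (3 / 4) + -α)) =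
            ((2 * B) ^ α * ((A ^ α) ^ ((4:ℝ)⁻¹) * (α * A) ^ ((3:ℝ)/4))) *
              (B ^ ((α - 1) * (3 / 4) + -α + 1) / ((α - 1) * (3 / 4) + -α + 1)) := by
          rw [MeasureTheory.integral_const_mul, (int_Ioc_rpow he hB).2]
        have t1 : ((2 * B) ^ α * ((A ^ α) ^ ((4:ℝ)⁻¹) * (α * A) ^ ((3:ℝ)/4))) *
              (B ^ ((α - 1) * (3 / 4) + -α + 1) / ((α - 1) * (3 / 4) + -α + 1)) ≤
            (2 ^ α * α ^ ((3:ℝ)/4) / ((α - 1) * (3 / 4) + -α + 1)) *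
              ((A / B) ^ ((α + 3) / 4) * B ^ (2 * α + 1 - α)) := by
          apply term_step (a := (α + 3) / 4) hA hB hAB hKmid le_rfl
          apply le_of_eq
          rw [Real.mul_rpow (by norm_num) hB.le,
            Real.mul_rpow hpos hA.le, ← Real.rpow_mul hA.le]
          have cA : A ^ (α * (4:ℝ)⁻¹) * A ^ ((3:ℝ)/4) = A ^ ((α + 3) / 4) :=
            rpow_collect2 hA _ _ _ (by ring)
          have cB : B ^ α * B ^ ((α - 1) * (3 / 4) + -α + 1) =
              B ^ (2 * α + 1 - α - (α + 3) / 4) :=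
            rpow_collect2 hB _ _ _ (by ring)
          calc 2 ^ α * B ^ α * (A ^ (α * (4:ℝ)⁻¹) * (α ^ ((3:ℝ)/4) * A ^ ((3:ℝ)/4))) *
                (B ^ ((α - 1) * (3 / 4) + -α + 1) / ((α - 1) * (3 / 4) + -α + 1))
              = (2 ^ α * α ^ ((3:ℝ)/4) / ((α - 1) * (3 / 4) + -α + 1)) *
                ((A ^ (α * (4:ℝ)⁻¹) * A ^ ((3:ℝ)/4)) *
                  (B ^ α * B ^ ((α - 1) * (3 / 4) + -α + 1))) := by ring
            _ = _ := by rw [cA, cB]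
        have t2 : (∫ u in Ioi B, ((α * B) * (α * A)) * u ^ (2 * α - 2 - α)) ≤
            (α * α / (1 + α - 2 * α)) * ((A / B) ^ ((α + 3) / 4) * B ^ (2 * α + 1 - α)) :=
          term_step (a := (1:ℝ)) hA hB hAB hKT (by linarith) (HTv A B hA hB)
        calc (∫ u in Ioi (0:ℝ), ((B + u) ^ α - u ^ α) * ((A + u) ^ α - u ^ α) * u ^ (-α))
            ≤ (∫ u in Ioc (0:ℝ) B,
                ((2 * B) ^ α * ((A ^ α) ^ ((4:ℝ)⁻¹) * (α * A) ^ ((3:ℝ)/4))) *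
                  u ^ ((α - 1) * (3 / 4) + -α)) +
              (∫ u in Ioi B, ((α * B) * (α * A)) * u ^ (2 * α - 2 - α)) +
              ∫ _u in (∅ : Set ℝ), (0:ℝ) := key
          _ ≤ _ := by
              rw [MeasureTheory.setIntegral_empty, add_zero, v1]
              exact add_le_add t1 t2
      calc (∫ u in Ioo 0 A, (B - u) ^ α * (A - u) ^ α * u ^ (-α)) +
          (∫ u in Ioi (0:ℝ), ((B + u) ^ α - u ^ α) * ((A + u) ^ α - u ^ α) * u ^ (-α))
          ≤ (1 / (-α + 1)) * ((A / B) ^ ((α + 3) / 4) * B ^ (2 * α + 1 - α)) +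
            ((2 ^ α * α ^ ((3:ℝ)/4) / ((α - 1) * (3 / 4) + -α + 1)) *
              ((A / B) ^ ((α + 3) / 4) * B ^ (2 * α + 1 - α)) +
             (α * α / (1 + α - 2 * α)) * ((A / B) ^ ((α + 3) / 4) * B ^ (2 * α + 1 - α))) :=
            add_le_add hI1 hI2
        _ = (1 / (-α + 1) + (2 ^ α * α ^ ((3:ℝ)/4) / ((α - 1) * (3 / 4) + -α + 1) +
            α * α / (1 + α - 2 * α))) *
            ((A / B) ^ ((α + 3) / 4) * B ^ (2 * α + 1 - α)) := by ring
    · -- γ < α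
      have hKmidA : (0:ℝ) ≤ 2 ^ α * α / (α - 1 - γ + 1) :=
        div_nonneg (mul_nonneg h2a.le hpos) (by linarith)
      refine ⟨1, 1 / (-γ + 1) + (2 ^ α * α / (α - 1 - γ + 1) + α * α / (1 + γ - 2 * α)),
        by linarith, by linarith [hKB1, hKT], ?_⟩
      intro A B hA h2AB
      have hB : 0 < B := by linarith
      have hAB : A ≤ B := by linarith
      have hI1 : (∫ u in Ioo 0 A, (B - u) ^ α * (A - u) ^ α * u ^ (-γ)) ≤
          (1 / (-γ + 1)) * ((A / B) ^ (1:ℝ) * B ^ (2 * α + 1 - γ)) :=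
        term_step (a := 1 + α - γ) hA hB hAB hKB1 (by linarith) (HI1 A B hA h2AB)
      have hI2 : (∫ u in Ioi (0:ℝ), ((B + u) ^ α - u ^ α) * ((A + u) ^ α - u ^ α) * u ^ (-γ)) ≤
          (2 ^ α * α / (α - 1 - γ + 1)) * ((A / B) ^ (1:ℝ) * B ^ (2 * α + 1 - γ)) +
          (α * α / (1 + γ - 2 * α)) * ((A / B) ^ (1:ℝ) * B ^ (2 * α + 1 - γ)) := by
        have hcov : Ioi (0:ℝ) ⊆ Ioc 0 B ∪ Ioi B ∪ (∅ : Set ℝ) := by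
          intro u hu
          rcases le_or_gt u B with h | h
          · exact Or.inl (Or.inl ⟨hu, h⟩)
          · exact Or.inl (Or.inr h)
        have h1 : ∀ u ∈ Ioi (0:ℝ) ∩ Ioc 0 B,
            ((B + u) ^ α - u ^ α) * ((A + u) ^ α - u ^ α) * u ^ (-γ) ≤
              ((2 * B) ^ α * (α * A)) * u ^ (α - 1 - γ) :=
          fun u hu => HM A B hA hB u hu.1 hu.2.2
        have h2 : ∀ u ∈ Ioi (0:ℝ) ∩ Ioi B,
            ((B + u) ^ α - u ^ α) * ((A + u) ^ α - u ^ α) * u ^ (-γ) ≤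
              ((α * B) * (α * A)) * u ^ (2 * α - 2 - γ) :=
          fun u hu => HTp A B hA hB u hu.1
        have hg10 : ∀ u ∈ Ioc (0:ℝ) B, 0 ≤ ((2 * B) ^ α * (α * A)) * u ^ (α - 1 - γ) := by
          intro u hu
          exact mul_nonneg (mul_nonneg (Real.rpow_nonneg (by linarith) _)
            (mul_nonneg hpos hA.le)) (Real.rpow_nonneg hu.1.le _)
        have hint1 : IntegrableOn (fun u : ℝ => ((2 * B) ^ α * (α * A)) * u ^ (α - 1 - γ))
            (Ioc 0 B) := ((int_Ioc_rpow (p := α - 1 - γ) (by linarith) hB).1.const_mul _)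
        have hint2 : IntegrableOn (fun u : ℝ => ((α * B) * (α * A)) * u ^ (2 * α - 2 - γ))
            (Ioi B) := ((int_Ioi_rpow (p := 2 * α - 2 - γ) (by linarith) hB).1.const_mul _)
        have key := integral_le_three measurableSet_Ioi measurableSet_Ioc measurableSet_Ioi
          MeasurableSet.empty hcov (fun u hu => Hnn A B hA.le hB.le u hu) h1 h2 (hemp2 A B)
          hg10 (hgT0 A B hA.le hB) hg0 hint1 hint2 integrableOn_empty
        have v1 : (∫ u in Ioc (0:ℝ) B, ((2 * B) ^ α * (α * A)) * u ^ (α - 1 - γ)) =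
            ((2 * B) ^ α * (α * A)) * (B ^ (α - 1 - γ + 1) / (α - 1 - γ + 1)) := by
          rw [MeasureTheory.integral_const_mul,
            (int_Ioc_rpow (p := α - 1 - γ) (by linarith) hB).2]
        have t1 : ((2 * B) ^ α * (α * A)) * (B ^ (α - 1 - γ + 1) / (α - 1 - γ + 1)) ≤
            (2 ^ α * α / (α - 1 - γ + 1)) * ((A / B) ^ (1:ℝ) * B ^ (2 * α + 1 - γ)) := by
          apply term_step (a := (1:ℝ)) hA hB hAB hKmidA le_rfl
          rw [Real.rpow_one]
          apply le_of_eq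
          rw [Real.mul_rpow (by norm_num) hB.le]
          have c := rpow_collect2 hB α (α - 1 - γ + 1) (2 * α + 1 - γ - 1) (by ring)
          calc 2 ^ α * B ^ α * (α * A) * (B ^ (α - 1 - γ + 1) / (α - 1 - γ + 1))
              = (2 ^ α * α / (α - 1 - γ + 1)) * (A * (B ^ α * B ^ (α - 1 - γ + 1))) := by ring
            _ = (2 ^ α * α / (α - 1 - γ + 1)) * (A * B ^ (2 * α + 1 - γ - 1)) := by rw [c]
        have t2 : (∫ u in Ioi B, ((α * B) * (α * A)) * u ^ (2 * α - 2 - γ)) ≤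
            (α * α / (1 + γ - 2 * α)) * ((A / B) ^ (1:ℝ) * B ^ (2 * α + 1 - γ)) :=
          term_step (a := (1:ℝ)) hA hB hAB hKT le_rfl (HTv A B hA hB)
        calc (∫ u in Ioi (0:ℝ), ((B + u) ^ α - u ^ α) * ((A + u) ^ α - u ^ α) * u ^ (-γ))
            ≤ (∫ u in Ioc (0:ℝ) B, ((2 * B) ^ α * (α * A)) * u ^ (α - 1 - γ)) +
              (∫ u in Ioi B, ((α * B) * (α * A)) * u ^ (2 * α - 2 - γ)) +
              ∫ _u in (∅ : Set ℝ), (0:ℝ) := key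
          _ ≤ _ := by
              rw [MeasureTheory.setIntegral_empty, add_zero, v1]
              exact add_le_add t1 t2
      calc (∫ u in Ioo 0 A, (B - u) ^ α * (A - u) ^ α * u ^ (-γ)) +
          (∫ u in Ioi (0:ℝ), ((B + u) ^ α - u ^ α) * ((A + u) ^ α - u ^ α) * u ^ (-γ))
          ≤ (1 / (-γ + 1)) * ((A / B) ^ (1:ℝ) * B ^ (2 * α + 1 - γ)) +
            ((2 ^ α * α / (α - 1 - γ + 1)) * ((A / B) ^ (1:ℝ) * B ^ (2 * α + 1 - γ)) +
             (α * α / (1 + γ - 2 * α)) * ((A / B) ^ (1:ℝ) * B ^ (2 * α + 1 - γ))) :=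
            add_le_add hI1 hI2
        _ = (1 / (-γ + 1) + (2 ^ α * α / (α - 1 - γ + 1) + α * α / (1 + γ - 2 * α))) *
            ((A / B) ^ (1:ℝ) * B ^ (2 * α + 1 - γ)) := by ring

lemma ratio_id {n m s t κ H : ℝ} (hn : 0 < n) (hm : 0 < m) (hs : 0 < s) (ht : 0 < t) :
    (n * s / (m * t)) ^ κ * (m * t) ^ (2 * H) =
      ((s / t) ^ κ * t ^ (2 * H)) * ((n / m) ^ (κ - H) * (n ^ H * m ^ H)) := by
  have e1 : n * s / (m * t) = n / m * (s / t) := by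
    rw [div_mul_div_comm]
  rw [e1, Real.mul_rpow (by positivity) (by positivity), Real.mul_rpow hm.le ht.le]
  have e2 : (n / m) ^ κ * m ^ (2 * H) = (n / m) ^ (κ - H) * (n ^ H * m ^ H) := by
    rw [Real.div_rpow hn.le hm.le, Real.div_rpow hn.le hm.le,
      Real.rpow_sub hn, Real.rpow_sub hm, show 2 * H = H + H by ring, Real.rpow_add hm]
    have h1 : m ^ κ ≠ 0 := (Real.rpow_pos_of_pos hm κ).ne'
    have h2 : m ^ H ≠ 0 := (Real.rpow_pos_of_pos hm H).ne'
    have h3 : n ^ H ≠ 0 := (Real.rpow_pos_of_pos hn H).ne'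
    field_simp
  calc (n / m) ^ κ * (s / t) ^ κ * (m ^ (2 * H) * t ^ (2 * H))
      = ((s / t) ^ κ * t ^ (2 * H)) * ((n / m) ^ κ * m ^ (2 * H)) := by ring
    _ = _ := by rw [e2]

set_option maxHeartbeats 1000000 in
theorem gfbm_stmt14 (α γ H c s t : ℝ) (hγ0 : 0 ≤ γ) (hγ1 : γ < 1)
    (hα0 : -(1 / 2) + γ / 2 < α) (hα1 : α < 1 / 2 + γ / 2)
    (hH : H = α - γ / 2 + 1 / 2) (hs : 0 < s) (hst : s < t)
    (Ψ : ℝ → ℝ → ℝ)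
    (hΨ : ∀ a b : ℝ, 0 ≤ a → a ≤ b →
      Ψ a b = c ^ 2 * (∫ u in Set.Ioo 0 a, (b - u) ^ α * (a - u) ^ α * u ^ (-γ))
        + c ^ 2 * ∫ u in Set.Ioi (0 : ℝ),
            ((b + u) ^ α - u ^ α) * ((a + u) ^ α - u ^ α) * u ^ (-γ)) :
    ∀ n m : ℕ → ℝ, (∀ k, 0 < n k) → (∀ k, 0 < m k) →
      Tendsto n atTop atTop → Tendsto (fun k => m k / n k) atTop atTop →
      Tendsto (fun k => Ψ (n k * s) (m k * t) / ((n k) ^ H * (m k) ^ H))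
        atTop (nhds 0) := by
  intro n m hn hm hnat hmn
  obtain ⟨κ, K, hκH0, hK0, hkey⟩ := gfbm_key α γ hγ0 hγ1 hα0 hα1
  have ht : 0 < t := lt_trans hs hst
  have hc2 : (0:ℝ) ≤ c ^ 2 := sq_nonneg c
  have hκH : H < κ := by rw [hH]; exact hκH0
  have hev : ∀ᶠ k in atTop, 2 * s / t ≤ m k / n k := hmn.eventually_ge_atTop _
  set C : ℝ := c ^ 2 * K * ((s / t) ^ κ * t ^ (2 * H)) with hC
  have hC0 : 0 ≤ C := by
    rw [hC]
    exact mul_nonneg (mul_nonneg hc2 hK0)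
      (mul_nonneg (Real.rpow_nonneg (by positivity) _) (Real.rpow_nonneg ht.le _))
  have hub : ∀ᶠ k in atTop, Ψ (n k * s) (m k * t) / ((n k) ^ H * (m k) ^ H) ≤
      C * (n k / m k) ^ (κ - H) := by
    filter_upwards [hev] with k hk
    have hnk := hn k
    have hmk := hm k
    have hA : 0 < n k * s := mul_pos hnk hs
    rw [div_le_div_iff₀ ht hnk] at hk
    have h2AB : 2 * (n k * s) ≤ m k * t := by linarith
    have hAB : n k * s ≤ m k * t := by linarith
    have hden : 0 < (n k) ^ H * (m k) ^ H :=
      mul_pos (Real.rpow_pos_of_pos hnk H) (Real.rpow_pos_of_pos hmk H)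
    rw [hΨ _ _ hA.le hAB, div_le_iff₀ hden]
    have hbd := hkey (n k * s) (m k * t) hA h2AB
    have hmul := mul_le_mul_of_nonneg_left hbd hc2
    rw [mul_add] at hmul
    refine hmul.trans (le_of_eq ?_)
    rw [show (2 * α + 1 - γ : ℝ) = 2 * H by rw [hH]; ring, ratio_id hnk hmk hs ht, hC]
    ring
  have hlb : ∀ᶠ k in atTop, 0 ≤ Ψ (n k * s) (m k * t) / ((n k) ^ H * (m k) ^ H) := by
    filter_upwards [hev] with k hk
    have hnk := hn k
    have hmk := hm k
    have hA : 0 < n k * s := mul_pos hnk hs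
    rw [div_le_div_iff₀ ht hnk] at hk
    have hAB : n k * s ≤ m k * t := by nlinarith
    have hden : 0 < (n k) ^ H * (m k) ^ H :=
      mul_pos (Real.rpow_pos_of_pos hnk H) (Real.rpow_pos_of_pos hmk H)
    rw [hΨ _ _ hA.le hAB]
    apply div_nonneg _ hden.le
    have hI1 : 0 ≤ ∫ u in Set.Ioo 0 (n k * s),
        (m k * t - u) ^ α * (n k * s - u) ^ α * u ^ (-γ) := by
      apply MeasureTheory.setIntegral_nonneg measurableSet_Ioo
      intro u hu
      exact mul_nonneg (mul_nonneg (Real.rpow_nonneg (by linarith [hu.2]) _)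
        (Real.rpow_nonneg (by linarith [hu.2]) _)) (Real.rpow_nonneg hu.1.le _)
    have hI2 : 0 ≤ ∫ u in Set.Ioi (0:ℝ),
        ((m k * t + u) ^ α - u ^ α) * ((n k * s + u) ^ α - u ^ α) * u ^ (-γ) := by
      apply MeasureTheory.setIntegral_nonneg measurableSet_Ioi
      intro u hu
      have hu0 : (0:ℝ) < u := hu
      apply mul_nonneg _ (Real.rpow_nonneg hu0.le _)
      rcases le_or_gt 0 α with hpos | hneg
      · have h1 : u ^ α ≤ (m k * t + u) ^ α :=
          Real.rpow_le_rpow hu0.le (by nlinarith) hpos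
        have h2 : u ^ α ≤ (n k * s + u) ^ α :=
          Real.rpow_le_rpow hu0.le (by nlinarith) hpos
        exact mul_nonneg (by linarith) (by linarith)
      · have h1 : (m k * t + u) ^ α ≤ u ^ α :=
          rpow_le_rpow_nonpos' hu0 (by nlinarith) hneg.le
        have h2 : (n k * s + u) ^ α ≤ u ^ α :=
          rpow_le_rpow_nonpos' hu0 (by nlinarith) hneg.le
        nlinarith
    positivity
  have hg : Tendsto (fun k => C * (n k / m k) ^ (κ - H)) atTop (nhds 0) := by
    have h1 : Tendsto (fun k => (m k / n k) ^ (κ - H)) atTop atTop :=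
      (tendsto_rpow_atTop (by linarith)).comp hmn
    have h2 := h1.inv_tendsto_atTop
    have heq : (fun k => C * (n k / m k) ^ (κ - H)) =
        fun k => C * ((m k / n k) ^ (κ - H))⁻¹ := by
      funext k
      rw [← Real.inv_rpow (div_pos (hm k) (hn k)).le, inv_div]
    rw [heq]
    simpa using h2.const_mul C
  exact squeeze_zero' hlb hub hg
end

section
/- For 0 < α < (1+γ)/2, 0 ≤ γ < 1, H = α − γ/2 + 1/2, and 0 < s < t, let φ(u) = u·exp(−(log u^{−1})^r) for some r > 0 and u ∈ (0,1). Then (1/(u^H φ(u)^H)) ∫₀^{φ(u)s} (ut−v)^α (φ(u)s−v)^α v^(−γ) dv ≤ (ts)^H ((s/t)·(φ(u)/u))^{(1−γ)/2} · Beta(α+1, 1−γ), and this tends to 0 as u → 0+. -/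
open MeasureTheory Set Real Filter

lemma aux_integrable (α γ c : ℝ) (hα : 0 < α) (hγ1 : γ < 1) (hc : 0 < c) :
    IntegrableOn (fun v => (c - v) ^ α * v ^ (-γ)) (Ioo 0 c) := by
  have hint : IntegrableOn (fun v : ℝ => c ^ α * v ^ (-γ)) (Ioo 0 c) := by
    have h0 : IntervalIntegrable (fun x : ℝ => x ^ (-γ)) volume 0 c :=
      intervalIntegral.intervalIntegrable_rpow' (by linarith)
    rw [intervalIntegrable_iff_integrableOn_Ioo_of_le hc.le] at h0
    exact h0.const_mul _
  refine hint.mono' ?_ ?_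
  · have : Measurable (fun v : ℝ => (c - v) ^ α * v ^ (-γ)) := by fun_prop
    exact this.aestronglyMeasurable
  · filter_upwards [ae_restrict_mem measurableSet_Ioo] with v hv
    have h1 : 0 ≤ c - v := by linarith [hv.2]
    have h2 : (0:ℝ) < v := hv.1
    rw [Real.norm_eq_abs, abs_of_nonneg (by positivity)]
    have h3 : (c - v) ^ α ≤ c ^ α := Real.rpow_le_rpow h1 (by linarith [hv.1]) hα.le
    have hvr : (0:ℝ) ≤ v ^ (-γ) := Real.rpow_nonneg h2.le _
    nlinarith

lemma aux_compute (α γ c : ℝ) (hc : 0 < c) :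
    ∫ v in Ioo 0 c, (c - v) ^ α * v ^ (-γ)
      = c ^ (α + 1 - γ) * ∫ θ in Ioo (0:ℝ) 1, θ ^ α * (1 - θ) ^ (-γ) := by
  have symm : ∫ θ in Ioo (0:ℝ) 1, (1 - θ) ^ α * θ ^ (-γ)
      = ∫ θ in Ioo (0:ℝ) 1, θ ^ α * (1 - θ) ^ (-γ) := by
    rw [← integral_Ioc_eq_integral_Ioo, ← integral_Ioc_eq_integral_Ioo,
      ← intervalIntegral.integral_of_le zero_le_one, ← intervalIntegral.integral_of_le zero_le_one]
    have := intervalIntegral.integral_comp_sub_left (a := (0:ℝ)) (b := 1)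
      (fun θ : ℝ => θ ^ α * (1 - θ) ^ (-γ)) 1
    simp only [sub_self, sub_zero] at this
    rw [← this]
    congr 1
    ext θ
    ring_nf
  have sub0 : ∫ v in (0:ℝ)..c, (c - v) ^ α * v ^ (-γ)
      = c • ∫ θ in (0:ℝ)..1, (c - θ * c) ^ α * (θ * c) ^ (-γ) := by
    rw [intervalIntegral.integral_comp_mul_right (fun v => (c - v) ^ α * v ^ (-γ)) hc.ne',
      zero_mul, one_mul, smul_smul, mul_inv_cancel₀ hc.ne', one_smul]
  rw [← integral_Ioc_eq_integral_Ioo, ← intervalIntegral.integral_of_le hc.le, sub0,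
    intervalIntegral.integral_of_le zero_le_one, integral_Ioc_eq_integral_Ioo]
  have congr1 : ∫ θ in Ioo (0:ℝ) 1, (c - θ * c) ^ α * (θ * c) ^ (-γ)
      = ∫ θ in Ioo (0:ℝ) 1, (c ^ α * c ^ (-γ)) * ((1 - θ) ^ α * θ ^ (-γ)) := by
    refine setIntegral_congr_fun measurableSet_Ioo (fun θ hθ => ?_)
    have h1 : (0:ℝ) ≤ 1 - θ := by linarith [hθ.2]
    have h2 : (0:ℝ) < θ := hθ.1
    rw [show c - θ * c = (1 - θ) * c by ring, Real.mul_rpow h1 hc.le,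
      Real.mul_rpow h2.le hc.le]
    ring
  have hpow : c ^ (α + 1 - γ) = c * (c ^ α * c ^ (-γ)) := by
    rw [show α + 1 - γ = α + (-γ) + 1 by ring, Real.rpow_add hc, Real.rpow_add hc,
      Real.rpow_one]
    ring
  rw [congr1, MeasureTheory.integral_const_mul, smul_eq_mul, symm, hpow]
  ring

lemma aux_algebra (α γ H s t u f : ℝ) (hH : H = α - γ / 2 + 1 / 2)
    (hs : 0 < s) (ht : 0 < t) (hu : 0 < u) (hf : 0 < f) :
    1 / (u ^ H * f ^ H) * ((u * t) ^ α * (f * s) ^ (α + 1 - γ))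
      = (t * s) ^ H * ((s / t) * (f / u)) ^ ((1 - γ) / 2) := by
  set p : ℝ := (1 - γ) / 2 with hp
  set e : ℝ := α + 1 - γ with he
  have l1 : α = H - p := by rw [hH, hp]; ring
  have l2 : e = H + p := by rw [he, hH, hp]; ring
  calc 1 / (u ^ H * f ^ H) * ((u * t) ^ α * (f * s) ^ e)
      = (u ^ α / u ^ H) * t ^ α * (f ^ e / f ^ H) * s ^ e := by
        rw [Real.mul_rpow hu.le ht.le, Real.mul_rpow hf.le hs.le]; field_simp
    _ = u ^ (α - H) * t ^ α * f ^ (e - H) * s ^ e := by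
        rw [Real.rpow_sub hu α H, Real.rpow_sub hf e H]
    _ = u ^ (-p) * t ^ (H - p) * f ^ p * s ^ (H + p) := by
        rw [show α - H = -p by rw [l1]; ring, show e - H = p by rw [l2]; ring, ← l1, ← l2]
    _ = (t * s) ^ H * ((s / t) * (f / u)) ^ p := by
        rw [Real.mul_rpow ht.le hs.le,
          Real.mul_rpow (div_nonneg hs.le ht.le) (div_nonneg hf.le hu.le),
          Real.div_rpow hs.le ht.le, Real.div_rpow hf.le hu.le,
          Real.rpow_sub ht, Real.rpow_add hs, Real.rpow_neg hu.le]
        field_simp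

theorem gfbm_stmt15 (α γ H s t r : ℝ) (hγ0 : 0 ≤ γ) (hγ1 : γ < 1)
    (hα0 : 0 < α) (hα1 : α < (1 + γ) / 2) (hH : H = α - γ / 2 + 1 / 2)
    (hs : 0 < s) (hst : s < t) (hr : 0 < r)
    (φ : ℝ → ℝ) (hφ : ∀ u : ℝ, φ u = u * Real.exp (-(Real.log u⁻¹) ^ r)) :
    (∀ u ∈ Set.Ioo (0 : ℝ) 1,
      (1 / (u ^ H * (φ u) ^ H)) *
          (∫ v in Set.Ioo 0 (φ u * s), (u * t - v) ^ α * (φ u * s - v) ^ α * v ^ (-γ))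
        ≤ (t * s) ^ H * ((s / t) * (φ u / u)) ^ ((1 - γ) / 2) *
            ∫ θ in Set.Ioo (0 : ℝ) 1, θ ^ α * (1 - θ) ^ (-γ))
    ∧ Tendsto
        (fun u : ℝ => (t * s) ^ H * ((s / t) * (φ u / u)) ^ ((1 - γ) / 2) *
          ∫ θ in Set.Ioo (0 : ℝ) 1, θ ^ α * (1 - θ) ^ (-γ))
        (nhdsWithin 0 (Set.Ioi 0)) (nhds 0) := by
  have ht : 0 < t := hs.trans hst
  constructor
  · intro u hu
    obtain ⟨hu0, hu1⟩ := hu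
    have hφu : 0 < φ u := by rw [hφ u]; positivity
    have hφlt : φ u < u := by
      rw [hφ u]
      have h1 : 0 < Real.log u⁻¹ := Real.log_pos (by rw [lt_inv_comm₀] <;> simpa)
      nlinarith [Real.exp_lt_one_iff.2 (neg_lt_zero.2 (Real.rpow_pos_of_pos h1 r)),
        Real.exp_pos (-(Real.log u⁻¹) ^ r)]
    set c : ℝ := φ u * s with hc
    have hc0 : 0 < c := by positivity
    have hcut : c < u * t := by
      calc c < u * s := by rw [hc]; exact mul_lt_mul_of_pos_right hφlt hs
      _ < u * t := by exact mul_lt_mul_of_pos_left hst hu0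
    -- integrability of the dominating function
    have hg : IntegrableOn (fun v : ℝ => (u * t) ^ α * ((c - v) ^ α * v ^ (-γ))) (Ioo 0 c) :=
      (aux_integrable α γ c hα0 hγ1 hc0).const_mul _
    have hpt : ∀ v ∈ Ioo (0:ℝ) c,
        (u * t - v) ^ α * (c - v) ^ α * v ^ (-γ)
          ≤ (u * t) ^ α * ((c - v) ^ α * v ^ (-γ)) := by
      intro v hv
      have h1 : 0 ≤ u * t - v := by linarith [hv.2]
      have h2 : (u * t - v) ^ α ≤ (u * t) ^ α :=
        Real.rpow_le_rpow h1 (by linarith [hv.1]) hα0.le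
      have h3 : (0:ℝ) ≤ (c - v) ^ α := Real.rpow_nonneg (by linarith [hv.2]) _
      have h4 : (0:ℝ) ≤ v ^ (-γ) := Real.rpow_nonneg hv.1.le _
      rw [mul_assoc]
      exact mul_le_mul_of_nonneg_right h2 (mul_nonneg h3 h4)
    have hf : IntegrableOn (fun v : ℝ => (u * t - v) ^ α * (c - v) ^ α * v ^ (-γ)) (Ioo 0 c) := by
      refine hg.mono' ?_ ?_
      · have : Measurable (fun v : ℝ => (u * t - v) ^ α * (c - v) ^ α * v ^ (-γ)) := by fun_prop
        exact this.aestronglyMeasurable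
      · filter_upwards [ae_restrict_mem measurableSet_Ioo] with v hv
        have h1 : 0 ≤ u * t - v := by linarith [hv.2]
        rw [Real.norm_eq_abs, abs_of_nonneg]
        · exact hpt v hv
        · have h3 : (0:ℝ) ≤ (c - v) ^ α := Real.rpow_nonneg (by linarith [hv.2]) _
          have h4 : (0:ℝ) ≤ v ^ (-γ) := Real.rpow_nonneg hv.1.le _
          positivity
    have step1 : (∫ v in Ioo 0 c, (u * t - v) ^ α * (c - v) ^ α * v ^ (-γ))
        ≤ ∫ v in Ioo 0 c, (u * t) ^ α * ((c - v) ^ α * v ^ (-γ)) :=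
      setIntegral_mono_on hf hg measurableSet_Ioo hpt
    have step2 : (∫ v in Ioo 0 c, (u * t) ^ α * ((c - v) ^ α * v ^ (-γ)))
        = (u * t) ^ α * (c ^ (α + 1 - γ) * ∫ θ in Ioo (0:ℝ) 1, θ ^ α * (1 - θ) ^ (-γ)) := by
      rw [MeasureTheory.integral_const_mul, aux_compute α γ c hc0]
    have hpos : (0:ℝ) ≤ 1 / (u ^ H * (φ u) ^ H) := by positivity
    calc (1 / (u ^ H * (φ u) ^ H)) *
          (∫ v in Ioo 0 c, (u * t - v) ^ α * (c - v) ^ α * v ^ (-γ))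
        ≤ (1 / (u ^ H * (φ u) ^ H)) *
          ((u * t) ^ α * (c ^ (α + 1 - γ) * ∫ θ in Ioo (0:ℝ) 1, θ ^ α * (1 - θ) ^ (-γ))) := by
          rw [← step2]; exact mul_le_mul_of_nonneg_left step1 hpos
      _ = (t * s) ^ H * ((s / t) * (φ u / u)) ^ ((1 - γ) / 2) *
            ∫ θ in Ioo (0:ℝ) 1, θ ^ α * (1 - θ) ^ (-γ) := by
          rw [← mul_assoc, ← mul_assoc, hc]
          rw [show 1 / (u ^ H * φ u ^ H) * (u * t) ^ α * (φ u * s) ^ (α + 1 - γ)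
              = 1 / (u ^ H * φ u ^ H) * ((u * t) ^ α * (φ u * s) ^ (α + 1 - γ)) by ring,
            aux_algebra α γ H s t u (φ u) hH hs ht hu0 hφu]
  · have hp : (0:ℝ) < (1 - γ) / 2 := by linarith
    have inner : Tendsto (fun u : ℝ => ((s / t) * (φ u / u)) ^ ((1 - γ) / 2))
        (nhdsWithin 0 (Ioi 0)) (nhds 0) := by
      have l1 : Tendsto (fun u : ℝ => Real.log u⁻¹) (nhdsWithin 0 (Ioi 0)) atTop := by
        have := Real.tendsto_log_nhdsGT_zero
        have := tendsto_neg_atBot_atTop.comp this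
        refine this.congr fun u => ?_
        simp [Real.log_inv]
      have l2 : Tendsto (fun u : ℝ => (Real.log u⁻¹) ^ r) (nhdsWithin 0 (Ioi 0)) atTop :=
        (tendsto_rpow_atTop hr).comp l1
      have l3 : Tendsto (fun u : ℝ => Real.exp (-(Real.log u⁻¹) ^ r))
          (nhdsWithin 0 (Ioi 0)) (nhds 0) :=
        Real.tendsto_exp_atBot.comp (tendsto_neg_atTop_atBot.comp l2)
      have l4 : Tendsto (fun u : ℝ => (s / t) * (φ u / u)) (nhdsWithin 0 (Ioi 0)) (nhds 0) := by
        have l4' : Tendsto (fun u : ℝ => (s / t) * Real.exp (-(Real.log u⁻¹) ^ r))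
            (nhdsWithin 0 (Ioi 0)) (nhds 0) := by
          simpa using l3.const_mul (s / t)
        refine l4'.congr' ?_
        filter_upwards [self_mem_nhdsWithin] with u hu
        have : φ u / u = Real.exp (-(Real.log u⁻¹) ^ r) := by
          rw [hφ u, mul_comm, mul_div_assoc, div_self (ne_of_gt hu), mul_one]
        rw [this]
      have cont : ContinuousAt (fun x : ℝ => x ^ ((1 - γ) / 2)) 0 :=
        Real.continuousAt_rpow_const 0 _ (Or.inr hp.le)
      have := cont.tendsto.comp l4
      simpa [Real.zero_rpow hp.ne', Function.comp_def] using this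
    have := (inner.const_mul ((t * s) ^ H)).mul_const
      (∫ θ in Ioo (0:ℝ) 1, θ ^ α * (1 - θ) ^ (-γ))
    simpa using this
end
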